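/- arXiv:2605.12692 — 11 statements merged into one kernel-verified Lean document; each statement's English description precedes it below -/
import Mathlib

section
/- Let Q be a quandle, V a finite-dimensional complex inner product space, and ρ : Q → GL(V) a quandle representation such that every ρ(x), x ∈ Q, is a linear isometry of V. Then ρ is completely reducible: V is the internal direct sum of a finite family of subrepresentations each of which is irreducible. -/
open Quandles

/-- `ρ` is a quandle representation: `ρ(x ◃ y) = ρ(x) ρ(y) ρ(x)⁻¹`. -/
def IsQuandleRep {Q : Type} [Quandle Q] {V : Type} [AddCommGroup V] [Module ℂ V]
    (ρ : Q → V ≃ₗ[ℂ] V) : Prop :=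
  ∀ x y : Q, ρ (x ◃ y) = ρ x * ρ y * (ρ x)⁻¹

/-- `W` is a subrepresentation: it is stable under every `ρ(x)`. -/
def IsSubrep {Q : Type} [Quandle Q] {V : Type} [AddCommGroup V] [Module ℂ V]
    (ρ : Q → V ≃ₗ[ℂ] V) (W : Submodule ℂ V) : Prop :=
  ∀ x : Q, ∀ v ∈ W, ρ x v ∈ W

/-- The subrepresentation `W` is irreducible: the only subrepresentations contained in
`W` are `0` and `W`. -/
def IsIrreducibleSubrep {Q : Type} [Quandle Q] {V : Type} [AddCommGroup V] [Module ℂ V]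
    (ρ : Q → V ≃ₗ[ℂ] V) (W : Submodule ℂ V) : Prop :=
  IsSubrep ρ W ∧ ∀ U : Submodule ℂ V, U ≤ W → IsSubrep ρ U → U = ⊥ ∨ U = W

/-- Extending an independent family by one element disjoint from its sup. -/
lemma optionIndep {α : Type*} [CompleteLattice α] [IsModularLattice α] {ι : Type*}
    {g : ι → α} {a : α} (hg : iSupIndep g) (ha : Disjoint a (⨆ i, g i)) :
    iSupIndep (fun o : Option ι => o.elim a g) := by
  intro o
  cases o with
  | none =>
    refine ha.mono_right ?_
    refine iSup₂_le fun j hj => ?_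
    cases j with
    | none => simp at hj
    | some m => exact le_iSup g m
  | some k =>
    have hX : Disjoint (g k) (⨆ (j) (_ : j ≠ k), g j) := hg k
    have h2 : Disjoint (g k ⊔ ⨆ (j) (_ : j ≠ k), g j) a := by
      refine (ha.mono_right ?_).symm
      exact sup_le (le_iSup g k) (iSup₂_le fun j _ => le_iSup g j)
    have h3 := hX.disjoint_sup_right_of_disjoint_sup_left h2
    refine h3.mono_right ?_
    refine iSup₂_le fun j hj => ?_
    cases j with
    | none => exact le_sup_right
    | some m =>
      have hm : m ≠ k := by simpa using hj
      exact le_trans (le_iSup₂ (f := fun j _ => g j) m hm) le_sup_left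

/-- The orthogonal complement of a stable subspace is stable (for unitary operators). -/
lemma orth_subrep {Q : Type} [Quandle Q] {V : Type} [NormedAddCommGroup V]
    [InnerProductSpace ℂ V] [FiniteDimensional ℂ V] (ρ : Q → V ≃ₗ[ℂ] V)
    (hunitary : ∀ (x : Q) (v w : V), (inner ℂ (ρ x v) (ρ x w) : ℂ) = inner ℂ v w)
    (U : Submodule ℂ V) (hU : IsSubrep ρ U) : IsSubrep ρ Uᗮ := by
  intro x v hv
  rw [Submodule.mem_orthogonal]
  intro u hu
  have hmap : U.map ((ρ x : V ≃ₗ[ℂ] V) : V →ₗ[ℂ] V) = U := by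
    refine Submodule.eq_of_le_of_finrank_le ?_ ?_
    · rintro _ ⟨w, hw, rfl⟩
      exact hU x w hw
    · rw [LinearEquiv.finrank_map_eq]
  rw [← hmap] at hu
  obtain ⟨u', hu', rfl⟩ := hu
  calc (inner ℂ (ρ x u') (ρ x v) : ℂ) = inner ℂ u' v := hunitary x u' v
    _ = 0 := hv u' hu'

lemma exists_decomp {Q : Type} [Quandle Q] {V : Type} [NormedAddCommGroup V]
    [InnerProductSpace ℂ V] [FiniteDimensional ℂ V] (ρ : Q → V ≃ₗ[ℂ] V)
    (hunitary : ∀ (x : Q) (v w : V), (inner ℂ (ρ x v) (ρ x w) : ℂ) = inner ℂ v w) :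
    ∀ (n : ℕ) (W : Submodule ℂ V), Module.finrank ℂ W ≤ n → IsSubrep ρ W →
      ∃ (ι : Type) (_ : Finite ι) (f : ι → Submodule ℂ V),
        iSupIndep f ∧ iSup f = W ∧ ∀ i, IsIrreducibleSubrep ρ (f i) := by
  intro n
  induction n with
  | zero =>
    intro W hW _
    have hbot : W = ⊥ := by
      rw [← Submodule.finrank_eq_zero (R := ℂ)]
      omega
    exact ⟨Empty, inferInstance, fun i => i.elim, iSupIndep_subsingleton _,
      by simp [hbot], fun i => i.elim⟩
  | succ n ih =>
    intro W hW hsub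
    by_cases hbot : W = ⊥
    · exact ⟨Empty, inferInstance, fun i => i.elim, iSupIndep_subsingleton _,
        by simp [hbot], fun i => i.elim⟩
    -- pick a stable subspace of minimal positive dimension inside W
    set S : Set (Submodule ℂ V) := {U | U ≠ ⊥ ∧ U ≤ W ∧ IsSubrep ρ U} with hS
    have hWS : W ∈ S := ⟨hbot, le_rfl, hsub⟩
    obtain ⟨m, ⟨U, hUS, rfl⟩, hmin⟩ := (wellFounded_lt (α := ℕ)).has_min
      ((fun U : Submodule ℂ V => Module.finrank ℂ U) '' S) ⟨_, ⟨W, hWS, rfl⟩⟩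
    have hUmin : ∀ U' ∈ S, Module.finrank ℂ U ≤ Module.finrank ℂ U' :=
      fun U' h' => not_lt.1 (hmin _ ⟨U', h', rfl⟩)
    obtain ⟨hUne, hUle, hUsub⟩ := hUS
    have hUirr : IsIrreducibleSubrep ρ U := by
      refine ⟨hUsub, fun U' hle hsub' => ?_⟩
      by_cases h' : U' = ⊥
      · exact Or.inl h'
      · refine Or.inr (Submodule.eq_of_le_of_finrank_le hle ?_)
        exact hUmin U' ⟨h', le_trans hle hUle, hsub'⟩
    -- the complement
    set X : Submodule ℂ V := W ⊓ Uᗮ with hX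
    have hXsub : IsSubrep ρ X := fun x v hv =>
      ⟨hsub x v hv.1, orth_subrep ρ hunitary U hUsub x v hv.2⟩
    have hdisj : Disjoint U X := (Submodule.orthogonal_disjoint U).mono_right inf_le_right
    have hsupUX : U ⊔ X = W := by
      refine le_antisymm (sup_le hUle inf_le_left) ?_
      intro w hw
      have hu : ((U.orthogonalProjectionOnto w : U) : V) ∈ U := (U.orthogonalProjectionOnto w).2
      have hw2 : w - (U.orthogonalProjectionOnto w : V) ∈ X :=
        ⟨Submodule.sub_mem _ hw (hUle hu), Submodule.sub_starProjection_mem_orthogonal (K := U) w⟩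
      have : ((U.orthogonalProjectionOnto w : V)) + (w - (U.orthogonalProjectionOnto w : V)) ∈ U ⊔ X :=
        Submodule.add_mem_sup hu hw2
      simpa using this
    have hrank : Module.finrank ℂ U + Module.finrank ℂ X = Module.finrank ℂ W := by
      have := Submodule.finrank_sup_add_finrank_inf_eq U X
      rw [hsupUX, hdisj.eq_bot] at this
      simpa using this.symm
    have hUpos : Module.finrank ℂ U ≠ 0 := by
      rw [Ne, Submodule.finrank_eq_zero (R := ℂ)]
      exact hUne
    have hXle : Module.finrank ℂ X ≤ n := by omega
    obtain ⟨ι, hfin, f, hind, hsupf, hirr⟩ := ih X hXle hXsub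
    haveI : Finite ι := hfin
    haveI := Fintype.ofFinite ι
    refine ⟨Option ι, inferInstance, fun o => o.elim U f, ?_, ?_, ?_⟩
    · exact optionIndep hind (by rw [hsupf]; exact hdisj)
    · rw [iSup_option (fun o : Option ι => o.elim U f)]
      simpa [hsupf] using hsupUX
    · intro o
      cases o with
      | none => exact hUirr
      | some k => exact hirr k

/-- A finite-dimensional unitary quandle representation is completely reducible:
`V` is the internal direct sum of a finite family of irreducible subrepresentations. -/
theorem unitary_quandle_rep_completely_reducible
    {Q : Type} [Quandle Q] {V : Type} [NormedAddCommGroup V] [InnerProductSpace ℂ V]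
    [FiniteDimensional ℂ V] (ρ : Q → V ≃ₗ[ℂ] V) (hrep : IsQuandleRep ρ)
    (hunitary : ∀ (x : Q) (v w : V), (inner ℂ (ρ x v) (ρ x w) : ℂ) = inner ℂ v w) :
    ∃ (ι : Type) (_ : Finite ι) (W : ι → Submodule ℂ V),
      iSupIndep W ∧ iSup W = ⊤ ∧ ∀ i : ι, IsIrreducibleSubrep ρ (W i) := by
  exact exists_decomp ρ hunitary (Module.finrank ℂ V) ⊤
    (by simp [Submodule.finrank_eq_rank])
    (fun x v _ => trivial)
end

section
/- Let Q be a finite quandle and let Q/Inn(Q) denote the set of orbits of the action of Inn(Q) on Q. Then the abelianization of the enveloping group G(Q) is isomorphic to the free abelian group on the set Q/Inn(Q), via an isomorphism under which, for every x ∈ Q, the image of the generator φ_Q(x) in the abelianization corresponds to the basis element given by the orbit of x. -/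
open Quandles

/-- The inner automorphism group of a quandle `Q`: the subgroup of the permutation
group of `Q` generated by the left translations `L_x : y ↦ x ◃ y`. -/
def innQ (Q : Type) [Quandle Q] : Subgroup (Equiv.Perm Q) :=
  Subgroup.closure (Set.range (Rack.act' : Q → Q ≃ Q))

section Aux

variable (Q : Type) [Quandle Q]

/-- The set of orbits. -/
abbrev orbQ := MulAction.orbitRel.Quotient (innQ Q) Q

variable {Q}

lemma orbQ_act (x y : Q) :
    (Quotient.mk (MulAction.orbitRel (innQ Q) Q) (x ◃ y)) =
      Quotient.mk (MulAction.orbitRel (innQ Q) Q) y :=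
  Quotient.sound ⟨⟨Rack.act' x, Subgroup.subset_closure ⟨x, rfl⟩⟩, rfl⟩

/-- The quandle hom from `Q` to the free abelian group on orbits (as conj quandle). -/
def fQ : Q →◃ Quandle.Conj (Multiplicative (FreeAbelianGroup (orbQ Q))) where
  toFun x := Multiplicative.ofAdd (FreeAbelianGroup.of
    (Quotient.mk (MulAction.orbitRel (innQ Q) Q) x))
  map_act' := by
    intro x y
    rw [Quandle.conj_act_eq_conj, mul_comm, inv_mul_cancel_left]
    exact congrArg (fun o => Multiplicative.ofAdd (FreeAbelianGroup.of o)) (orbQ_act x y)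

/-- `x ↦ of (φ x)` in the abelianization. -/
def f0 (x : Q) : Abelianization (Rack.EnvelGroup Q) :=
  Abelianization.of (Rack.toEnvelGroup Q x)

lemma f0_act (x y : Q) : f0 (x ◃ y) = f0 y := by
  have h : Rack.toEnvelGroup Q (x ◃ y) =
      Rack.toEnvelGroup Q x * Rack.toEnvelGroup Q y * (Rack.toEnvelGroup Q x)⁻¹ :=
    (Rack.toEnvelGroup Q).map_act'
  simp only [f0, h, map_mul, map_inv]
  rw [mul_comm, inv_mul_cancel_left]

lemma f0_smul (σ : Equiv.Perm Q) (hσ : σ ∈ innQ Q) (y : Q) : f0 (σ y) = f0 y := by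
  induction hσ using Subgroup.closure_induction generalizing y with
  | mem σ hσ =>
    obtain ⟨x, rfl⟩ := hσ
    rw [Rack.act'_apply, f0_act]
  | one => rfl
  | mul σ τ _ _ ihσ ihτ =>
    rw [Equiv.Perm.mul_apply, ihσ, ihτ]
  | inv σ hσ ihσ =>
    have := ihσ (σ⁻¹ y)
    rw [show σ (σ⁻¹ y) = y from σ.apply_symm_apply y] at this
    exact this.symm

/-- The map on orbits. -/
def g0 : orbQ Q → Abelianization (Rack.EnvelGroup Q) :=
  Quotient.lift f0 (by
    rintro a b ⟨⟨σ, hσ⟩, rfl⟩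
    exact f0_smul σ hσ b)

end Aux

/-- For a finite quandle `Q`, the abelianization of the enveloping group `G(Q)` is
isomorphic to the free abelian group on the set of orbits `Q/Inn(Q)`, via an isomorphism
sending the class of the generator `φ_Q(x)` to the basis element given by the orbit of `x`. -/
theorem abelianization_envelGroup_iso_freeAbelianGroup_orbits
    (Q : Type) [Quandle Q] [Finite Q] :
    ∃ e : Abelianization (Rack.EnvelGroup Q) ≃*
        Multiplicative (FreeAbelianGroup (MulAction.orbitRel.Quotient (innQ Q) Q)),
      ∀ x : Q,
        e (Abelianization.of (Rack.toEnvelGroup Q x)) =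
          Multiplicative.ofAdd (FreeAbelianGroup.of
            (Quotient.mk (MulAction.orbitRel (innQ Q) Q) x)) := by
  -- forward map
  let F : Abelianization (Rack.EnvelGroup Q) →* Multiplicative (FreeAbelianGroup (orbQ Q)) :=
    Abelianization.lift (Rack.toEnvelGroup.map fQ)
  -- backward map
  let Glift : FreeAbelianGroup (orbQ Q) →+
      Additive (Abelianization (Rack.EnvelGroup Q)) :=
    FreeAbelianGroup.lift fun o => Additive.ofMul (g0 o)
  let G : Multiplicative (FreeAbelianGroup (orbQ Q)) →* Abelianization (Rack.EnvelGroup Q) :=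
    { toFun := fun a => Additive.toMul (Glift (Multiplicative.toAdd a))
      map_one' := by
        show Additive.toMul (Glift 0) = 1
        rw [map_zero]; rfl
      map_mul' := by
        intro a b
        show Additive.toMul (Glift (Multiplicative.toAdd a + Multiplicative.toAdd b)) = _
        rw [map_add]; rfl }
  have hF : ∀ x : Q, F (Abelianization.of (Rack.toEnvelGroup Q x)) =
      Multiplicative.ofAdd (FreeAbelianGroup.of
        (Quotient.mk (MulAction.orbitRel (innQ Q) Q) x)) := fun x => rfl
  have hG : ∀ x : Q,
      G (Multiplicative.ofAdd (FreeAbelianGroup.of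
        (Quotient.mk (MulAction.orbitRel (innQ Q) Q) x))) =
        Abelianization.of (Rack.toEnvelGroup Q x) := by
    intro x
    show Additive.toMul (Glift (FreeAbelianGroup.of
        (Quotient.mk (MulAction.orbitRel (innQ Q) Q) x))) = _
    rw [FreeAbelianGroup.lift_apply_of]
    rfl
  have hGF : G.comp F = MonoidHom.id _ := by
    apply Abelianization.hom_ext
    apply Rack.toEnvelGroup.map.symm.injective
    apply ShelfHom.ext
    funext x
    show G (F (Abelianization.of (Rack.toEnvelGroup Q x))) =
      Abelianization.of (Rack.toEnvelGroup Q x)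
    rw [hF, hG]
  have key : ∀ b : FreeAbelianGroup (orbQ Q), F (G (Multiplicative.ofAdd b)) =
      Multiplicative.ofAdd b := by
    intro b
    induction b using FreeAbelianGroup.induction_on with
    | zero =>
      rw [ofAdd_zero, map_one, map_one]
    | of o =>
      obtain ⟨x, rfl⟩ := Quotient.exists_rep o
      rw [hG, hF]
    | neg o ih =>
      rw [ofAdd_neg, map_inv, map_inv, ih]
    | add a b iha ihb =>
      rw [ofAdd_add, map_mul, map_mul, iha, ihb]
  have hFG : F.comp G = MonoidHom.id _ := by
    apply MonoidHom.ext
    intro a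
    exact key (Multiplicative.toAdd a)
  exact ⟨MonoidHom.toMulEquiv F G hGF hFG, fun x => hF x⟩
end

section
/- For a finite quandle Q, the commutator (derived) subgroup of the enveloping group G(Q) is a finite group. -/
open Quandles
open scoped commutatorElement

namespace QuandleCommutatorAux

open Rack Subgroup

variable {Q : Type} [Quandle Q]

/-- The quotient map to the enveloping group, with the correct type ascription. -/
def emk (a : Rack.PreEnvelGroup Q) : Rack.EnvelGroup Q := ⟦a⟧

lemma emk_mul (a b : Rack.PreEnvelGroup Q) : emk (a.mul b) = emk a * emk b := rfl

lemma emk_inv (a : Rack.PreEnvelGroup Q) : emk a.inv = (emk a)⁻¹ := rfl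

lemma emk_unit : (emk (Q := Q) .unit) = 1 := rfl

lemma emk_incl (x : Q) : emk (.incl x) = Rack.toEnvelGroup Q x := rfl

lemma conj_incl_aux (a : Rack.PreEnvelGroup Q) (x : Q) :
    emk a * (Rack.toEnvelGroup Q x : Rack.EnvelGroup Q) * (emk a)⁻¹ =
      Rack.toEnvelGroup Q (Rack.envelAction (emk a) x) := by
  induction a generalizing x with
  | unit => rw [emk_unit]; simp
  | incl y =>
      rw [emk_incl]
      have h2 : Rack.envelAction ((Rack.toEnvelGroup Q y : Rack.EnvelGroup Q)) x = y ◃ x :=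
        Rack.envelAction_prop y x
      rw [h2]
      exact ((Rack.toEnvelGroup Q).map_act (x := y) (y := x)).symm
  | mul a b iha ihb =>
      rw [emk_mul]
      have hact : Rack.envelAction (emk a * emk b) x =
          Rack.envelAction (emk a) (Rack.envelAction (emk b) x) := by
        rw [map_mul]; rfl
      rw [hact, ← iha, ← ihb]
      group
  | inv a iha =>
      rw [emk_inv]
      have key := iha (Rack.envelAction ((emk a)⁻¹) x)
      have hx : Rack.envelAction (emk a) (Rack.envelAction ((emk a)⁻¹) x) = x := by
        have : Rack.envelAction (emk a * (emk a)⁻¹) x = x := by simp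
        rw [map_mul] at this
        exact this
      rw [hx] at key
      calc (emk a)⁻¹ * (Rack.toEnvelGroup Q x : Rack.EnvelGroup Q) * ((emk a)⁻¹)⁻¹
          = (emk a)⁻¹ *
            (emk a * (Rack.toEnvelGroup Q (Rack.envelAction ((emk a)⁻¹) x) : Rack.EnvelGroup Q) *
              (emk a)⁻¹) * ((emk a)⁻¹)⁻¹ := by rw [key]
        _ = _ := by group

lemma conj_incl (g : Rack.EnvelGroup Q) (x : Q) :
    g * (Rack.toEnvelGroup Q x : Rack.EnvelGroup Q) * g⁻¹ =
      Rack.toEnvelGroup Q (Rack.envelAction g x) :=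
  Quotient.inductionOn g fun a => conj_incl_aux a x

lemma closure_range_toEnvelGroup :
    Subgroup.closure (Set.range fun x : Q => (Rack.toEnvelGroup Q x : Rack.EnvelGroup Q)) = ⊤ := by
  rw [eq_top_iff]
  rintro g -
  refine Quotient.inductionOn g fun a => ?_
  show emk a ∈ _
  induction a with
  | unit => rw [emk_unit]; exact one_mem _
  | incl y => rw [emk_incl]; exact Subgroup.subset_closure ⟨y, rfl⟩
  | mul a b iha ihb => rw [emk_mul]; exact mul_mem iha ihb
  | inv a iha => rw [emk_inv]; exact inv_mem iha

lemma ker_le_center :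
    (Rack.envelAction (R := Q)).ker ≤ Subgroup.center (Rack.EnvelGroup Q) := by
  intro g hg
  rw [Subgroup.mem_center_iff]
  intro h
  have hmem : h ∈ Subgroup.closure
      (Set.range fun x : Q => (Rack.toEnvelGroup Q x : Rack.EnvelGroup Q)) := by
    rw [closure_range_toEnvelGroup]; trivial
  induction hmem using Subgroup.closure_induction with
  | mem y hy =>
      obtain ⟨x, rfl⟩ := hy
      have := conj_incl g x
      rw [MonoidHom.mem_ker.mp hg] at this
      simp only [Equiv.Perm.coe_one, id_eq] at this
      calc (Rack.toEnvelGroup Q x : Rack.EnvelGroup Q) * g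
          = (g * (Rack.toEnvelGroup Q x : Rack.EnvelGroup Q) * g⁻¹) * g := by rw [this]
        _ = g * (Rack.toEnvelGroup Q x : Rack.EnvelGroup Q) := by group
  | one => simp
  | mul a b _ _ iha ihb =>
      calc a * b * g = a * (b * g) := by group
        _ = a * (g * b) := by rw [ihb]
        _ = (a * g) * b := by group
        _ = g * (a * b) := by rw [iha]; group
  | inv a _ iha =>
      have h2 : g * a = a * g := iha.symm
      calc a⁻¹ * g = a⁻¹ * (g * a) * a⁻¹ := by group
        _ = a⁻¹ * (a * g) * a⁻¹ := by rw [h2]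
        _ = g * a⁻¹ := by group

lemma commutator_coset {G : Type*} [Group G] {a b z w : G}
    (hz : z ∈ Subgroup.center G) (hw : w ∈ Subgroup.center G) :
    ⁅a * z, b * w⁆ = ⁅a, b⁆ := by
  have hz' : ∀ g : G, z * g = g * z := fun g => (Subgroup.mem_center_iff.mp hz g).symm
  have hw' : ∀ g : G, w * g = g * w := fun g => (Subgroup.mem_center_iff.mp hw g).symm
  simp only [commutatorElement_def, mul_inv_rev]
  calc a * z * (b * w) * (z⁻¹ * a⁻¹) * (w⁻¹ * b⁻¹)
      = a * (z * (b * w) * z⁻¹) * a⁻¹ * (w⁻¹ * b⁻¹) := by group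
    _ = a * (b * w) * a⁻¹ * (w⁻¹ * b⁻¹) := by rw [hz' (b * w)]; group
    _ = a * b * (w * a⁻¹ * w⁻¹) * b⁻¹ := by group
    _ = a * b * a⁻¹ * b⁻¹ := by rw [hw' a⁻¹]; group

end QuandleCommutatorAux

/-- For a finite quandle `Q`, the commutator (derived) subgroup of the enveloping
group `G(Q)` is finite. -/
theorem commutator_envelGroup_finite (Q : Type) [Quandle Q] [Finite Q] :
    Finite (commutator (Rack.EnvelGroup Q)) := by
  set G := Rack.EnvelGroup Q with hG
  -- the kernel of the action has finite index
  have hker : (Rack.envelAction (R := Q)).ker.FiniteIndex := by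
    have : Finite (G ⧸ (Rack.envelAction (R := Q)).ker) :=
      Finite.of_equiv (Rack.envelAction (R := Q)).range
        (QuotientGroup.quotientKerEquivRange (Rack.envelAction (R := Q))).symm.toEquiv
    exact Subgroup.finiteIndex_of_finite_quotient (H := _)
  have hcen : (Subgroup.center G).FiniteIndex :=
    Subgroup.finiteIndex_of_le QuandleCommutatorAux.ker_le_center
  -- the commutator set is finite
  have hfin : Finite (commutatorSet G) := by
    have hquot : Finite (G ⧸ Subgroup.center G) := Subgroup.finite_quotient_of_finiteIndex (H := _)
    set Z := Subgroup.center G with hZ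
    let f : (G ⧸ Z) × (G ⧸ Z) → G := fun p =>
      Quotient.liftOn₂ p.1 p.2 (fun g h => ⁅g, h⁆) (by
        intro a b a' b' ha hb
        have ha' : a⁻¹ * a' ∈ Z := QuotientGroup.leftRel_apply.mp ha
        have hb' : b⁻¹ * b' ∈ Z := QuotientGroup.leftRel_apply.mp hb
        have h3 : ⁅a * (a⁻¹ * a'), b * (b⁻¹ * b')⁆ = ⁅a, b⁆ :=
          QuandleCommutatorAux.commutator_coset ha' hb'
        simpa using h3.symm)
    have hsub : commutatorSet G ⊆ Set.range f := by
      rintro - ⟨g, h, rfl⟩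
      exact ⟨(QuotientGroup.mk g, QuotientGroup.mk h), rfl⟩
    exact (Set.finite_range f).subset hsub
  infer_instance
end

section
/- Let Q be a finite quandle, let n = |Inn(Q)|, and let Z₀ be the subgroup of the enveloping group G(Q) generated by the elements φ_Q(x)^n for x ∈ Q. Then Z₀ is contained in the centre of G(Q), and Z₀ has finite index in G(Q). -/
open Quandles

section Dietzmann

variable {G : Type*} [Group G] [DecidableEq G]

private theorem dietz_pull (S : Set G)
    (hconj : ∀ s ∈ S, ∀ t ∈ S, s⁻¹ * t * s ∈ S) (s : G) (hs : s ∈ S) :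
    ∀ l : List G, (∀ x ∈ l, x ∈ S) → s ∈ l →
      ∃ l' : List G, (∀ x ∈ l', x ∈ S) ∧ l'.length + 1 = l.length ∧
        l.prod = s * l'.prod ∧ l'.count s + 1 = l.count s := by
  intro l
  induction l with
  | nil => simp
  | cons t r ih =>
    intro hmem hsin
    by_cases hts : t = s
    · subst hts
      exact ⟨r, fun x hx => hmem x (List.mem_cons_of_mem _ hx), rfl, rfl, by simp⟩
    · have hsr : s ∈ r := by
        rcases List.mem_cons.1 hsin with h | h
        · exact absurd h.symm hts
        · exact h
      obtain ⟨r', h1, h2, h3, h4⟩ := ih (fun x hx => hmem x (List.mem_cons_of_mem _ hx)) hsr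
      have htS : t ∈ S := hmem t List.mem_cons_self
      refine ⟨(s⁻¹ * t * s) :: r', ?_, ?_, ?_, ?_⟩
      · intro x hx
        rcases List.mem_cons.1 hx with h | h
        · exact h ▸ hconj s hs t htS
        · exact h1 x h
      · simp [h2]
      · rw [List.prod_cons, List.prod_cons, h3]
        group
      · have hne : s⁻¹ * t * s ≠ s := by
          intro h
          apply hts
          have := congrArg (fun z => s * z * s⁻¹) h
          simpa [mul_assoc] using this
        rw [List.count_cons_of_ne (by simpa using (Ne.symm hne)), h4,
          List.count_cons_of_ne (by simpa using hts)]

private theorem dietz_pull_pow (S : Set G)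
    (hconj : ∀ s ∈ S, ∀ t ∈ S, s⁻¹ * t * s ∈ S) (s : G) (hs : s ∈ S) :
    ∀ (m : ℕ) (l : List G), (∀ x ∈ l, x ∈ S) → m ≤ l.count s →
      ∃ l' : List G, (∀ x ∈ l', x ∈ S) ∧ l'.length + m = l.length ∧
        l.prod = s ^ m * l'.prod := by
  intro m
  induction m with
  | zero => intro l h _; exact ⟨l, h, rfl, by simp⟩
  | succ m ih =>
    intro l hmem hcount
    have hsl : s ∈ l := by
      have : 0 < l.count s := lt_of_lt_of_le (Nat.succ_pos m) hcount
      exact List.count_pos_iff.1 this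
    obtain ⟨l', h1, h2, h3, h4⟩ := dietz_pull S hconj s hs l hmem hsl
    obtain ⟨l'', g1, g2, g3⟩ := ih l' h1 (by omega)
    refine ⟨l'', g1, by omega, ?_⟩
    rw [h3, g3, ← mul_assoc, ← pow_succ']

private theorem dietz_reduce (S : Set G) (hfin : S.Finite)
    (hconj : ∀ s ∈ S, ∀ t ∈ S, s⁻¹ * t * s ∈ S) (n : ℕ) (hn : 0 < n)
    (hpow : ∀ s ∈ S, s ^ n = 1) :
    ∀ l : List G, (∀ x ∈ l, x ∈ S) →
      ∃ l' : List G, (∀ x ∈ l', x ∈ S) ∧ l'.length ≤ hfin.toFinset.card * (n - 1) ∧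
        l'.prod = l.prod := by
  suffices h : ∀ (k : ℕ) (l : List G), l.length = k → (∀ x ∈ l, x ∈ S) →
      ∃ l' : List G, (∀ x ∈ l', x ∈ S) ∧ l'.length ≤ hfin.toFinset.card * (n - 1) ∧
        l'.prod = l.prod by
    intro l; exact h l.length l rfl
  intro k
  induction k using Nat.strong_induction_on with
  | _ k ih =>
  intro l hk hmem
  by_cases hle : l.length ≤ hfin.toFinset.card * (n - 1)
  · exact ⟨l, hmem, hle, rfl⟩
  · -- some element appears at least n times
    have hbig : ∃ s ∈ S, n ≤ l.count s := by
      by_contra hcon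
      push_neg at hcon
      have hsum : ∑ a ∈ hfin.toFinset, (l : Multiset G).count a = l.length := by
        rw [Multiset.sum_count_eq_card
          (fun a ha => hfin.mem_toFinset.2 (hmem a (by simpa using ha)))]
        simp
      apply hle
      calc l.length = ∑ a ∈ hfin.toFinset, (l : Multiset G).count a := hsum.symm
        _ ≤ ∑ _a ∈ hfin.toFinset, (n - 1) := by
            refine Finset.sum_le_sum fun a ha => ?_
            have h1 := hcon a (hfin.mem_toFinset.1 ha)
            have h2 : l.count a ≤ n - 1 := by omega
            simpa [Multiset.coe_count] using h2
        _ = hfin.toFinset.card * (n - 1) := by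
            rw [Finset.sum_const, smul_eq_mul]
    obtain ⟨s, hs, hcount⟩ := hbig
    obtain ⟨l', h1, h2, h3⟩ := dietz_pull_pow S hconj s hs n l hmem hcount
    have hlen : l'.length < k := by omega
    obtain ⟨l'', g1, g2, g3⟩ := ih l'.length hlen l' rfl h1
    exact ⟨l'', g1, g2, by rw [g3, h3, hpow s hs, one_mul]⟩

end Dietzmann

private theorem dietz_finite {G : Type*} [Group G] (S : Set G) (hfin : S.Finite)
    (hS : Subgroup.closure S = ⊤) (n : ℕ) (hn : 0 < n)
    (hpow : ∀ s ∈ S, s ^ n = 1)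
    (hconj : ∀ s ∈ S, ∀ t ∈ S, s⁻¹ * t * s ∈ S) : Finite G := by
  classical
  have hinv : ∀ x ∈ Submonoid.closure S, x⁻¹ ∈ Submonoid.closure S := by
    intro x hx
    induction hx using Submonoid.closure_induction with
    | mem s hs =>
      have h1 : s * s ^ (n - 1) = 1 := by
        rw [← pow_succ', Nat.sub_add_cancel hn]
        exact hpow s hs
      rw [inv_eq_of_mul_eq_one_right h1]
      exact pow_mem (Submonoid.subset_closure hs) _
    | one => simpa using Submonoid.one_mem _
    | mul x y _ _ ihx ihy =>
      rw [mul_inv_rev]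
      exact Submonoid.mul_mem _ ihy ihx
  have hmono : ∀ g : G, g ∈ Submonoid.closure S := by
    intro g
    have hg : g ∈ Subgroup.closure S := hS ▸ Subgroup.mem_top g
    refine Subgroup.closure_induction (fun s hs => Submonoid.subset_closure hs)
      (Submonoid.one_mem _) (fun x y _ _ hx hy => Submonoid.mul_mem _ hx hy)
      (fun x _ hx => hinv x hx) hg
  set C := hfin.toFinset.card * (n - 1) with hC
  have hsub : (Set.univ : Set G) ⊆
      List.prod '' {l : List G | (∀ x ∈ l, x ∈ S) ∧ l.length ≤ C} := by
    intro g _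
    obtain ⟨l, h1, h2⟩ := Submonoid.exists_list_of_mem_closure (hmono g)
    obtain ⟨l', g1, g2, g3⟩ := dietz_reduce S hfin hconj n hn hpow l h1
    exact ⟨l', ⟨g1, g2⟩, by rw [g3, h2]⟩
  have hLfin : {l : List G | (∀ x ∈ l, x ∈ S) ∧ l.length ≤ C}.Finite := by
    haveI := hfin.to_subtype
    have hfl := (List.finite_length_le ↥S C).image (List.map (Subtype.val))
    refine hfl.subset ?_
    rintro l ⟨h1, h2⟩
    refine ⟨l.attach.map (fun x => (⟨x.1, h1 x.1 x.2⟩ : ↥S)), ?_, ?_⟩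
    · simpa using h2
    · simp [List.map_map]
  exact Set.finite_univ_iff.1 ((hLfin.image _).subset hsub)
section Envel

variable (Q : Type) [Quandle Q]

private theorem envel_closure_top :
    Subgroup.closure
      (Set.range fun x : Q => (Rack.toEnvelGroup Q x : Rack.EnvelGroup Q)) = ⊤ := by
  rw [eq_top_iff]
  rintro g -
  induction g using Quotient.inductionOn with
  | h a =>
    induction a with
    | unit => exact Subgroup.one_mem _
    | incl x => exact Subgroup.subset_closure ⟨x, rfl⟩
    | mul a b iha ihb => exact Subgroup.mul_mem _ iha ihb
    | inv a iha => exact Subgroup.inv_mem _ iha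

private theorem envel_conj (x y : Q) :
    (Rack.toEnvelGroup Q (x ◃ y) : Rack.EnvelGroup Q) =
      (Rack.toEnvelGroup Q x : Rack.EnvelGroup Q) * Rack.toEnvelGroup Q y *
        (Rack.toEnvelGroup Q x : Rack.EnvelGroup Q)⁻¹ :=
  (Rack.toEnvelGroup Q).map_act'

private theorem envel_pow_mul (x : Q) : ∀ (k : ℕ) (y : Q),
    (Rack.toEnvelGroup Q x : Rack.EnvelGroup Q) ^ k * Rack.toEnvelGroup Q y =
      (Rack.toEnvelGroup Q ((Rack.act' x ^ k) y) : Rack.EnvelGroup Q) *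
        (Rack.toEnvelGroup Q x : Rack.EnvelGroup Q) ^ k := by
  intro k
  induction k with
  | zero => intro y; simp
  | succ k ih =>
    intro y
    rw [pow_succ', mul_assoc, ih y, ← mul_assoc]
    have h2 : (Rack.toEnvelGroup Q x : Rack.EnvelGroup Q) *
        Rack.toEnvelGroup Q ((Rack.act' x ^ k) y) =
        (Rack.toEnvelGroup Q (x ◃ (Rack.act' x ^ k) y) : Rack.EnvelGroup Q) *
          Rack.toEnvelGroup Q x := by
      rw [envel_conj Q x ((Rack.act' x ^ k) y)]
      group
    rw [h2, mul_assoc, ← pow_succ']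
    congr 2
    rw [pow_succ', Equiv.Perm.mul_apply, Rack.act'_apply]

private theorem act_pow_card [Finite Q] (x : Q) :
    Rack.act' x ^ Nat.card (innQ Q) = (1 : Equiv.Perm Q) := by
  have h : (⟨Rack.act' x, Subgroup.subset_closure ⟨x, rfl⟩⟩ : innQ Q) ^ Nat.card (innQ Q) = 1 :=
    pow_card_eq_one'
  have h2 := congrArg (Subtype.val) h
  rwa [SubgroupClass.coe_pow, OneMemClass.coe_one] at h2

end Envel

/-- Let `Q` be a finite quandle, `n = |Inn(Q)|` and `Z₀` the subgroup of `G(Q)` generated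
by the elements `φ_Q(x)^n` for `x ∈ Q`.  Then `Z₀` is central and of finite index. -/
theorem envelGroup_central_subgroup_finite_index (Q : Type) [Quandle Q] [Finite Q]
    (n : ℕ) (hn : n = Nat.card (innQ Q))
    (Z₀ : Subgroup (Rack.EnvelGroup Q))
    (hZ₀ : Z₀ = Subgroup.closure {g : Rack.EnvelGroup Q |
      ∃ x : Q, g = (Rack.toEnvelGroup Q x : Rack.EnvelGroup Q) ^ n}) :
    Z₀ ≤ Subgroup.center (Rack.EnvelGroup Q) ∧ Z₀.FiniteIndex := by
  classical
  have hnpos : 0 < n := by rw [hn]; exact Nat.card_pos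
  have hactn : ∀ x : Q, Rack.act' x ^ n = (1 : Equiv.Perm Q) := fun x => by
    rw [hn]; exact act_pow_card Q x
  have hcomm : ∀ x y : Q,
      (Rack.toEnvelGroup Q x : Rack.EnvelGroup Q) ^ n * Rack.toEnvelGroup Q y =
        (Rack.toEnvelGroup Q y : Rack.EnvelGroup Q) *
          (Rack.toEnvelGroup Q x : Rack.EnvelGroup Q) ^ n := by
    intro x y
    rw [envel_pow_mul Q x n y, hactn x]
    simp
  have hcent : Z₀ ≤ Subgroup.center (Rack.EnvelGroup Q) := by
    rw [hZ₀, Subgroup.closure_le]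
    rintro g ⟨x, rfl⟩
    have key : ∀ h : Rack.EnvelGroup Q,
        Commute ((Rack.toEnvelGroup Q x : Rack.EnvelGroup Q) ^ n) h := by
      intro h
      have hh : h ∈ Subgroup.closure
          (Set.range fun x : Q => (Rack.toEnvelGroup Q x : Rack.EnvelGroup Q)) := by
        rw [envel_closure_top]; trivial
      induction hh using Subgroup.closure_induction with
      | mem t ht => obtain ⟨y, rfl⟩ := ht; exact hcomm x y
      | one => exact Commute.one_right _
      | mul a b _ _ iha ihb => exact iha.mul_right ihb
      | inv a _ iha => exact iha.inv_right
    exact Subgroup.mem_center_iff.2 fun h => ((key h).symm).eq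
  haveI hnormal : Z₀.Normal := by
    constructor
    intro a ha g
    have h2 : g * a * g⁻¹ = a := by
      rw [Subgroup.mem_center_iff.1 (hcent ha) g, mul_inv_cancel_right]
    rw [h2]; exact ha
  refine ⟨hcent, ?_⟩
  have hfinQ : Finite (Rack.EnvelGroup Q ⧸ Z₀) := by
    set p := QuotientGroup.mk' Z₀ with hp
    apply dietz_finite
      (Set.range fun x : Q => p ((Rack.toEnvelGroup Q x : Rack.EnvelGroup Q)))
      (Set.finite_range _) ?_ n hnpos ?_ ?_
    · have hcomp : (Set.range fun x : Q => p ((Rack.toEnvelGroup Q x : Rack.EnvelGroup Q)))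
          = p '' Set.range (fun x : Q => (Rack.toEnvelGroup Q x : Rack.EnvelGroup Q)) := by
        rw [← Set.range_comp]; rfl
      rw [hcomp, ← MonoidHom.map_closure, envel_closure_top]
      exact Subgroup.map_top_of_surjective p (QuotientGroup.mk'_surjective Z₀)
    · rintro s ⟨x, rfl⟩
      rw [← map_pow]
      exact (QuotientGroup.eq_one_iff _).2 (hZ₀ ▸ Subgroup.subset_closure ⟨x, rfl⟩)
    · rintro s ⟨x, rfl⟩ t ⟨y, rfl⟩
      refine ⟨x ◃⁻¹ y, ?_⟩
      have h0 := envel_conj Q x (x ◃⁻¹ y)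
      rw [Rack.right_inv x y] at h0
      have h1 : (Rack.toEnvelGroup Q x : Rack.EnvelGroup Q)⁻¹ *
          Rack.toEnvelGroup Q y * Rack.toEnvelGroup Q x =
          Rack.toEnvelGroup Q (x ◃⁻¹ y) := by
        rw [h0]; group
      show p (Rack.toEnvelGroup Q (x ◃⁻¹ y)) = _
      rw [← h1]
      simp [map_mul, map_inv]
  exact Subgroup.finiteIndex_of_finite_quotient
end

section
/- Let G be a group, Z a subgroup of the centre of G such that the quotient G/Z is finite, V a finite-dimensional complex vector space, and ρ : G → GL(V) a group representation. Then every element of ρ(Z) is diagonalizable if and only if every element of ρ(G) is diagonalizable. -/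
/-- A linear endomorphism of a complex vector space is diagonalizable if the space
admits a basis of eigenvectors. -/
def IsDiagonalizable {V : Type} [AddCommGroup V] [Module ℂ V] (f : V →ₗ[ℂ] V) : Prop :=
  ∃ (ι : Type) (b : Module.Basis ι ℂ V), ∀ i : ι, ∃ μ : ℂ, f (b i) = μ • b i

open Polynomial Module.End

lemma coe_equiv_pow {V : Type} [AddCommGroup V] [Module ℂ V] (e : V ≃ₗ[ℂ] V) (n : ℕ) :
    ((e ^ n : V ≃ₗ[ℂ] V) : V →ₗ[ℂ] V) = ((e : V →ₗ[ℂ] V)) ^ n := by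
  ext x
  simp [LinearEquiv.pow_apply, Module.End.pow_apply]

lemma isDiagonalizable_of_isSemisimple {V : Type} [AddCommGroup V] [Module ℂ V]
    [FiniteDimensional ℂ V] {f : Module.End ℂ V} (hf : f.IsSemisimple) :
    IsDiagonalizable f := by
  have h1 : ∀ μ : ℂ, f.maxGenEigenspace μ = f.eigenspace μ := fun μ =>
    hf.isFinitelySemisimple.maxGenEigenspace_eq_eigenspace μ
  have h2 : ⨆ μ : ℂ, f.eigenspace μ = ⊤ := by
    simpa [h1] using f.iSup_maxGenEigenspace_eq_top
  have hint : DirectSum.IsInternal (fun μ : ℂ => f.eigenspace μ) :=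
    (DirectSum.isInternal_submodule_iff_iSupIndep_and_iSup_eq_top _).mpr
      ⟨f.eigenspaces_iSupIndep, h2⟩
  let v : ∀ μ : ℂ, Module.Basis (Module.Free.ChooseBasisIndex ℂ (f.eigenspace μ)) ℂ (f.eigenspace μ) :=
    fun μ => Module.Free.chooseBasis ℂ _
  refine ⟨_, hint.collectedBasis v, fun i => ⟨i.1, ?_⟩⟩
  exact mem_eigenspace_iff.mp (hint.collectedBasis_mem v i)

lemma isSemisimple_of_pow_diag {V : Type} [AddCommGroup V] [Module ℂ V]
    [FiniteDimensional ℂ V] {f : V ≃ₗ[ℂ] V} {n : ℕ} (hn : n ≠ 0)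
    (h : IsDiagonalizable (((f ^ n : V ≃ₗ[ℂ] V)) : V →ₗ[ℂ] V)) :
    Module.End.IsSemisimple (f : V →ₗ[ℂ] V) := by
  obtain ⟨ι, b, hb⟩ := h
  haveI : Fintype ι := FiniteDimensional.fintypeBasisIndex b
  choose μ hμ using hb
  set F : Module.End ℂ V := (f : V →ₗ[ℂ] V) with hF
  have hFn : ∀ i, (F ^ n) (b i) = μ i • b i := by
    intro i
    rw [← coe_equiv_pow]
    exact hμ i
  have hμ0 : ∀ i, μ i ≠ 0 := by
    intro i h0
    have : (f ^ n) (b i) = 0 := by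
      have := hFn i
      rw [← coe_equiv_pow] at this
      simpa [h0] using this
    exact b.ne_zero i (by simpa using (f ^ n).injective (by simpa using this))
  set S : Finset ℂ := Finset.image μ Finset.univ with hS
  set p : ℂ[X] := ∏ c ∈ S, (X ^ n - C c) with hp
  have hsep : p.Separable := by
    apply Polynomial.separable_prod'
    · intro a ha bb hbb hab
      have hba : bb - a ≠ 0 := sub_ne_zero.mpr (Ne.symm hab)
      refine ⟨C (bb - a)⁻¹, -C (bb - a)⁻¹, ?_⟩
      have : C (bb - a)⁻¹ * (X ^ n - C a) + -C (bb - a)⁻¹ * (X ^ n - C bb)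
          = C ((bb - a)⁻¹ * (bb - a)) := by
        rw [map_mul, map_sub]
        ring
      rw [this, inv_mul_cancel₀ hba, map_one]
    · intro c hc
      obtain ⟨i, -, rfl⟩ := Finset.mem_image.mp hc
      exact Polynomial.separable_X_pow_sub_C _ (by exact_mod_cast hn) (hμ0 i)
  have haeval : aeval F p = 0 := by
    apply b.ext
    intro i
    have hmem : μ i ∈ S := Finset.mem_image.mpr ⟨i, Finset.mem_univ i, rfl⟩
    have hfact : p = (∏ c ∈ S.erase (μ i), (X ^ n - C c)) * (X ^ n - C (μ i)) :=
      (Finset.prod_erase_mul S _ hmem).symm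
    rw [hfact, map_mul, Module.End.mul_apply]
    have : (aeval F (X ^ n - C (μ i))) (b i) = 0 := by
      simp only [map_sub, aeval_X_pow, aeval_C, LinearMap.sub_apply,
        Module.algebraMap_end_apply, hFn i, sub_self]
    rw [this, map_zero, LinearMap.zero_apply]
  exact Module.End.isSemisimple_of_squarefree_aeval_eq_zero hsep.squarefree haeval

/-- Let `Z` be a central subgroup of a group `G` with `G/Z` finite, and let
`ρ : G → GL(V)` be a finite-dimensional complex representation.  Every element of
`ρ(Z)` is diagonalizable if and only if every element of `ρ(G)` is diagonalizable. -/
theorem diagonalizable_on_central_subgroup_iff {G : Type} [Group G]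
    (Z : Subgroup G) (hZ : Z ≤ Subgroup.center G) [Finite (G ⧸ Z)]
    {V : Type} [AddCommGroup V] [Module ℂ V] [FiniteDimensional ℂ V]
    (ρ : G →* (V ≃ₗ[ℂ] V)) :
    (∀ z ∈ Z, IsDiagonalizable (ρ z : V →ₗ[ℂ] V)) ↔
      ∀ g : G, IsDiagonalizable (ρ g : V →ₗ[ℂ] V) := by
  constructor
  · intro h g
    haveI : Z.Normal := ⟨fun z hz' g => by
      have hc := (Subgroup.mem_center_iff.mp (hZ hz')) g
      simpa [hc, mul_assoc] using hz'⟩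
    set n := Nat.card (G ⧸ Z) with hn
    have hn0 : n ≠ 0 := Nat.card_pos.ne'
    have hgn : g ^ n ∈ Z := by
      rw [← QuotientGroup.eq_one_iff, QuotientGroup.mk_pow]
      exact pow_card_eq_one'
    have hd : IsDiagonalizable ((ρ g ^ n : V ≃ₗ[ℂ] V) : V →ₗ[ℂ] V) := by
      rw [← map_pow]
      exact h _ hgn
    exact isDiagonalizable_of_isSemisimple (isSemisimple_of_pow_diag hn0 hd)
  · intro h z _
    exact h z
end

section
/- Let G be a group, Z a subgroup of the centre of G such that the quotient G/Z is finite, V a finite-dimensional complex vector space, and ρ : G → GL(V) a group representation. Then ρ is completely reducible (V is the internal direct sum of a family of G-invariant subspaces each of which has no G-invariant subspaces other than 0 and itself) if and only if every element of ρ(G) is diagonalizable. -/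
/-- `W` is invariant under the group representation `ρ`. -/
def IsGroupSubrep {G : Type} [Group G] {V : Type} [AddCommGroup V] [Module ℂ V]
    (ρ : G →* (V ≃ₗ[ℂ] V)) (W : Submodule ℂ V) : Prop :=
  ∀ g : G, ∀ v ∈ W, ρ g v ∈ W

/-- The group representation `ρ` is completely reducible: `V` is the internal direct
sum of a family of invariant subspaces each of which has no invariant subspaces other
than `0` and itself. -/
def CompletelyReducibleGroupRep {G : Type} [Group G] {V : Type} [AddCommGroup V]
    [Module ℂ V] (ρ : G →* (V ≃ₗ[ℂ] V)) : Prop :=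
  ∃ (ι : Type) (W : ι → Submodule ℂ V),
    iSupIndep W ∧ iSup W = ⊤ ∧
    ∀ i : ι, IsGroupSubrep ρ (W i) ∧
      ∀ U : Submodule ℂ V, U ≤ W i → IsGroupSubrep ρ U → U = ⊥ ∨ U = W i

open Module Polynomial

section Aux

variable {G : Type} [Group G] {V : Type} [AddCommGroup V] [Module ℂ V]

lemma rho_mul (ρ : G →* (V ≃ₗ[ℂ] V)) (a b : G) (v : V) : ρ (a * b) v = ρ a (ρ b v) := by
  rw [map_mul]; rfl

lemma rho_one (ρ : G →* (V ≃ₗ[ℂ] V)) (v : V) : ρ 1 v = v := by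
  rw [map_one]; rfl

lemma coe_pow_apply (e : V ≃ₗ[ℂ] V) (n : ℕ) (v : V) :
    ((e : V →ₗ[ℂ] V) ^ n) v = (e ^ n) v := by
  induction n generalizing v with
  | zero => simp
  | succ n ih =>
    rw [pow_succ, pow_succ, Module.End.mul_apply]
    rw [show ((e ^ n * e : V ≃ₗ[ℂ] V)) v = (e ^ n) (e v) from rfl]
    rw [show ((e : V →ₗ[ℂ] V)) v = e v from rfl, ih]

lemma isGroupSubrep_iSup {ι : Sort*} (ρ : G →* (V ≃ₗ[ℂ] V)) (W : ι → Submodule ℂ V)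
    (hW : ∀ i, IsGroupSubrep ρ (W i)) : IsGroupSubrep ρ (⨆ i, W i) := by
  intro g v hv
  have hle : Submodule.map (ρ g : V →ₗ[ℂ] V) (⨆ i, W i) ≤ ⨆ i, W i := by
    rw [Submodule.map_iSup]
    exact iSup_mono fun i => Submodule.map_le_iff_le_comap.mpr fun x hx => hW i g x hx
  exact hle ⟨v, hv, rfl⟩

lemma isDiagonalizable_iff_iSup_eigenspace_eq_top [FiniteDimensional ℂ V] (f : V →ₗ[ℂ] V) :
    IsDiagonalizable f ↔ ⨆ μ : ℂ, Module.End.eigenspace f μ = ⊤ := by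
  constructor
  · rintro ⟨ι, b, hb⟩
    rw [eq_top_iff, ← b.span_eq, Submodule.span_le]
    rintro x ⟨i, rfl⟩
    obtain ⟨μ, hμ⟩ := hb i
    exact le_iSup (fun μ : ℂ => Module.End.eigenspace f μ) μ
      (Module.End.mem_eigenspace_iff.mpr hμ)
  · intro h
    classical
    have hind := Module.End.eigenspaces_iSupIndep f
    have hint : DirectSum.IsInternal fun μ : ℂ => Module.End.eigenspace f μ :=
      DirectSum.isInternal_submodule_of_iSupIndep_of_iSup_eq_top hind h
    let v := fun μ : ℂ => Module.Basis.ofVectorSpace ℂ ↥(Module.End.eigenspace f μ)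
    refine ⟨_, hint.collectedBasis v, ?_⟩
    rintro ⟨μ, i⟩
    exact ⟨μ, Module.End.mem_eigenspace_iff.mp (hint.collectedBasis_mem v ⟨μ, i⟩)⟩

lemma isSemisimple_of_isDiagonalizable [FiniteDimensional ℂ V] (f : Module.End ℂ V)
    (h : IsDiagonalizable f) : f.IsSemisimple := by
  classical
  obtain ⟨ι, b, hb⟩ := h
  haveI : Fintype ι := FiniteDimensional.fintypeBasisIndex b
  choose μ hμ using hb
  set S : Finset ℂ := Finset.image μ Finset.univ with hS
  have hsq : Squarefree (∏ c ∈ S, (X - C c)) :=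
    (Polynomial.separable_prod_X_sub_C_iff'.mpr fun x _ y _ hxy => hxy).squarefree
  have hP : aeval f (∏ c ∈ S, (X - C c)) = 0 := by
    apply b.ext
    intro i
    have hmem : μ i ∈ S := by simp [hS]
    rw [show (∏ c ∈ S, (X - C c)) = (∏ c ∈ S.erase (μ i), (X - C c)) * (X - C (μ i)) from
      (Finset.prod_erase_mul S _ hmem).symm]
    rw [map_mul, Module.End.mul_apply, map_sub, aeval_X, aeval_C, LinearMap.sub_apply,
      Module.algebraMap_end_apply, hμ i, sub_self, map_zero, LinearMap.zero_apply]
  exact Module.End.isSemisimple_of_squarefree_aeval_eq_zero hsq hP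

lemma iSup_eigenspace_of_pow_eq_algebraMap [FiniteDimensional ℂ V] (f : Module.End ℂ V)
    (n : ℕ) (hn : n ≠ 0) (μ : ℂ) (hμ : μ ≠ 0)
    (h : f ^ n = algebraMap ℂ (Module.End ℂ V) μ) :
    ⨆ c : ℂ, Module.End.eigenspace f c = ⊤ := by
  have hsq : Squarefree ((X : ℂ[X]) ^ n - C μ) :=
    (Polynomial.separable_X_pow_sub_C μ (by exact_mod_cast hn) hμ).squarefree
  have hP : aeval f ((X : ℂ[X]) ^ n - C μ) = 0 := by
    rw [map_sub, map_pow, aeval_X, aeval_C, h, sub_self]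
  have hss := Module.End.isSemisimple_of_squarefree_aeval_eq_zero hsq hP
  have htop := Module.End.iSup_maxGenEigenspace_eq_top f
  calc ⨆ c : ℂ, Module.End.eigenspace f c
      = ⨆ c : ℂ, Module.End.maxGenEigenspace f c := by
        exact iSup_congr fun c => (hss.isFinitelySemisimple.maxGenEigenspace_eq_eigenspace c).symm
    _ = ⊤ := htop



lemma le_iSup_eigenspace_of_irreducible (Z : Subgroup G) (hZ : Z ≤ Subgroup.center G)
    [Finite (G ⧸ Z)] [FiniteDimensional ℂ V] (ρ : G →* (V ≃ₗ[ℂ] V)) (g : G)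
    (W : Submodule ℂ V) (hW : IsGroupSubrep ρ W)
    (hirr : ∀ U : Submodule ℂ V, U ≤ W → IsGroupSubrep ρ U → U = ⊥ ∨ U = W) :
    W ≤ ⨆ μ : ℂ, Module.End.eigenspace (ρ g : V →ₗ[ℂ] V) μ := by
  rcases eq_or_ne W ⊥ with rfl | hbot
  · simp
  haveI : Nontrivial ↥W := Submodule.nontrivial_iff_ne_bot.mpr hbot
  set n := Nat.card (G ⧸ Z) with hn_def
  have hn : n ≠ 0 := Nat.card_ne_zero.mpr ⟨inferInstance, inferInstance⟩
  haveI : Z.Normal := by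
    constructor
    intro a ha g'
    have hcg : g' * a = a * g' := Subgroup.mem_center_iff.mp (hZ ha) g'
    have : g' * a * g'⁻¹ = a := by rw [hcg, mul_assoc, mul_inv_cancel, mul_one]
    rwa [this]
  have hzZ : g ^ n ∈ Z := by
    have h1 : ((g ^ n : G) : G ⧸ Z) = 1 := by
      rw [QuotientGroup.mk_pow]; exact pow_card_eq_one'
    exact (QuotientGroup.eq_one_iff _).mp h1
  set z := g ^ n with hz_def
  have hz_central : ∀ g' : G, z * g' = g' * z := fun g' =>
    ((Subgroup.mem_center_iff.mp (hZ hzZ)) g').symm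
  -- Schur: ρ z acts as a nonzero scalar on W
  have hWz : ∀ x ∈ W, (ρ z : V →ₗ[ℂ] V) x ∈ W := fun x hx => hW z x hx
  obtain ⟨c, hc⟩ := Module.End.exists_eigenvalue ((ρ z : V →ₗ[ℂ] V).restrict hWz)
  obtain ⟨v₀, hv₀⟩ := hc.exists_hasEigenvector
  have hUinv : IsGroupSubrep ρ (W ⊓ Module.End.eigenspace (ρ z : V →ₗ[ℂ] V) c) := by
    rintro g' v ⟨hv1, hv2⟩
    refine ⟨hW g' v hv1, Module.End.mem_eigenspace_iff.mpr ?_⟩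
    have hv2' : ρ z v = c • v := Module.End.mem_eigenspace_iff.mp hv2
    calc (ρ z : V →ₗ[ℂ] V) (ρ g' v) = ρ (z * g') v := (rho_mul ρ z g' v).symm
      _ = ρ (g' * z) v := by rw [hz_central g']
      _ = ρ g' (ρ z v) := rho_mul ρ g' z v
      _ = ρ g' (c • v) := by rw [hv2']
      _ = c • ρ g' v := by rw [map_smul]
  have hUne : W ⊓ Module.End.eigenspace (ρ z : V →ₗ[ℂ] V) c ≠ ⊥ := by
    intro hcontra
    apply hv₀.2
    have hmem : (v₀ : V) ∈ W ⊓ Module.End.eigenspace (ρ z : V →ₗ[ℂ] V) c := by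
      refine ⟨v₀.2, Module.End.mem_eigenspace_iff.mpr ?_⟩
      have := hv₀.apply_eq_smul
      have h2 : ((((ρ z : V →ₗ[ℂ] V)).restrict hWz) v₀ : V) = (ρ z : V →ₗ[ℂ] V) (v₀ : V) :=
        LinearMap.restrict_coe_apply _ _ _
      rw [this] at h2
      rw [← h2]
      rfl
    rw [hcontra] at hmem
    have : (v₀ : V) = 0 := (Submodule.mem_bot ℂ).mp hmem
    exact Subtype.ext this
  have hUW : W ⊓ Module.End.eigenspace (ρ z : V →ₗ[ℂ] V) c = W :=
    (hirr _ inf_le_left hUinv).resolve_left hUne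
  have hscal : ∀ v ∈ W, ρ z v = c • v := by
    intro v hv
    have hv' : v ∈ W ⊓ Module.End.eigenspace (ρ z : V →ₗ[ℂ] V) c := by rw [hUW]; exact hv
    exact Module.End.mem_eigenspace_iff.mp hv'.2
  have hc0 : c ≠ 0 := by
    obtain ⟨w, hwW, hw0⟩ := Submodule.exists_mem_ne_zero_of_ne_bot hbot
    intro hc0
    apply hw0
    have h1 : ρ z w = 0 := by rw [hscal w hwW, hc0, zero_smul]
    have := (ρ z).injective (by rw [h1, map_zero] : ρ z w = ρ z 0)
    exact this
  -- restriction of ρ g to W satisfies X^n = c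
  have hWg : ∀ x ∈ W, (ρ g : V →ₗ[ℂ] V) x ∈ W := fun x hx => hW g x hx
  have hfg : ((ρ g : V →ₗ[ℂ] V).restrict hWg) ^ n = algebraMap ℂ (Module.End ℂ ↥W) c := by
    rw [Module.End.pow_restrict n]
    apply LinearMap.ext
    intro x
    apply Subtype.ext
    rw [LinearMap.restrict_coe_apply]
    have h1 : ((ρ g : V →ₗ[ℂ] V) ^ n) (x : V) = ρ (g ^ n) (x : V) := by
      rw [coe_pow_apply, ← map_pow]
    rw [h1, ← hz_def, hscal _ x.2]
    rfl
  have htop := iSup_eigenspace_of_pow_eq_algebraMap _ n hn c hc0 hfg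
  intro v hv
  have hmem : (⟨v, hv⟩ : ↥W) ∈ ⨆ c' : ℂ, Module.End.eigenspace ((ρ g : V →ₗ[ℂ] V).restrict hWg) c' := by
    rw [htop]; trivial
  have hle : Submodule.map W.subtype
      (⨆ c' : ℂ, Module.End.eigenspace ((ρ g : V →ₗ[ℂ] V).restrict hWg) c')
      ≤ ⨆ c' : ℂ, Module.End.eigenspace (ρ g : V →ₗ[ℂ] V) c' := by
    rw [Submodule.map_iSup]
    exact iSup_mono fun c' => Module.End.eigenspace_restrict_le_eigenspace _ _ _
  exact hle ⟨⟨v, hv⟩, hmem, rfl⟩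



section ModA

variable (ρ : G →* (V ≃ₗ[ℂ] V))
variable [Module (MonoidAlgebra ℂ G) V] [IsScalarTower ℂ (MonoidAlgebra ℂ G) V]

/-- An invariant subspace as a submodule over the monoid algebra. -/
def invtToA (hs : ∀ (g : G) (v : V), MonoidAlgebra.single g (1:ℂ) • v = ρ g v)
    (W : Submodule ℂ V) (hW : IsGroupSubrep ρ W) : Submodule (MonoidAlgebra ℂ G) V where
  carrier := W
  add_mem' := fun h1 h2 => W.add_mem h1 h2
  zero_mem' := W.zero_mem
  smul_mem' := by
    intro a v hv
    rw [show a = a.coeff.sum MonoidAlgebra.single from (MonoidAlgebra.sum_coeff_single a).symm]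
    rw [Finsupp.sum, Finset.sum_smul]
    apply Submodule.sum_mem
    intro g _
    have h1 : (MonoidAlgebra.single g (a.coeff g) : MonoidAlgebra ℂ G) • v = (a.coeff g) • (ρ g v) := by
      have h2 : (MonoidAlgebra.single g (a.coeff g) : MonoidAlgebra ℂ G)
          = (a.coeff g) • MonoidAlgebra.single g (1:ℂ) := by
        rw [MonoidAlgebra.smul_single', mul_one]
      rw [h2, smul_assoc, hs]
    exact h1 ▸ W.smul_mem _ (hW g v hv)

lemma mem_invtToA (hs : ∀ (g : G) (v : V), MonoidAlgebra.single g (1:ℂ) • v = ρ g v)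
    {W : Submodule ℂ V} {hW : IsGroupSubrep ρ W} {v : V} :
    v ∈ invtToA ρ hs W hW ↔ v ∈ W := Iff.rfl

lemma isGroupSubrep_restrictScalars
    (hs : ∀ (g : G) (v : V), MonoidAlgebra.single g (1:ℂ) • v = ρ g v)
    (p : Submodule (MonoidAlgebra ℂ G) V) :
    IsGroupSubrep ρ (p.restrictScalars ℂ) := by
  intro g v hv
  have : ρ g v = (MonoidAlgebra.single g (1:ℂ)) • v := (hs g v).symm
  rw [Submodule.restrictScalars_mem] at hv ⊢
  rw [this]
  exact p.smul_mem _ hv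

end ModA

/-- Averaging over `G ⧸ Z`: Maschke-type complement inside a subspace on which the
central subgroup `Z` acts by scalars. -/
lemma maschke_rel (Z : Subgroup G) (hZ : Z ≤ Subgroup.center G) [Finite (G ⧸ Z)]
    [FiniteDimensional ℂ V] (ρ : G →* (V ≃ₗ[ℂ] V)) {p U : Submodule ℂ V}
    (hp : IsGroupSubrep ρ p) (hU : IsGroupSubrep ρ U) (hUp : U ≤ p)
    {χ : Z → ℂ} (hχ : ∀ (z : Z) (v : V), v ∈ p → ρ (z : G) v = χ z • v) :
    ∃ C : Submodule ℂ V, IsGroupSubrep ρ C ∧ C ≤ p ∧ U ⊓ C = ⊥ ∧ U ⊔ C = p := by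
  classical
  haveI : Z.Normal := by
    constructor
    intro a ha g'
    have hcg : g' * a = a * g' := Subgroup.mem_center_iff.mp (hZ ha) g'
    have h3 : g' * a * g'⁻¹ = a := by rw [hcg, mul_assoc, mul_inv_cancel, mul_one]
    rwa [h3]
  haveI : Fintype (G ⧸ Z) := Fintype.ofFinite _
  obtain ⟨C₀, hC₀⟩ := Submodule.exists_isCompl U
  set π : V →ₗ[ℂ] V := U.subtype ∘ₗ (U.projectionOnto C₀ hC₀) with hπ_def
  have hπ_mem : ∀ v : V, π v ∈ U := fun v => (U.projectionOnto C₀ hC₀ v).2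
  have hπ_id : ∀ u ∈ U, π u = u := by
    intro u hu
    have h4 := Submodule.linearProjOfIsCompl_apply_left hC₀ ⟨u, hu⟩
    simp only [hπ_def, LinearMap.comp_apply, Submodule.coe_subtype]
    exact congrArg Subtype.val h4
  set σ : G ⧸ Z → G := Quotient.out with hσ_def
  have hσ : ∀ c : G ⧸ Z, ((σ c : G) : G ⧸ Z) = c := fun c => QuotientGroup.out_eq' c
  set T : V →ₗ[ℂ] V :=
    ∑ c : G ⧸ Z, ((ρ (σ c) : V →ₗ[ℂ] V) ∘ₗ π ∘ₗ (ρ (σ c)⁻¹ : V →ₗ[ℂ] V)) with hT_def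
  have hT_apply : ∀ v : V, T v = ∑ c : G ⧸ Z, ρ (σ c) (π (ρ (σ c)⁻¹ v)) := by
    intro v
    rw [hT_def, LinearMap.sum_apply]
    rfl
  have hT_mem : ∀ v : V, T v ∈ U := by
    intro v
    rw [hT_apply]
    exact Submodule.sum_mem _ fun c _ => hU _ _ (hπ_mem _)
  have hT_U : ∀ u ∈ U, T u = (Fintype.card (G ⧸ Z) : ℂ) • u := by
    intro u hu
    rw [hT_apply]
    have h5 : ∀ c : G ⧸ Z, ρ (σ c) (π (ρ (σ c)⁻¹ u)) = u := by
      intro c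
      rw [hπ_id _ (hU _ _ hu), ← rho_mul, mul_inv_cancel, rho_one]
    rw [Finset.sum_congr rfl fun c _ => h5 c, Finset.sum_const, Finset.card_univ,
      Nat.cast_smul_eq_nsmul]
  have hunit : ∀ (ζ : Z) (x : V), x ∈ p → χ (ζ⁻¹) • χ ζ • x = x := by
    intro ζ x hx
    rw [← hχ ζ x hx, ← hχ ζ⁻¹ _ (hp (ζ : G) x hx)]
    have h2 : ((ζ⁻¹ : Z) : G) * (ζ : G) = 1 := by simp
    rw [← rho_mul, h2, rho_one]
  have hT_comm : ∀ (g : G) (v : V), v ∈ p → T (ρ g v) = ρ g (T v) := by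
    intro g v hv
    rw [hT_apply, hT_apply, map_sum]
    refine (Fintype.sum_equiv (Equiv.mulLeft ((g : G ⧸ Z)))
      (fun c => ρ g (ρ (σ c) (π (ρ (σ c)⁻¹ v))))
      (fun c => ρ (σ c) (π (ρ (σ c)⁻¹ (ρ g v)))) ?_).symm
    intro c
    simp only [Equiv.coe_mulLeft]
    set d : G := σ ((g : G ⧸ Z) * c) with hd_def
    set k : G := g * σ c with hk_def
    have hdk : ((d : G) : G ⧸ Z) = ((k : G) : G ⧸ Z) := by
      rw [hd_def, hσ, hk_def]
      rw [show ((g * σ c : G) : G ⧸ Z) = ((g : G) : G ⧸ Z) * ((σ c : G) : G ⧸ Z) from rfl, hσ]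
    have hzZ : d⁻¹ * k ∈ Z := QuotientGroup.eq.mp hdk
    set ζ : Z := ⟨d⁻¹ * k, hzZ⟩ with hζ_def
    have hk_eq : k = d * (ζ : G) := by rw [hζ_def]; simp
    set w : V := ρ (d⁻¹ * g) v with hw_def
    have hwp : w ∈ p := hp _ _ hv
    have e1 : (σ c)⁻¹ = ((ζ⁻¹ : Z) : G) * (d⁻¹ * g) := by
      have hσc : σ c = g⁻¹ * k := by rw [hk_def]; group
      rw [hσc, hk_eq, show ((ζ⁻¹ : Z) : G) = ((ζ : Z) : G)⁻¹ from rfl]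
      group
    have step_a : ρ ((σ c)⁻¹) v = χ ζ⁻¹ • w := by
      rw [e1, rho_mul, ← hw_def]
      exact hχ ζ⁻¹ w hwp
    have hπwU : π w ∈ U := hπ_mem w
    have step_c : ρ k (π w) = χ ζ • ρ d (π w) := by
      rw [hk_eq, rho_mul, hχ ζ (π w) (hUp hπwU), map_smul]
    have hRd : ρ d (π w) ∈ p := hp _ _ (hUp hπwU)
    calc ρ g (ρ (σ c) (π (ρ (σ c)⁻¹ v)))
        = ρ (g * σ c) (π (ρ (σ c)⁻¹ v)) := (rho_mul ρ g (σ c) _).symm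
      _ = ρ k (π (χ ζ⁻¹ • w)) := by rw [step_a, ← hk_def]
      _ = χ ζ⁻¹ • ρ k (π w) := by rw [map_smul, map_smul]
      _ = χ ζ⁻¹ • χ ζ • ρ d (π w) := by rw [step_c]
      _ = ρ d (π w) := hunit ζ _ hRd
      _ = ρ d (π (ρ d⁻¹ (ρ g v))) := by rw [← rho_mul, ← hw_def]
  have hcard : (Fintype.card (G ⧸ Z) : ℂ) ≠ 0 := Nat.cast_ne_zero.mpr Fintype.card_ne_zero
  refine ⟨p ⊓ LinearMap.ker T, ?_, inf_le_left, ?_, ?_⟩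
  · rintro g' v ⟨hv1, hv2⟩
    refine ⟨hp g' v hv1, LinearMap.mem_ker.mpr ?_⟩
    rw [hT_comm g' v hv1, LinearMap.mem_ker.mp hv2, map_zero]
  · rw [eq_bot_iff]
    rintro v ⟨hvU, -, hvK⟩
    have h1 : T v = 0 := LinearMap.mem_ker.mp hvK
    have h2 := hT_U v hvU
    rw [h1] at h2
    have h3 : v = 0 := by
      rcases smul_eq_zero.mp h2.symm with h | h
      · exact absurd h hcard
      · exact h
    simp [h3]
  · apply le_antisymm (sup_le hUp inf_le_left)
    intro v hv
    set u := (Fintype.card (G ⧸ Z) : ℂ)⁻¹ • T v with hu_def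
    have huU : u ∈ U := U.smul_mem _ (hT_mem v)
    have hvu : v - u ∈ p ⊓ LinearMap.ker T := by
      refine ⟨p.sub_mem hv (hUp huU), LinearMap.mem_ker.mpr ?_⟩
      rw [map_sub, hu_def, map_smul, hT_U _ (hT_mem v), smul_smul,
        inv_mul_cancel₀ hcard, one_smul, sub_self]
    have h6 : v = u + (v - u) := by abel
    rw [h6]
    exact Submodule.add_mem _ (Submodule.mem_sup_left huU) (Submodule.mem_sup_right hvu)


section Pieces

variable (ρ : G →* (V ≃ₗ[ℂ] V))
variable [Module (MonoidAlgebra ℂ G) V] [IsScalarTower ℂ (MonoidAlgebra ℂ G) V]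

lemma restrictScalars_le_iff {x y : Submodule (MonoidAlgebra ℂ G) V} :
    x.restrictScalars ℂ ≤ y.restrictScalars ℂ ↔ x ≤ y := Iff.rfl

lemma isSemisimpleModule_piece
    (hs : ∀ (g : G) (v : V), MonoidAlgebra.single g (1:ℂ) • v = ρ g v)
    (Z : Subgroup G) (hZ : Z ≤ Subgroup.center G) [Finite (G ⧸ Z)] [FiniteDimensional ℂ V]
    {p : Submodule ℂ V} (hp : IsGroupSubrep ρ p) {χ : Z → ℂ}
    (hχ : ∀ (z : Z) (v : V), v ∈ p → ρ (z : G) v = χ z • v) :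
    IsSemisimpleModule (MonoidAlgebra ℂ G) ↥(invtToA ρ hs p hp) := by
  rw [isSemisimpleModule_iff, (invtToA ρ hs p hp).mapIic.complementedLattice_iff,
    Set.Iic.complementedLattice_iff]
  intro x hx
  have hxp : x.restrictScalars ℂ ≤ p := fun v hv => hx hv
  obtain ⟨C, hCinv, hCp, hCd, hCs⟩ :=
    maschke_rel Z hZ ρ hp (isGroupSubrep_restrictScalars ρ hs x) hxp hχ
  refine ⟨invtToA ρ hs C hCinv, fun v hv => hCp hv, ?_, ?_⟩
  · rw [eq_bot_iff]
    intro v hv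
    have h1 : v ∈ (x.restrictScalars ℂ) ⊓ C := ⟨hv.1, hv.2⟩
    rw [hCd] at h1
    simpa using h1
  · apply le_antisymm (sup_le hx fun v hv => hCp hv)
    intro v hv
    have h1 : v ∈ (x.restrictScalars ℂ) ⊔ C := by rw [hCs]; exact hv
    obtain ⟨a, ha, b, hb, rfl⟩ := Submodule.mem_sup.mp h1
    exact Submodule.add_mem _ (Submodule.mem_sup_left ha) (Submodule.mem_sup_right hb)

lemma completelyReducible_of_diag
    (hs : ∀ (g : G) (v : V), MonoidAlgebra.single g (1:ℂ) • v = ρ g v)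
    (Z : Subgroup G) (hZ : Z ≤ Subgroup.center G) [Finite (G ⧸ Z)] [FiniteDimensional ℂ V]
    (hdiag : ∀ g : G, ⨆ μ : ℂ, Module.End.eigenspace (ρ g : V →ₗ[ℂ] V) μ = ⊤) :
    CompletelyReducibleGroupRep ρ := by
  classical
  set f : Z → Module.End ℂ V := fun z => (ρ (z : G) : V →ₗ[ℂ] V) with hf_def
  have hss : ∀ z : Z, (f z).IsSemisimple := by
    intro z
    apply isSemisimple_of_isDiagonalizable
    rw [isDiagonalizable_iff_iSup_eigenspace_eq_top]
    exact hdiag (z : G)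
  have hcomm : Pairwise fun z1 z2 : Z => Commute (f z1) (f z2) := by
    intro z1 z2 _
    have h1 : ∀ v : V, (f z1 * f z2) v = (f z2 * f z1) v := by
      intro v
      have e1 : (z1 : G) * (z2 : G) = (z2 : G) * (z1 : G) :=
        Subgroup.mem_center_iff.mp (hZ z2.2) (z1 : G)
      show ρ (z1 : G) (ρ (z2 : G) v) = ρ (z2 : G) (ρ (z1 : G) v)
      rw [← rho_mul, ← rho_mul, e1]
    exact LinearMap.ext h1
  have hmax : ∀ z : Z, ⨆ μ : ℂ, (f z).maxGenEigenspace μ = ⊤ := by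
    intro z
    have := hdiag (z : G)
    calc ⨆ μ : ℂ, (f z).maxGenEigenspace μ
        = ⨆ μ : ℂ, (f z).eigenspace μ := iSup_congr fun μ =>
          (hss z).isFinitelySemisimple.maxGenEigenspace_eq_eigenspace μ
      _ = ⊤ := hdiag (z : G)
  have htop := Module.End.iSup_iInf_maxGenEigenspace_eq_top_of_iSup_maxGenEigenspace_eq_top_of_commute
    f hcomm hmax
  set Wc : (Z → ℂ) → Submodule ℂ V := fun χ => ⨅ z : Z, (f z).eigenspace (χ z) with hWc_def
  have htop' : ⨆ χ : Z → ℂ, Wc χ = ⊤ := by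
    rw [← htop]
    exact iSup_congr fun χ => iInf_congr fun z =>
      ((hss z).isFinitelySemisimple.maxGenEigenspace_eq_eigenspace (χ z)).symm
  have hWscal : ∀ (χ : Z → ℂ) (z : Z) (v : V), v ∈ Wc χ → ρ (z : G) v = χ z • v := by
    intro χ z v hv
    exact Module.End.mem_eigenspace_iff.mp ((Submodule.mem_iInf _).mp hv z)
  have hWinv : ∀ χ : Z → ℂ, IsGroupSubrep ρ (Wc χ) := by
    intro χ g v hv
    rw [hWc_def, Submodule.mem_iInf]
    intro z
    rw [Module.End.mem_eigenspace_iff]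
    have e1 : (z : G) * g = g * (z : G) := (Subgroup.mem_center_iff.mp (hZ z.2) g).symm
    show ρ (z : G) (ρ g v) = χ z • ρ g v
    rw [← rho_mul, e1, rho_mul, hWscal χ z v hv, map_smul]
  have hsemi : IsSemisimpleModule (MonoidAlgebra ℂ G) V := by
    apply isSemisimpleModule_of_isSemisimpleModule_submodule'
      (p := fun χ : Z → ℂ => invtToA ρ hs (Wc χ) (hWinv χ))
    · intro χ
      exact isSemisimpleModule_piece ρ hs Z hZ (hWinv χ) (hWscal χ)
    · rw [eq_top_iff]
      intro v _
      have h1 : v ∈ (⨆ χ : Z → ℂ, Wc χ) := by rw [htop']; trivial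
      have h2 : (⨆ χ : Z → ℂ, Wc χ)
          ≤ (⨆ χ : Z → ℂ, invtToA ρ hs (Wc χ) (hWinv χ)).restrictScalars ℂ := by
        apply iSup_le
        intro χ w hw
        exact (le_iSup (fun χ : Z → ℂ => invtToA ρ hs (Wc χ) (hWinv χ)) χ) hw
      exact h2 h1
  obtain ⟨s, hs_ind, hs_sup, hs_simple⟩ :=
    IsSemisimpleModule.exists_sSupIndep_sSup_simples_eq_top (MonoidAlgebra ℂ G) V
  refine ⟨↥s, fun m => ((m : Submodule (MonoidAlgebra ℂ G) V)).restrictScalars ℂ, ?_, ?_, ?_⟩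
  · intro m
    have hind : iSupIndep (fun m : s => (m : Submodule (MonoidAlgebra ℂ G) V)) :=
      (sSupIndep_iff s).mp hs_ind
    have h1 := hind m
    rw [disjoint_iff] at h1 ⊢
    rw [eq_bot_iff]
    intro v hv
    have h2 : v ∈ ((m : Submodule (MonoidAlgebra ℂ G) V)
        ⊓ ⨆ j : s, ⨆ _ : j ≠ m, (j : Submodule (MonoidAlgebra ℂ G) V)) := by
      refine ⟨hv.1, ?_⟩
      have h3 : (⨆ j : s, ⨆ _ : j ≠ m, (j : Submodule (MonoidAlgebra ℂ G) V).restrictScalars ℂ)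
          ≤ (⨆ j : s, ⨆ _ : j ≠ m, (j : Submodule (MonoidAlgebra ℂ G) V)).restrictScalars ℂ := by
        apply iSup_le; intro j; apply iSup_le; intro hj
        intro w hw
        exact (le_iSup₂ (f := fun (j : s) (_ : j ≠ m) => (j : Submodule (MonoidAlgebra ℂ G) V)) j hj) hw
      exact h3 hv.2
    rw [h1] at h2
    simpa using h2
  · rw [eq_top_iff]
    intro v _
    have hSinv : IsGroupSubrep ρ (⨆ m : s, ((m : Submodule (MonoidAlgebra ℂ G) V)).restrictScalars ℂ) :=
      isGroupSubrep_iSup ρ _ fun m => isGroupSubrep_restrictScalars ρ hs _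
    have h1 : sSup s ≤ invtToA ρ hs _ hSinv := by
      apply sSup_le
      intro m hm
      intro w hw
      exact (le_iSup (fun m : s => ((m : Submodule (MonoidAlgebra ℂ G) V)).restrictScalars ℂ)
        ⟨m, hm⟩) hw
    rw [hs_sup] at h1
    exact h1 trivial
  · intro m
    constructor
    · exact isGroupSubrep_restrictScalars ρ hs _
    · intro U hU hUinv
      have hatom : IsAtom (m : Submodule (MonoidAlgebra ℂ G) V) :=
        isSimpleModule_iff_isAtom.mp (hs_simple m m.2)
      have hle : invtToA ρ hs U hUinv ≤ (m : Submodule (MonoidAlgebra ℂ G) V) := fun v hv => hU hv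
      rcases hatom.le_iff.mp hle with h | h
      · left
        rw [eq_bot_iff]
        intro v hv
        have : v ∈ invtToA ρ hs U hUinv := hv
        rw [h] at this
        simpa using this
      · right
        apply le_antisymm hU
        intro v hv
        have : v ∈ (m : Submodule (MonoidAlgebra ℂ G) V) := hv
        rw [← h] at this
        exact this

end Pieces

end Aux

/-- Let `Z` be a central subgroup of a group `G` with `G/Z` finite, and let
`ρ : G → GL(V)` be a finite-dimensional complex representation.  Then `ρ` is completely
reducible if and only if every element of `ρ(G)` is diagonalizable. -/
theorem completelyReducible_iff_diagonalizable {G : Type} [Group G]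
    (Z : Subgroup G) (hZ : Z ≤ Subgroup.center G) [Finite (G ⧸ Z)]
    {V : Type} [AddCommGroup V] [Module ℂ V] [FiniteDimensional ℂ V]
    (ρ : G →* (V ≃ₗ[ℂ] V)) :
    CompletelyReducibleGroupRep ρ ↔ ∀ g : G, IsDiagonalizable (ρ g : V →ₗ[ℂ] V) := by
  constructor
  · rintro ⟨ι, W, hind, hsup, hirr⟩ g
    rw [isDiagonalizable_iff_iSup_eigenspace_eq_top, eq_top_iff, ← hsup]
    exact iSup_le fun i => le_iSup_eigenspace_of_irreducible Z hZ ρ g (W i) (hirr i).1 (hirr i).2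
  · intro hdiag
    set rep : G →* Module.End ℂ V :=
      { toFun := fun g => (ρ g : V →ₗ[ℂ] V)
        map_one' := by
          apply LinearMap.ext
          intro v
          show ρ 1 v = v
          exact rho_one ρ v
        map_mul' := fun a b => by
          apply LinearMap.ext
          intro v
          show ρ (a * b) v = ρ a (ρ b v)
          exact rho_mul ρ a b v } with hrep
    letI : Module (MonoidAlgebra ℂ G) V :=
      Module.compHom V ((MonoidAlgebra.lift ℂ (Module.End ℂ V) G rep).toRingHom)
    haveI : IsScalarTower ℂ (MonoidAlgebra ℂ G) V := by
      constructor
      intro r a v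
      show ((MonoidAlgebra.lift ℂ (Module.End ℂ V) G rep) (r • a)) v
          = r • ((MonoidAlgebra.lift ℂ (Module.End ℂ V) G rep) a) v
      rw [map_smul, LinearMap.smul_apply]
    have hsmul : ∀ (g : G) (v : V), MonoidAlgebra.single g (1:ℂ) • v = ρ g v := by
      intro g v
      show ((MonoidAlgebra.lift ℂ (Module.End ℂ V) G rep) (MonoidAlgebra.single g (1:ℂ))) v
          = ρ g v
      rw [MonoidAlgebra.lift_single, one_smul]
      rfl
    exact completelyReducible_of_diag ρ hsmul Z hZ fun g =>
      (isDiagonalizable_iff_iSup_eigenspace_eq_top _).mp (hdiag g)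
end

section
/- Let Q be a finite quandle and ρ : Q → GL(V) a quandle representation on a finite-dimensional complex vector space V. Then ρ is completely reducible if and only if ρ(x) is diagonalizable for every x ∈ Q. -/
open Quandles

/-- The quandle representation `ρ` is completely reducible: `V` is the internal direct
sum of a family of irreducible subrepresentations. -/
def CompletelyReducibleQuandleRep {Q : Type} [Quandle Q] {V : Type} [AddCommGroup V]
    [Module ℂ V] (ρ : Q → V ≃ₗ[ℂ] V) : Prop :=
  ∃ (ι : Type) (W : ι → Submodule ℂ V),
    iSupIndep W ∧ iSup W = ⊤ ∧
    ∀ i : ι, IsSubrep ρ (W i) ∧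
      ∀ U : Submodule ℂ V, U ≤ W i → IsSubrep ρ U → U = ⊥ ∨ U = W i

set_option maxHeartbeats 1600000
set_option linter.unusedSectionVars false



private lemma modDisjoint {α : Type*} [Lattice α] [IsModularLattice α] [OrderBot α]
    {a b c W : α} (ha : a ≤ W) (hb : b ≤ W) (hab : Disjoint a b) (hWc : Disjoint W c) :
    Disjoint a (b ⊔ c) := by
  have h1 : (b ⊔ c) ⊓ W = b := by
    rw [sup_inf_assoc_of_le c hb, inf_comm c W, hWc.eq_bot, sup_bot_eq]
  rw [disjoint_iff]
  calc a ⊓ (b ⊔ c) = (a ⊓ W) ⊓ (b ⊔ c) := by rw [inf_eq_left.mpr ha]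
    _ = a ⊓ ((b ⊔ c) ⊓ W) := by rw [inf_assoc, inf_comm W]
    _ = a ⊓ b := by rw [h1]
    _ = ⊥ := hab.eq_bot

section Dietzmann

variable {G : Type*} [Group G]

private lemma conj_list_prod (t : G) (l : List G) :
    t * l.prod = (l.map fun s => t * s * t⁻¹).prod * t := by
  induction l with
  | nil => simp
  | cons s l ih =>
      rw [List.prod_cons, List.map_cons, List.prod_cons]
      calc t * (s * l.prod) = (t * s * t⁻¹) * (t * l.prod) := by group
        _ = (t * s * t⁻¹) * ((l.map fun s => t * s * t⁻¹).prod * t) := by rw [ih]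
        _ = (t * s * t⁻¹) * (l.map fun s => t * s * t⁻¹).prod * t := (mul_assoc _ _ _).symm

private lemma count_le_count_map [DecidableEq G] (t : G) (c : G → G) (hc : c t = t)
    (l : List G) : l.count t ≤ (l.map c).count t := by
  induction l with
  | nil => simp
  | cons s l ih =>
      rcases eq_or_ne s t with rfl | hs
      · rw [List.map_cons, hc, List.count_cons_self, List.count_cons_self]; omega
      · rw [List.map_cons, List.count_cons_of_ne hs]
        exact ih.trans (by rw [List.count_cons]; exact Nat.le_add_right _ _)

private lemma extract_pow [DecidableEq G] (T : Set G)
    (hconj : ∀ s ∈ T, ∀ t ∈ T, s * t * s⁻¹ ∈ T) (t : G) (ht : t ∈ T) :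
    ∀ (k : ℕ) (l : List G), (∀ y ∈ l, y ∈ T) → k ≤ l.count t →
      ∃ l' : List G, (∀ y ∈ l', y ∈ T) ∧ l'.length + k = l.length ∧ l.prod = l'.prod * t ^ k := by
  intro k
  induction k with
  | zero => intro l hl _; exact ⟨l, hl, rfl, by simp⟩
  | succ k ih =>
      intro l hl hcount
      have htl : t ∈ l := by
        rw [← List.count_pos_iff]; omega
      obtain ⟨l₁, l₂, rfl⟩ := List.append_of_mem htl
      set c : G → G := fun s => t * s * t⁻¹ with hc
      have key : (l₁ ++ t :: l₂).prod = (l₁ ++ l₂.map c).prod * t := by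
        rw [List.prod_append, List.prod_cons, List.prod_append, hc, conj_list_prod t l₂,
          ← mul_assoc]
      have hmem : ∀ y ∈ l₁ ++ l₂.map c, y ∈ T := by
        intro y hy
        rcases List.mem_append.mp hy with hy | hy
        · exact hl y (by simp [hy])
        · obtain ⟨z, hz, rfl⟩ := List.mem_map.mp hy
          exact hconj t ht z (hl z (by simp [hz]))
      have hcount' : k ≤ (l₁ ++ l₂.map c).count t := by
        have h1 := count_le_count_map t c (by simp [hc]) l₂
        rw [List.count_append] at hcount ⊢
        rw [List.count_cons_self] at hcount
        omega
      obtain ⟨l', hl', hlen, hprod⟩ := ih (l₁ ++ l₂.map c) hmem hcount'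
      refine ⟨l', hl', ?_, ?_⟩
      · have h2 : (l₁ ++ l₂.map c).length + 1 = (l₁ ++ t :: l₂).length := by
          simp; omega
        omega
      · rw [key, hprod, mul_assoc, ← pow_succ]

private lemma reduce_length [DecidableEq G] (T : Finset G) (M : ℕ) (hM : 0 < M)
    (h1 : ∀ t ∈ T, t ^ M = 1)
    (hconj : ∀ s ∈ (T : Set G), ∀ t ∈ (T : Set G), s * t * s⁻¹ ∈ (T : Set G)) :
    ∀ l : List G, (∀ y ∈ l, y ∈ (T : Set G)) →
      ∃ l' : List G, (∀ y ∈ l', y ∈ (T : Set G)) ∧ l'.length ≤ (M - 1) * T.card ∧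
        l'.prod = l.prod := by
  have main : ∀ (n : ℕ) (l : List G), l.length = n → (∀ y ∈ l, y ∈ (T : Set G)) →
      ∃ l' : List G, (∀ y ∈ l', y ∈ (T : Set G)) ∧ l'.length ≤ (M - 1) * T.card ∧
        l'.prod = l.prod := by
    intro n
    induction n using Nat.strong_induction_on with
    | _ n ihn =>
      intro l hln hl
      by_cases hle : l.length ≤ (M - 1) * T.card
      · exact ⟨l, hl, hle, rfl⟩
      · have hsub : (l : Multiset G).toFinset ⊆ T := by
          intro x hx
          exact hl x (by simpa using hx)
        have hsum : ∑ t ∈ T, l.count t = l.length := by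
          have h0 : ∑ a ∈ (l : Multiset G).toFinset, (l : Multiset G).count a =
              Multiset.card (l : Multiset G) := Multiset.toFinset_sum_count_eq _
          have h2 : ∑ t ∈ T, (l : Multiset G).count t =
              ∑ a ∈ (l : Multiset G).toFinset, (l : Multiset G).count a := by
            refine (Finset.sum_subset hsub ?_).symm
            intro x _ hx
            rw [Multiset.count_eq_zero]
            simpa using hx
          simpa using h2.trans h0
        have hex : ∃ t ∈ T, M ≤ l.count t := by
          by_contra hcon
          push_neg at hcon
          have hb : ∑ t ∈ T, l.count t ≤ ∑ _t ∈ T, (M - 1) :=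
            Finset.sum_le_sum fun t htT => by have := hcon t htT; omega
          rw [hsum, Finset.sum_const, smul_eq_mul, Nat.mul_comm] at hb
          omega
        obtain ⟨t, htT, htc⟩ := hex
        obtain ⟨l₂, hl₂, hlen₂, hprod₂⟩ :=
          extract_pow (T : Set G) hconj t htT M l hl htc
        have hlt : l₂.length < n := by omega
        obtain ⟨l', hl', hlen', hprod'⟩ := ihn l₂.length hlt l₂ rfl hl₂
        exact ⟨l', hl', hlen', by rw [hprod', hprod₂, h1 t htT, mul_one]⟩
  exact fun l => main l.length l rfl

private lemma finite_bounded_prods {H : Type*} [Monoid H] (T : Set H) (hT : T.Finite) :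
    ∀ n : ℕ, {g : H | ∃ l : List H, (∀ y ∈ l, y ∈ T) ∧ l.length ≤ n ∧ l.prod = g}.Finite := by
  intro n
  induction n with
  | zero =>
      refine Set.Finite.subset (Set.finite_singleton 1) ?_
      rintro g ⟨l, _, hlen, rfl⟩
      have : l = [] := List.length_eq_zero_iff.mp (Nat.le_zero.mp hlen)
      simp [this]
  | succ n ih =>
      refine Set.Finite.subset (Set.Finite.insert 1 (hT.biUnion (fun t _ =>
        ih.image (fun g => t * g)))) ?_
      rintro g ⟨l, hl, hlen, rfl⟩
      cases l with
      | nil => simp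
      | cons t l =>
          refine Set.mem_insert_iff.mpr (Or.inr ?_)
          refine Set.mem_biUnion (hl t (by simp)) ?_
          exact ⟨l.prod, ⟨l, fun y hy => hl y (by simp [hy]), by simpa using hlen, rfl⟩,
            by simp⟩

private lemma dietzmann (T : Set G) (hT : T.Finite) (M : ℕ) (hM : 0 < M)
    (h1 : ∀ t ∈ T, t ^ M = 1) (hconj : ∀ s ∈ T, ∀ t ∈ T, s * t * s⁻¹ ∈ T) :
    ((Subgroup.closure T : Subgroup G) : Set G).Finite := by
  classical
  have hinv : ∀ g ∈ Submonoid.closure T, g⁻¹ ∈ Submonoid.closure T := by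
    intro g hg
    induction hg using Submonoid.closure_induction with
    | mem t ht =>
        have hone : t * t ^ (M - 1) = 1 := by
          rw [← pow_succ']
          have hM1 : M - 1 + 1 = M := by omega
          rw [hM1]; exact h1 t ht
        rw [inv_eq_of_mul_eq_one_right hone]
        exact pow_mem (Submonoid.subset_closure ht) _
    | one => simpa using Submonoid.one_mem _
    | mul a b _ _ iha ihb => rw [mul_inv_rev]; exact mul_mem ihb iha
  have hsg : (Subgroup.closure T : Set G) ⊆ (Submonoid.closure T : Set G) := by
    let S : Subgroup G :=
      { toSubmonoid := Submonoid.closure T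
        inv_mem' := fun {g} hg => hinv g hg }
    have hle : Subgroup.closure T ≤ S := (Subgroup.closure_le S).mpr Submonoid.subset_closure
    exact hle
  refine Set.Finite.subset (finite_bounded_prods T hT ((M - 1) * hT.toFinset.card)) ?_
  intro g hg
  obtain ⟨l, hl, hprod⟩ := Submonoid.exists_list_of_mem_closure (hsg hg)
  obtain ⟨l', hl', hlen, hprod'⟩ := reduce_length hT.toFinset M hM
    (fun t ht => h1 t (by simpa using ht))
    (by intro s hs t ht; simp only [Set.Finite.coe_toFinset] at *; exact hconj s hs t ht)
    l (by simpa using hl)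
  exact ⟨l', by simpa using hl', hlen, by rw [hprod', hprod]⟩

end Dietzmann

open Module Polynomial

section DiagLemmas

variable {V : Type} [AddCommGroup V] [Module ℂ V] [FiniteDimensional ℂ V]

private lemma isDiag_iff_iSup_eigenspace (f : V →ₗ[ℂ] V) :
    IsDiagonalizable f ↔ ⨆ μ : ℂ, Module.End.eigenspace f μ = ⊤ := by
  constructor
  · rintro ⟨ι, b, hb⟩
    rw [eq_top_iff, ← b.span_eq, Submodule.span_le]
    rintro v ⟨i, rfl⟩
    obtain ⟨μ, hμ⟩ := hb i
    exact Submodule.mem_iSup_of_mem μ (Module.End.mem_eigenspace_iff.mpr hμ)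
  · intro h
    classical
    have hInt : DirectSum.IsInternal (fun μ : ℂ => Module.End.eigenspace f μ) :=
      (DirectSum.isInternal_submodule_iff_iSupIndep_and_iSup_eq_top _).mpr
        ⟨Module.End.eigenspaces_iSupIndep (f : Module.End ℂ V), h⟩
    let B : (μ : ℂ) → Basis (Basis.ofVectorSpaceIndex ℂ ↥(Module.End.eigenspace f μ)) ℂ
        ↥(Module.End.eigenspace f μ) := fun μ => Basis.ofVectorSpace ℂ _
    refine ⟨_, hInt.collectedBasis B, ?_⟩
    rintro ⟨μ, i⟩
    exact ⟨μ, Module.End.mem_eigenspace_iff.mp (hInt.collectedBasis_mem B ⟨μ, i⟩)⟩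

private lemma isSemisimple_of_isDiag {f : Module.End ℂ V} (h : IsDiagonalizable f) :
    f.IsSemisimple := by
  classical
  obtain ⟨ι, b, hb⟩ := h
  have : Finite ι := Module.Finite.finite_basis b
  cases nonempty_fintype ι
  choose μ hμ using hb
  set s : Finset ℂ := Finset.image μ Finset.univ with hs
  set p : ℂ[X] := ∏ a ∈ s, (X - C a) with hp
  have hsq : Squarefree p := by
    have h2 : (∏ a ∈ s, (X - C (id a))).Separable :=
      separable_prod_X_sub_C_iff'.mpr (fun x _ y _ hxy => hxy)
    simpa [hp] using h2.squarefree
  have hzero : aeval f p = 0 := by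
    apply b.ext
    intro i
    have hmem : μ i ∈ s := Finset.mem_image_of_mem μ (Finset.mem_univ i)
    have hkill : (aeval f (X - C (μ i))) (b i) = 0 := by
      rw [map_sub, aeval_X, aeval_C, LinearMap.sub_apply, Module.algebraMap_end_apply,
        hμ i, sub_self]
    rw [hp, ← Finset.prod_erase_mul s _ hmem, map_mul, Module.End.mul_apply, hkill,
      map_zero, LinearMap.zero_apply]
  exact Module.End.isSemisimple_of_squarefree_aeval_eq_zero hsq hzero

private lemma le_iSup_eigenspace_of_pow_smul (f : Module.End ℂ V) (U : Submodule ℂ V)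
    (hU : ∀ v ∈ U, f v ∈ U) (Mn : ℕ) (hMn : 0 < Mn) (μ : ℂ) (hμ : μ ≠ 0)
    (hpow : ∀ v ∈ U, (f ^ Mn) v = μ • v) : U ≤ ⨆ ν : ℂ, Module.End.eigenspace f ν := by
  set g : Module.End ℂ ↥U := f.restrict hU with hg
  have hker : aeval g (X ^ Mn - C μ) = 0 := by
    apply LinearMap.ext
    rintro ⟨v, hv⟩
    rw [map_sub, map_pow, aeval_X, aeval_C, LinearMap.sub_apply, Module.algebraMap_end_apply,
      LinearMap.zero_apply, hg, Module.End.pow_restrict Mn hU]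
    apply Subtype.ext
    rw [Submodule.coe_sub, ZeroMemClass.coe_zero, LinearMap.restrict_coe_apply,
      SetLike.val_smul, hpow v hv, sub_self]
  have hsq : Squarefree (X ^ Mn - C μ : ℂ[X]) :=
    (separable_X_pow_sub_C μ (Nat.cast_ne_zero.mpr hMn.ne') hμ).squarefree
  have hss : g.IsSemisimple := Module.End.isSemisimple_of_squarefree_aeval_eq_zero hsq hker
  have htop : ⨆ ν : ℂ, Module.End.eigenspace g ν = ⊤ := by
    have h1 := Module.End.iSup_maxGenEigenspace_eq_top g
    simpa only [hss.isFinitelySemisimple.maxGenEigenspace_eq_eigenspace] using h1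
  intro v hv
  have h2 : (⟨v, hv⟩ : ↥U) ∈ ⨆ ν : ℂ, Module.End.eigenspace g ν := htop ▸ Submodule.mem_top
  have h3 : Submodule.map U.subtype (⨆ ν : ℂ, Module.End.eigenspace g ν) ≤
      ⨆ ν : ℂ, Module.End.eigenspace f ν := by
    rw [Submodule.map_iSup]
    refine iSup_mono fun ν => ?_
    rintro x hx
    obtain ⟨⟨w, hw⟩, hmem, rfl⟩ := hx
    rw [SetLike.mem_coe, Module.End.mem_eigenspace_iff] at hmem
    rw [Module.End.mem_eigenspace_iff]
    have h4 := congrArg Subtype.val hmem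
    simpa [hg, LinearMap.restrict_apply, Submodule.subtype_apply] using h4
  exact h3 ⟨⟨v, hv⟩, h2, rfl⟩

end DiagLemmas

section Maschke

open Module

variable {W : Type} [AddCommGroup W] [Module ℂ W] [FiniteDimensional ℂ W]
  (H : Subgroup (W ≃ₗ[ℂ] W))

private def HInvt (H : Subgroup (W ≃ₗ[ℂ] W)) (U : Submodule ℂ W) : Prop :=
  ∀ h ∈ H, ∀ v ∈ U, h v ∈ U

private lemma maschke_compl [Finite ↥H] (U : Submodule ℂ W) (hU : HInvt H U) :
    ∃ C : Submodule ℂ W, HInvt H C ∧ IsCompl U C := by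
  classical
  haveI : Fintype ↥H := Fintype.ofFinite _
  obtain ⟨U', hcompl⟩ := Submodule.exists_isCompl U
  set π₀ : W →ₗ[ℂ] W := U.subtype ∘ₗ (U.projectionOnto U' hcompl) with hπ₀
  have hπ₀mem : ∀ v, π₀ v ∈ U := fun v => ((U.projectionOnto U' hcompl) v).2
  have hπ₀id : ∀ v ∈ U, π₀ v = v := by
    intro v hv
    have := Submodule.linearProjOfIsCompl_apply_left hcompl ⟨v, hv⟩
    rw [hπ₀, LinearMap.comp_apply]
    rw [show ((⟨v, hv⟩ : ↥U) : W) = v from rfl] at this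
    rw [this]
    rfl
  set n : ℂ := (Fintype.card ↥H : ℂ) with hn
  have hn0 : n ≠ 0 := Nat.cast_ne_zero.mpr Fintype.card_ne_zero
  set F : ↥H → (W →ₗ[ℂ] W) := fun h =>
    (((h⁻¹ : ↥H) : W ≃ₗ[ℂ] W) : W →ₗ[ℂ] W) ∘ₗ π₀ ∘ₗ (((h : ↥H) : W ≃ₗ[ℂ] W) : W →ₗ[ℂ] W)
    with hF
  have hFapply : ∀ (h : ↥H) (v : W),
      F h v = ((h⁻¹ : ↥H) : W ≃ₗ[ℂ] W) (π₀ (((h : ↥H) : W ≃ₗ[ℂ] W) v)) := fun h v => rfl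
  set φ : W →ₗ[ℂ] W := n⁻¹ • ∑ h : ↥H, F h with hφ
  have hφapply : ∀ v, φ v = n⁻¹ • ∑ h : ↥H, F h v := by
    intro v
    rw [hφ, LinearMap.smul_apply, LinearMap.sum_apply]
  have hφU : ∀ v, φ v ∈ U := by
    intro v
    rw [hφapply]
    refine Submodule.smul_mem _ _ (Submodule.sum_mem _ fun h _ => ?_)
    rw [hFapply]
    exact hU _ (h⁻¹).2 _ (hπ₀mem _)
  have hφid : ∀ v ∈ U, φ v = v := by
    intro v hv
    have hFv : ∀ h : ↥H, F h v = v := by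
      intro h
      rw [hFapply, hπ₀id _ (hU _ h.2 _ hv)]
      show ((h : ↥H) : W ≃ₗ[ℂ] W).symm (((h : ↥H) : W ≃ₗ[ℂ] W) v) = v
      exact LinearEquiv.symm_apply_apply _ _
    rw [hφapply]
    simp only [hFv, Finset.sum_const, Finset.card_univ]
    rw [← Nat.cast_smul_eq_nsmul ℂ, smul_smul, inv_mul_cancel₀ hn0, one_smul]
  have hequiv : ∀ g : ↥H, ∀ v : W,
      φ (((g : ↥H) : W ≃ₗ[ℂ] W) v) = ((g : ↥H) : W ≃ₗ[ℂ] W) (φ v) := by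
    intro g v
    rw [hφapply, hφapply, map_smul, map_sum]
    congr 1
    refine Fintype.sum_equiv (Equiv.mulRight g) _ _ ?_
    intro h
    rw [hFapply, hFapply]
    have h1 : (((Equiv.mulRight g) h)⁻¹ : ↥H) = g⁻¹ * h⁻¹ := by
      simp [Equiv.mulRight, mul_inv_rev]
    have h2 : ((((Equiv.mulRight g) h) : ↥H) : W ≃ₗ[ℂ] W) v =
        ((h : ↥H) : W ≃ₗ[ℂ] W) (((g : ↥H) : W ≃ₗ[ℂ] W) v) := by
      simp [Equiv.mulRight]
    rw [h1, h2]
    have h3 : (((g⁻¹ * h⁻¹ : ↥H) : W ≃ₗ[ℂ] W)) =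
        ((g⁻¹ : ↥H) : W ≃ₗ[ℂ] W) * ((h⁻¹ : ↥H) : W ≃ₗ[ℂ] W) := rfl
    rw [h3]
    have h4 : ∀ (a b : W ≃ₗ[ℂ] W) (w : W), (a * b) w = a (b w) := fun a b w => rfl
    rw [h4]
    have h5 : ((g⁻¹ : ↥H) : W ≃ₗ[ℂ] W) = (((g : ↥H) : W ≃ₗ[ℂ] W)).symm := rfl
    rw [h5, LinearEquiv.apply_symm_apply]
  refine ⟨LinearMap.ker φ, ?_, ?_, ?_⟩
  · intro h hh v hv
    rw [LinearMap.mem_ker] at hv ⊢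
    have := hequiv ⟨h, hh⟩ v
    simp only [Subtype.coe_mk] at this
    rw [this, hv, map_zero]
  · rw [Submodule.disjoint_def]
    intro v hvU hvK
    rw [LinearMap.mem_ker] at hvK
    rw [← hφid v hvU, hvK]
  · rw [codisjoint_iff, Submodule.eq_top_iff']
    intro x
    have h1 : x = φ x + (x - φ x) := by abel
    have h2 : x - φ x ∈ LinearMap.ker φ := by
      rw [LinearMap.mem_ker, map_sub, hφid _ (hφU x), sub_self]
    exact h1 ▸ Submodule.add_mem_sup (hφU x) h2

private lemma maschke_decomp [Finite ↥H] :
    ∀ (U : Submodule ℂ W), HInvt H U →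
      ∃ (ι : Type) (g : ι → Submodule ℂ W), iSupIndep g ∧ (⨆ i, g i) = U ∧
        ∀ i, HInvt H (g i) ∧
          (∀ U' ≤ g i, HInvt H U' → U' = ⊥ ∨ U' = g i) := by
  have main : ∀ (n : ℕ) (U : Submodule ℂ W), finrank ℂ ↥U = n → HInvt H U →
      ∃ (ι : Type) (g : ι → Submodule ℂ W), iSupIndep g ∧ (⨆ i, g i) = U ∧
        ∀ i, HInvt H (g i) ∧
          (∀ U' ≤ g i, HInvt H U' → U' = ⊥ ∨ U' = g i) := by
    intro n
    induction n using Nat.strong_induction_on with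
    | _ n ihn =>
      intro U hrank hinvt
      by_cases hbot : U = ⊥
      · refine ⟨Empty, Empty.elim, ?_, ?_, fun i => i.elim⟩
        · intro i; exact i.elim
        · rw [iSup_of_empty]; exact hbot.symm
      · -- find a minimal nonzero invariant submodule of U
        have hPex : ∃ m, ∃ U₀ : Submodule ℂ W,
            U₀ ≤ U ∧ HInvt H U₀ ∧ U₀ ≠ ⊥ ∧ finrank ℂ ↥U₀ = m :=
          ⟨finrank ℂ ↥U, U, le_rfl, hinvt, hbot, rfl⟩
        classical
        set m₀ := Nat.find hPex with hm₀
        obtain ⟨U₀, hU₀le, hU₀invt, hU₀ne, hU₀rank⟩ := Nat.find_spec hPex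
        have hU₀min : ∀ U' ≤ U₀, HInvt H U' → U' = ⊥ ∨ U' = U₀ := by
          intro U' hle hinv'
          by_cases h' : U' = ⊥
          · exact Or.inl h'
          · right
            have h1 : m₀ ≤ finrank ℂ ↥U' :=
              Nat.find_le ⟨U', hle.trans hU₀le, hinv', h', rfl⟩
            refine Submodule.eq_of_le_of_finrank_le hle ?_
            rw [hU₀rank]; exact h1
        obtain ⟨C, hCinvt, hcompl⟩ := maschke_compl H U₀ hU₀invt
        set D := C ⊓ U with hD
        have hDinvt : HInvt H D := fun h hh v hv =>
          ⟨hCinvt h hh v hv.1, hinvt h hh v hv.2⟩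
        have hUeq : U₀ ⊔ D = U := by
          rw [hD, ← sup_inf_assoc_of_le C hU₀le, hcompl.codisjoint.eq_top, top_inf_eq]
        have hdisj : Disjoint U₀ D := hcompl.disjoint.mono_right inf_le_left
        have hrankD : finrank ℂ ↥D < n := by
          have h1 := Submodule.finrank_sup_add_finrank_inf_eq U₀ D
          rw [hUeq, hdisj.eq_bot, finrank_bot] at h1
          have h2 : 0 < finrank ℂ ↥U₀ :=
            Nat.pos_of_ne_zero (fun h => hU₀ne (Submodule.finrank_eq_zero.mp h))
          omega
        obtain ⟨ι, g, hind, hsup, hprops⟩ := ihn _ hrankD D rfl hDinvt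
        refine ⟨Option ι, fun o => o.elim U₀ g, ?_, ?_, ?_⟩
        · intro o
          cases o with
          | none =>
              refine Disjoint.mono_right ?_ hdisj
              refine iSup_le fun o' => iSup_le fun hne' => ?_
              cases o' with
              | none => exact absurd rfl hne'
              | some j => exact le_trans (le_iSup g j) hsup.le
          | some i =>
              have hb : (⨆ (o' : Option ι) (_ : o' ≠ some i), o'.elim U₀ g) ≤
                  (⨆ (j : ι) (_ : j ≠ i), g j) ⊔ U₀ := by
                refine iSup_le fun o' => iSup_le fun hne' => ?_
                cases o' with
                | none => exact le_sup_right
                | some j =>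
                    have hj : j ≠ i := fun h => hne' (by rw [h])
                    exact le_sup_of_le_left (le_iSup₂ (f := fun j _ => g j) j hj)
              refine Disjoint.mono_right hb ?_
              have ha : g i ≤ D := le_trans (le_iSup g i) hsup.le
              have hbD : (⨆ (j : ι) (_ : j ≠ i), g j) ≤ D :=
                iSup_le fun j => iSup_le fun _ => le_trans (le_iSup g j) hsup.le
              exact modDisjoint ha hbD (hind i) hdisj.symm
        · rw [iSup_option]
          show U₀ ⊔ ⨆ i, g i = U
          rw [hsup, hUeq]
        · intro o
          cases o with
          | none => exact ⟨hU₀invt, hU₀min⟩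
          | some i => exact hprops i
  exact fun U hU => main (finrank ℂ ↥U) U rfl hU

end Maschke

section MainProof

open Module Polynomial Quandles

variable {Q : Type} [Quandle Q] [Finite Q] {V : Type} [AddCommGroup V] [Module ℂ V]
  [FiniteDimensional ℂ V]

private lemma pow_mem_invariant {f : Module.End ℂ V} {U : Submodule ℂ V}
    (hU : ∀ v ∈ U, f v ∈ U) (k : ℕ) : ∀ v ∈ U, (f ^ k) v ∈ U := by
  induction k with
  | zero => intro v hv; simpa using hv
  | succ k ih =>
      intro v hv
      rw [pow_succ, Module.End.mul_apply]
      exact ih _ (hU v hv)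

private lemma equiv_pow_apply (e : V ≃ₗ[ℂ] V) (k : ℕ) (v : V) :
    (e ^ k) v = ((e : V →ₗ[ℂ] V) ^ k) v := by
  induction k with
  | zero => rfl
  | succ k ih =>
      rw [pow_succ', pow_succ']
      show e ((e ^ k) v) = ((e : V →ₗ[ℂ] V) * (e : V →ₗ[ℂ] V) ^ k) v
      rw [Module.End.mul_apply, ih]
      rfl

/-- A finite-dimensional complex representation `ρ` of a finite quandle `Q` is
completely reducible if and only if `ρ(x)` is diagonalizable for every `x ∈ Q`. -/
theorem quandle_rep_completelyReducible_iff_diagonalizable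
    {Q : Type} [Quandle Q] [Finite Q] {V : Type} [AddCommGroup V] [Module ℂ V]
    [FiniteDimensional ℂ V] (ρ : Q → V ≃ₗ[ℂ] V) (hrep : IsQuandleRep ρ) :
    CompletelyReducibleQuandleRep ρ ↔ ∀ x : Q, IsDiagonalizable (ρ x : V →ₗ[ℂ] V) := by
  classical
  set M : ℕ := Nat.card (Equiv.Perm Q) with hM
  have hMpos : 0 < M := Nat.card_pos
  have hmulapply : ∀ (a b : V ≃ₗ[ℂ] V) (v : V), (a * b) v = a (b v) := fun _ _ _ => rfl
  have hact : ∀ x y : Q, ρ x * ρ y = ρ (x ◃ y) * ρ x := by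
    intro x y; rw [hrep x y]; group
  have hiter : ∀ (x : Q) (k : ℕ) (y : Q),
      (ρ x) ^ k * ρ y = ρ ((Rack.act' x ^ k) y) * (ρ x) ^ k := by
    intro x k
    induction k with
    | zero => intro y; simp
    | succ k ih =>
        intro y
        have hperm : ((Rack.act' x ^ (k + 1)) y) = x ◃ ((Rack.act' x ^ k) y) := by
          rw [pow_succ', Equiv.Perm.mul_apply, Rack.act'_apply]
        rw [pow_succ', mul_assoc, ih y, ← mul_assoc, hact x _, hperm, mul_assoc, ← pow_succ']
  have hcommME : ∀ x y : Q, (ρ x) ^ M * ρ y = ρ y * (ρ x) ^ M := by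
    intro x y
    have h1 := hiter x M y
    rwa [pow_card_eq_one', Equiv.Perm.one_apply] at h1
  -- End-level power
  set σ : Q → Module.End ℂ V := fun x => ((ρ x : V →ₗ[ℂ] V)) ^ M with hσ
  have hσapply : ∀ x v, σ x v = (ρ x ^ M) v := by
    intro x v; rw [hσ, equiv_pow_apply]
  have hσcomm_ρ : ∀ x y (v : V), ρ y (σ x v) = σ x (ρ y v) := by
    intro x y v
    rw [hσapply, hσapply, ← hmulapply, ← hcommME, hmulapply]
  have hσcomm_ρL : ∀ x y, Commute (σ x) ((ρ y : V →ₗ[ℂ] V)) := by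
    intro x y
    apply LinearMap.ext
    intro v
    show σ x (ρ y v) = ρ y (σ x v)
    rw [hσcomm_ρ]
  have hσcommEnd : ∀ x y, Commute (σ x) (σ y) := by
    intro x y
    have h1 : σ y = ((ρ y : V →ₗ[ℂ] V)) ^ M := rfl
    rw [h1]
    exact (hσcomm_ρL x y).pow_right M
  constructor
  · -- completely reducible → diagonalizable
    rintro ⟨ι, Wf, hind, hsup, hmin⟩ x
    rw [isDiag_iff_iSup_eigenspace]
    rw [eq_top_iff, ← hsup]
    refine iSup_le fun i => ?_
    by_cases hbi : Wf i = ⊥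
    · rw [hbi]; exact bot_le
    · haveI : Nontrivial ↥(Wf i) := Submodule.nontrivial_iff_ne_bot.mpr hbi
      have hWinvρ : ∀ v ∈ Wf i, (ρ x : V →ₗ[ℂ] V) v ∈ Wf i := fun v hv => (hmin i).1 x v hv
      have hWinv : ∀ v ∈ Wf i, σ x v ∈ Wf i := fun v hv =>
        pow_mem_invariant hWinvρ M v hv
      set g := (σ x).restrict hWinv with hg
      obtain ⟨μ, hμeig⟩ := Module.End.exists_eigenvalue g
      obtain ⟨w, hw⟩ := hμeig.exists_hasEigenvector
      have hwval : σ x (w : V) = μ • (w : V) := by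
        have h1 := Module.End.mem_eigenspace_iff.mp hw.1
        have h2 := congrArg Subtype.val h1
        rw [hg] at h2
        simpa [LinearMap.restrict_apply] using h2
      have hUesub : IsSubrep ρ (Wf i ⊓ Module.End.eigenspace (σ x) μ) := by
        intro y v hv
        rw [Submodule.mem_inf] at hv ⊢
        obtain ⟨hv1, hv2⟩ := hv
        refine ⟨(hmin i).1 y v hv1, ?_⟩
        rw [Module.End.mem_eigenspace_iff] at hv2 ⊢
        rw [← hσcomm_ρ x y v, hv2, map_smul]
      have hUene : (Wf i ⊓ Module.End.eigenspace (σ x) μ) ≠ ⊥ := by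
        rw [Submodule.ne_bot_iff]
        refine ⟨(w : V), Submodule.mem_inf.mpr
          ⟨w.2, Module.End.mem_eigenspace_iff.mpr hwval⟩, ?_⟩
        simpa using hw.2
      have hUeq : (Wf i ⊓ Module.End.eigenspace (σ x) μ) = Wf i :=
        ((hmin i).2 _ inf_le_left hUesub).resolve_left hUene
      have hscal : ∀ v ∈ Wf i, ((ρ x : V →ₗ[ℂ] V) ^ M) v = μ • v := by
        intro v hv
        have h1 : v ∈ Wf i ⊓ Module.End.eigenspace (σ x) μ := by rw [hUeq]; exact hv
        exact Module.End.mem_eigenspace_iff.mp (Submodule.mem_inf.mp h1).2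
      have hμ0 : μ ≠ 0 := by
        intro h0
        have h1 : σ x (w : V) = 0 := by rw [hwval, h0, zero_smul]
        have h2 : (ρ x ^ M) (w : V) = 0 := by rw [← hσapply]; exact h1
        have h3 : (w : V) = 0 := by simpa using h2
        exact (by simpa using hw.2 : (w : V) ≠ 0) h3
      exact le_iSup_eigenspace_of_pow_smul (ρ x : V →ₗ[ℂ] V) (Wf i) hWinvρ M hMpos μ hμ0 hscal
  · -- diagonalizable → completely reducible
    intro hdiag
    have hsemi : ∀ x, Module.End.IsSemisimple (R := ℂ) (M := V) (ρ x : V →ₗ[ℂ] V) :=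
      fun x => isSemisimple_of_isDiag (hdiag x)
    have hσss : ∀ x, (σ x).IsSemisimple := fun x => (hsemi x).pow M
    have hσeig : ∀ x ν, (σ x).maxGenEigenspace ν = (σ x).eigenspace ν :=
      fun x => (hσss x).isFinitelySemisimple.maxGenEigenspace_eq_eigenspace
    set Wfam : (Q → ℂ) → Submodule ℂ V :=
      fun χ => ⨅ x, (σ x).maxGenEigenspace (χ x) with hWfam
    have htop : ⨆ χ : Q → ℂ, Wfam χ = ⊤ :=
      Module.End.iSup_iInf_maxGenEigenspace_eq_top_of_iSup_maxGenEigenspace_eq_top_of_commute σ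
        (fun x y _ => hσcommEnd x y) (fun x => Module.End.iSup_maxGenEigenspace_eq_top _)
    have hindep : iSupIndep Wfam :=
      Module.End.independent_iInf_maxGenEigenspace_of_forall_mapsTo σ
        (fun i j φ => Module.End.mapsTo_maxGenEigenspace_of_comm (hσcommEnd j i) φ)
    have hWsubrep : ∀ χ, IsSubrep ρ (Wfam χ) := by
      intro χ y v hv
      rw [hWfam, Submodule.mem_iInf]
      intro x
      have h1 : v ∈ (σ x).maxGenEigenspace (χ x) := (Submodule.mem_iInf _).mp hv x
      exact Module.End.mapsTo_maxGenEigenspace_of_comm (hσcomm_ρL x y) (χ x) h1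
    have hWscal : ∀ χ, ∀ x, ∀ v ∈ Wfam χ, σ x v = χ x • v := by
      intro χ x v hv
      have h1 : v ∈ (σ x).eigenspace (χ x) := by
        rw [← hσeig]; exact (Submodule.mem_iInf _).mp hv x
      exact Module.End.mem_eigenspace_iff.mp h1
    -- per-χ decomposition
    have perchi : ∀ χ : Q → ℂ, ∃ (ι : Type) (g : ι → Submodule ℂ V),
        iSupIndep g ∧ (⨆ i, g i) = Wfam χ ∧ ∀ i, IsSubrep ρ (g i) ∧
          (∀ U ≤ g i, IsSubrep ρ U → U = ⊥ ∨ U = g i) := by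
      intro χ
      by_cases hWbot : Wfam χ = ⊥
      · exact ⟨Empty, Empty.elim, (fun i => i.elim), by rw [iSup_of_empty, hWbot],
          fun i => i.elim⟩
      obtain ⟨v₀, hv₀mem, hv₀ne⟩ := Submodule.exists_mem_ne_zero_of_ne_bot hWbot
      have hχ0 : ∀ x, χ x ≠ 0 := by
        intro x h0
        have h1 : σ x v₀ = 0 := by rw [hWscal χ x v₀ hv₀mem, h0, zero_smul]
        have h2 : (ρ x ^ M) v₀ = 0 := by rw [← hσapply]; exact h1
        exact hv₀ne (by simpa using h2)
      have hmapW : ∀ x, Submodule.map (ρ x : V →ₗ[ℂ] V) (Wfam χ) = Wfam χ := by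
        intro x
        have hle : Submodule.map (ρ x : V →ₗ[ℂ] V) (Wfam χ) ≤ Wfam χ := by
          rintro _ ⟨v, hv, rfl⟩
          exact hWsubrep χ x v hv
        refine Submodule.eq_of_le_of_finrank_le hle ?_
        exact (LinearEquiv.finrank_eq
          ((Wfam χ).equivMapOfInjective _ (ρ x).injective)).le
      have hχact : ∀ x y, χ (x ◃ y) = χ y := by
        intro x y
        have h2 : (ρ (x ◃ y)) ^ M = ρ x * (ρ y) ^ M * (ρ x)⁻¹ := by
          rw [hrep x y, conj_pow]
        obtain ⟨w, hwW, hwv⟩ : ∃ w ∈ Wfam χ, ρ x w = v₀ := by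
          have h3 : v₀ ∈ Submodule.map (ρ x : V →ₗ[ℂ] V) (Wfam χ) := by
            rw [hmapW x]; exact hv₀mem
          obtain ⟨w, hw, hwv⟩ := h3
          exact ⟨w, hw, hwv⟩
        have h4 : (ρ (x ◃ y) ^ M) v₀ = χ y • v₀ := by
          have h5 : ((ρ x)⁻¹ : V ≃ₗ[ℂ] V) v₀ = w := by
            have : ρ x w = v₀ := hwv
            exact (LinearEquiv.symm_apply_eq (ρ x)).mpr this.symm
          rw [h2, hmulapply, hmulapply, h5]
          have h6 : (ρ y ^ M) w = χ y • w := by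
            rw [← hσapply]; exact hWscal χ y w hwW
          rw [h6, map_smul, hwv]
        have h7 : (ρ (x ◃ y) ^ M) v₀ = χ (x ◃ y) • v₀ := by
          rw [← hσapply]; exact hWscal χ (x ◃ y) v₀ hv₀mem
        have h8 : χ (x ◃ y) • v₀ = χ y • v₀ := by rw [← h7, h4]
        exact smul_left_injective ℂ hv₀ne h8
      -- the restricted automorphisms
      set r : Q → (↥(Wfam χ) ≃ₗ[ℂ] ↥(Wfam χ)) := fun x =>
        ((ρ x).submoduleMap (Wfam χ)).trans (LinearEquiv.ofEq _ _ (hmapW x)) with hr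
      have hrapply : ∀ x (v : ↥(Wfam χ)), ((r x v : ↥(Wfam χ)) : V) = ρ x (v : V) :=
        fun x v => rfl
      -- scalar roots depending only on the value of χ
      have hccex : ∀ μ : ℂ, ∃ z : ℂ, z ^ M = μ := fun μ =>
        IsAlgClosed.exists_pow_nat_eq μ hMpos
      choose cc hcc using hccex
      set c : Q → ℂ := fun x => cc (χ x) with hcdef
      have hcpow : ∀ x, (c x) ^ M = χ x := fun x => hcc (χ x)
      have hc0 : ∀ x, c x ≠ 0 := by
        intro x h0
        exact hχ0 x (by rw [← hcpow x, h0, zero_pow hMpos.ne'])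
      have hcact : ∀ x y, c (x ◃ y) = c y := by
        intro x y
        rw [hcdef]
        exact congrArg cc (hχact x y)
      set sc : Q → (↥(Wfam χ) ≃ₗ[ℂ] ↥(Wfam χ)) := fun x =>
        DistribMulAction.toModuleAut ℂ ↥(Wfam χ) ((Units.mk0 (c x) (hc0 x))⁻¹) with hsc
      have hscapply : ∀ x (v : ↥(Wfam χ)), sc x v = ((c x)⁻¹ : ℂ) • v := by
        intro x v
        rw [hsc]
        show ((Units.mk0 (c x) (hc0 x))⁻¹ : ℂˣ) • v = ((c x)⁻¹ : ℂ) • v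
        rw [Units.smul_def]
        congr 1
      set τ : Q → (↥(Wfam χ) ≃ₗ[ℂ] ↥(Wfam χ)) := fun x => sc x * r x with hτ
      have hmulapplyW : ∀ (a b : ↥(Wfam χ) ≃ₗ[ℂ] ↥(Wfam χ)) v, (a * b) v = a (b v) :=
        fun _ _ _ => rfl
      have hτapply : ∀ x (v : ↥(Wfam χ)), τ x v = ((c x)⁻¹ : ℂ) • r x v := by
        intro x v
        rw [hτ]
        show (sc x * r x) v = _
        rw [hmulapplyW, hscapply]
      have hrrel : ∀ x y (v : ↥(Wfam χ)), r (x ◃ y) (r x v) = r x (r y v) := by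
        intro x y v
        apply Subtype.ext
        rw [hrapply, hrapply, hrapply, hrapply]
        have h1 := DFunLike.congr_fun (hact x y) (v : V)
        rw [hmulapply, hmulapply] at h1
        exact h1.symm
      have hτrel : ∀ x y, τ (x ◃ y) * τ x = τ x * τ y := by
        intro x y
        apply LinearEquiv.ext
        intro v
        simp only [hmulapplyW, hτapply, hscapply, map_smul, smul_smul, hcact x y]
        rw [hrrel, mul_comm]
      have hrpow : ∀ x (k : ℕ) (v : ↥(Wfam χ)),
          (((r x) ^ k) v : V) = ((ρ x : V →ₗ[ℂ] V) ^ k) (v : V) := by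
        intro x k
        induction k with
        | zero => intro v; rfl
        | succ k ih =>
            intro v
            rw [pow_succ', pow_succ', hmulapplyW, hrapply, ih, Module.End.mul_apply]
            rfl
      have hτpowsmul : ∀ x (k : ℕ) (v : ↥(Wfam χ)),
          ((τ x) ^ k) v = (((c x)⁻¹ : ℂ)) ^ k • ((r x) ^ k) v := by
        intro x k
        induction k with
        | zero => intro v; simp
        | succ k ih =>
            intro v
            rw [pow_succ', pow_succ', pow_succ', hmulapplyW, ih, hτapply, map_smul,
              smul_smul, hmulapplyW]
      have hτM : ∀ x, (τ x) ^ M = 1 := by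
        intro x
        apply LinearEquiv.ext
        intro v
        rw [hτpowsmul]
        apply Subtype.ext
        show ((((c x)⁻¹ : ℂ) ^ M • ((r x) ^ M) v : ↥(Wfam χ)) : V) = ((1 : ↥(Wfam χ) ≃ₗ[ℂ] ↥(Wfam χ)) v : V)
        rw [SetLike.val_smul, hrpow]
        have h1 : ((ρ x : V →ₗ[ℂ] V) ^ M) (v : V) = χ x • (v : V) :=
          hWscal χ x (v : V) v.2
        rw [h1, smul_smul, inv_pow, hcpow, inv_mul_cancel₀ (hχ0 x), one_smul]
        rfl
      set T : Set (↥(Wfam χ) ≃ₗ[ℂ] ↥(Wfam χ)) := Set.range τ with hT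
      have hTconj : ∀ s ∈ T, ∀ t ∈ T, s * t * s⁻¹ ∈ T := by
        rintro _ ⟨x, rfl⟩ _ ⟨y, rfl⟩
        refine ⟨x ◃ y, ?_⟩
        rw [← hτrel x y, mul_inv_cancel_right]
      have hTpow : ∀ t ∈ T, t ^ M = 1 := by rintro _ ⟨x, rfl⟩; exact hτM x
      set Hgp : Subgroup (↥(Wfam χ) ≃ₗ[ℂ] ↥(Wfam χ)) := Subgroup.closure T with hHgp
      haveI hHfin : Finite ↥Hgp :=
        (dietzmann T (Set.finite_range τ) M hMpos hTpow hTconj).to_subtype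
      have hgen_of_inv : ∀ (U' : Submodule ℂ ↥(Wfam χ)),
          (∀ x, ∀ v ∈ U', r x v ∈ U') → HInvt Hgp U' := by
        intro U' hrU
        have hτU : ∀ x, ∀ v ∈ U', τ x v ∈ U' := by
          intro x v hv
          rw [hτapply]
          exact Submodule.smul_mem _ _ (hrU x v hv)
        have hτkU : ∀ x (k : ℕ), ∀ v ∈ U', ((τ x) ^ k) v ∈ U' := by
          intro x k
          induction k with
          | zero => intro v hv; simpa using hv
          | succ k ih =>
              intro v hv
              rw [pow_succ', hmulapplyW]
              exact hτU x _ (ih v hv)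
        intro h hh
        refine (Subgroup.closure_induction
          (p := fun g _ => (∀ v ∈ U', g v ∈ U') ∧ (∀ v ∈ U', g⁻¹ v ∈ U'))
          ?_ ?_ ?_ ?_ hh).1
        · rintro _ ⟨x, rfl⟩
          refine ⟨hτU x, ?_⟩
          have hinv : (τ x)⁻¹ = (τ x) ^ (M - 1) := by
            have hone : τ x * (τ x) ^ (M - 1) = 1 := by
              rw [← pow_succ']
              have hM1 : M - 1 + 1 = M := by omega
              rw [hM1]; exact hτM x
            exact inv_eq_of_mul_eq_one_right hone
          rw [hinv]
          exact hτkU x (M - 1)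
        · exact ⟨fun v hv => by simpa using hv, fun v hv => by simpa using hv⟩
        · rintro a b _ _ ⟨ha1, ha2⟩ ⟨hb1, hb2⟩
          refine ⟨fun v hv => ?_, fun v hv => ?_⟩
          · rw [hmulapplyW]; exact ha1 _ (hb1 v hv)
          · rw [mul_inv_rev, hmulapplyW]; exact hb2 _ (ha2 v hv)
        · rintro g _ ⟨h1, h2⟩
          exact ⟨h2, by simpa using h1⟩
      have hinv_of_H : ∀ (U' : Submodule ℂ ↥(Wfam χ)), HInvt Hgp U' →
          (∀ x, ∀ v ∈ U', r x v ∈ U') := by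
        intro U' hHU x v hv
        have hτx : τ x ∈ Hgp := Subgroup.subset_closure ⟨x, rfl⟩
        have h1 : τ x v ∈ U' := hHU _ hτx v hv
        have h2 : r x v = (c x) • τ x v := by
          rw [hτapply, smul_smul, mul_inv_cancel₀ (hc0 x), one_smul]
        rw [h2]
        exact Submodule.smul_mem _ _ h1
      obtain ⟨ι, g, hind, hsup, hprops⟩ :=
        maschke_decomp Hgp ⊤ (fun h _ v _ => Submodule.mem_top)
      refine ⟨ι, fun i => Submodule.map (Wfam χ).subtype (g i), ?_, ?_, ?_⟩
      · intro i
        have h1 := hind i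
        rw [disjoint_iff] at h1 ⊢
        have h2 : (⨆ (j : ι) (_ : j ≠ i), Submodule.map (Wfam χ).subtype (g j)) =
            Submodule.map (Wfam χ).subtype (⨆ (j : ι) (_ : j ≠ i), g j) := by
          rw [Submodule.map_iSup]
          exact iSup_congr fun j => by rw [Submodule.map_iSup]
        rw [h2, ← Submodule.map_inf _ (Wfam χ).injective_subtype, h1, Submodule.map_bot]
      · rw [← Submodule.map_iSup, hsup, Submodule.map_top, Submodule.range_subtype]
      · intro i
        constructor
        · rintro x _ ⟨v, hv, rfl⟩
          have h1 : r x v ∈ g i := hinv_of_H (g i) (hprops i).1 x v hv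
          exact ⟨r x v, h1, (hrapply x v)⟩
        · intro U hle hUsub
          set U' : Submodule ℂ ↥(Wfam χ) := Submodule.comap (Wfam χ).subtype U with hU'
          have hUW : U ≤ Wfam χ := le_trans hle (Submodule.map_subtype_le _ _)
          have hmapU' : Submodule.map (Wfam χ).subtype U' = U := by
            rw [hU', Submodule.map_comap_subtype, inf_eq_right.mpr hUW]
          have hle' : U' ≤ g i := by
            intro v hv
            have h3 : (v : V) ∈ Submodule.map (Wfam χ).subtype (g i) := hle hv
            obtain ⟨w, hw, hwv⟩ := h3
            have h4 : w = v := Subtype.ext hwv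
            rwa [← h4]
          have hU'H : HInvt Hgp U' := by
            refine hgen_of_inv U' ?_
            intro x v hv
            show (Wfam χ).subtype (r x v) ∈ U
            rw [Submodule.subtype_apply, hrapply]
            exact hUsub x _ hv
          rcases (hprops i).2 U' hle' hU'H with h | h
          · left; rw [← hmapU', h, Submodule.map_bot]
          · right; rw [← hmapU', h]
    choose ιf gf hindf hsupf hpropf using perchi
    refine ⟨(χ : Q → ℂ) × ιf χ, fun p => gf p.1 p.2, ?_, ?_, ?_⟩
    · rintro ⟨χ, i⟩
      have hb : (⨆ (p : (χ : Q → ℂ) × ιf χ) (_ : p ≠ ⟨χ, i⟩), gf p.1 p.2) ≤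
          (⨆ (j : ιf χ) (_ : j ≠ i), gf χ j) ⊔ (⨆ (χ' : Q → ℂ) (_ : χ' ≠ χ), Wfam χ') := by
        refine iSup_le fun p => iSup_le fun hne => ?_
        rcases p with ⟨χ', j⟩
        by_cases hc : χ' = χ
        · subst hc
          have hj : j ≠ i := fun h => hne (by rw [h])
          exact le_sup_of_le_left (le_iSup₂ (f := fun j _ => gf χ' j) j hj)
        · refine le_sup_of_le_right ?_
          refine le_trans (le_trans (le_iSup (gf χ') j) (hsupf χ').le) ?_
          exact le_iSup₂ (f := fun χ'' _ => Wfam χ'') χ' hc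
      refine Disjoint.mono_right hb ?_
      refine modDisjoint ?_ ?_ (hindf χ i) (hindep χ)
      · exact le_trans (le_iSup (gf χ) i) (hsupf χ).le
      · exact iSup_le fun j => iSup_le fun _ => le_trans (le_iSup (gf χ) j) (hsupf χ).le
    · rw [iSup_sigma]
      simp_rw [hsupf]
      exact htop
    · rintro ⟨χ, i⟩
      exact hpropf χ i

end MainProof
end

section
/- Let Q be a finite quandle and ρ : Q → GL(V) an irreducible quandle representation on a finite-dimensional complex vector space V. Then ρ(x) is diagonalizable for every x ∈ Q. -/
open Quandles

/-- An endomorphism whose eigenspaces span is diagonalizable. -/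
lemma isDiagonalizable_of_iSup_eigenspace_eq_top {V : Type} [AddCommGroup V] [Module ℂ V]
    [FiniteDimensional ℂ V] (f : V →ₗ[ℂ] V)
    (h : ⨆ μ : ℂ, Module.End.eigenspace f μ = ⊤) : IsDiagonalizable f := by
  have hind := Module.End.eigenspaces_iSupIndep f
  have hint : DirectSum.IsInternal (fun μ : ℂ => Module.End.eigenspace f μ) :=
    (DirectSum.isInternal_submodule_iff_iSupIndep_and_iSup_eq_top _).mpr ⟨hind, h⟩
  let v : ∀ μ : ℂ, Module.Basis (Module.Free.ChooseBasisIndex ℂ (Module.End.eigenspace f μ)) ℂ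
      (Module.End.eigenspace f μ) := fun μ => Module.Free.chooseBasis ℂ _
  refine ⟨_, hint.collectedBasis v, fun i => ⟨i.1, ?_⟩⟩
  exact Module.End.mem_eigenspace_iff.mp (hint.collectedBasis_mem v i)

/-- For an irreducible finite-dimensional complex representation `ρ` of a finite
quandle `Q`, every `ρ(x)` is diagonalizable. -/
theorem irreducible_quandle_rep_diagonalizable
    {Q : Type} [Quandle Q] [Finite Q] {V : Type} [AddCommGroup V] [Module ℂ V]
    [FiniteDimensional ℂ V] (ρ : Q → V ≃ₗ[ℂ] V) (hrep : IsQuandleRep ρ)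
    (hirr : ∀ W : Submodule ℂ V, IsSubrep ρ W → W = ⊥ ∨ W = ⊤) :
    ∀ x : Q, IsDiagonalizable (ρ x : V →ₗ[ℂ] V) := by
  intro x
  by_cases hV : Subsingleton V
  · exact ⟨Empty, Module.Basis.empty V, fun i => i.elim⟩
  haveI : Nontrivial V := not_subsingleton_iff_nontrivial.mp hV
  -- the left translation has finite order n > 0
  set e : Equiv.Perm Q := Rack.act' x with he
  set n : ℕ := orderOf e with hn
  have hnpos : 0 < n := orderOf_pos e
  have hen : e ^ n = 1 := pow_orderOf_eq_one e
  -- ρ ((e^k) y) = (ρ x)^k * ρ y * ((ρ x)^k)⁻¹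
  have key : ∀ (k : ℕ) (y : Q), ρ ((e ^ k) y) = (ρ x) ^ k * ρ y * ((ρ x) ^ k)⁻¹ := by
    intro k
    induction k with
    | zero => intro y; simp
    | succ k ih =>
      intro y
      have : (e ^ (k + 1)) y = x ◃ ((e ^ k) y) := by
        rw [pow_succ', Equiv.Perm.mul_apply, he, Rack.act'_apply]
      rw [this, hrep x _, ih y, pow_succ', mul_inv_rev]
      group
  -- (ρ x)^n commutes with all ρ y
  have hcomm : ∀ y : Q, (ρ x) ^ n * ρ y = ρ y * (ρ x) ^ n := by
    intro y
    have := key n y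
    rw [hen] at this
    simp only [Equiv.Perm.one_apply] at this
    calc (ρ x) ^ n * ρ y = ((ρ x) ^ n * ρ y * ((ρ x) ^ n)⁻¹) * (ρ x) ^ n := by group
    _ = ρ y * (ρ x) ^ n := by rw [← this]
  -- (ρ x)^n has an eigenvalue μ whose eigenspace is a nonzero subrep, hence ⊤
  set g : V ≃ₗ[ℂ] V := (ρ x) ^ n with hg
  obtain ⟨μ, hμ⟩ := Module.End.exists_eigenvalue (g : V →ₗ[ℂ] V)
  set W : Submodule ℂ V := Module.End.eigenspace (g : V →ₗ[ℂ] V) μ with hWdef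
  have hsub : IsSubrep ρ W := by
    intro y v hv
    rw [hWdef, Module.End.mem_eigenspace_iff] at hv ⊢
    have hc : g (ρ y v) = ρ y (g v) := by
      have := congrArg (fun t : V ≃ₗ[ℂ] V => t v) (hcomm y)
      simpa using this
    show (g : V →ₗ[ℂ] V) (ρ y v) = μ • (ρ y v)
    rw [LinearEquiv.coe_coe, hc, show g v = μ • v from hv]
    simp
  have hWtop : W = ⊤ := by
    rcases hirr W hsub with h0 | h1
    · exact absurd h0 hμ
    · exact h1
  have hgv : ∀ v : V, g v = μ • v := by
    intro v
    have : v ∈ W := hWtop ▸ Submodule.mem_top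
    exact Module.End.mem_eigenspace_iff.mp this
  -- μ ≠ 0
  have hμ0 : μ ≠ 0 := by
    obtain ⟨v, hv⟩ := exists_ne (0 : V)
    intro hμ0
    apply hv
    have := hgv v
    rw [hμ0, zero_smul] at this
    have := g.injective (by simpa using this)
    simpa using this
  -- f := ρ x satisfies X^n - μ = 0
  set f : V →ₗ[ℂ] V := (ρ x : V →ₗ[ℂ] V) with hf
  have hfn : ∀ v : V, (f ^ n) v = μ • v := by
    intro v
    have h1 : (f ^ n) v = ((ρ x) ^ n) v := by
      rw [Module.End.pow_apply, LinearEquiv.pow_apply]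
      rfl
    rw [h1, ← hg, hgv]
  have haev : Polynomial.aeval f (Polynomial.X ^ n - Polynomial.C μ) = 0 := by
    ext v
    simp [hfn v, Module.algebraMap_end_apply]
  have hsq : Squarefree (Polynomial.X ^ n - Polynomial.C μ : Polynomial ℂ) := by
    refine (Polynomial.separable_X_pow_sub_C μ ?_ hμ0).squarefree
    exact_mod_cast Nat.cast_ne_zero.mpr hnpos.ne'
  have hss : Module.End.IsSemisimple (f : Module.End ℂ V) :=
    Module.End.isSemisimple_of_squarefree_aeval_eq_zero hsq haev
  have hfss : Module.End.IsFinitelySemisimple (f : Module.End ℂ V) :=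
    Module.End.IsSemisimple.isFinitelySemisimple hss
  apply isDiagonalizable_of_iSup_eigenspace_eq_top
  have htop := Module.End.iSup_maxGenEigenspace_eq_top f
  rw [← htop]
  exact iSup_congr fun μ' =>
    (Module.End.IsFinitelySemisimple.maxGenEigenspace_eq_eigenspace hfss μ').symm
end

section
/- Let Q be a finite quandle and ρ : Q → GL(V) an irreducible quandle representation on a finite-dimensional complex vector space V. Then there exists an inner product on V for which every ρ(x), x ∈ Q, is an isometry if and only if |det ρ(x)| = 1 for every x ∈ Q. -/
open Quandles


set_option linter.unusedSectionVars false
set_option maxHeartbeats 1000000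

/-! ### Auxiliary lemmas -/

lemma aux_closure_pred {G : Type*} [Group G] (P : G → Prop) (S : Set G)
    (hS : ∀ A ∈ S, P A) (h1 : P 1)
    (hmul : ∀ x y, P x → P y → P (x * y)) (hinv : ∀ x, P x → P x⁻¹) :
    ∀ g ∈ Subgroup.closure S, P g := by
  intro g hg
  refine Subgroup.closure_induction (p := fun g _ => P g) hS h1
    (fun x y _ _ ihx ihy => hmul x y ihx ihy) (fun x _ ihx => hinv x ihx) hg

section AuxB0

variable {V : Type} [AddCommGroup V] [Module ℂ V] [FiniteDimensional ℂ V]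

/-- An auxiliary reference positive definite hermitian form coming from a basis. -/
noncomputable def auxB0 (V : Type) [AddCommGroup V] [Module ℂ V] [FiniteDimensional ℂ V] :
    V → V → ℂ := fun v w =>
  ∑ i, (starRingEnd ℂ) ((Module.finBasis ℂ V).repr v i) * ((Module.finBasis ℂ V).repr w i)

lemma auxB0_add_left (u v w : V) : auxB0 V (u + v) w = auxB0 V u w + auxB0 V v w := by
  simp [auxB0, add_mul, Finset.sum_add_distrib]

lemma auxB0_smul_left (r : ℂ) (u w : V) :
    auxB0 V (r • u) w = (starRingEnd ℂ) r * auxB0 V u w := by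
  simp [auxB0, Finset.mul_sum, mul_assoc]

lemma auxB0_smul_right (r : ℂ) (u w : V) : auxB0 V u (r • w) = r * auxB0 V u w := by
  simp only [auxB0, map_smul, Finsupp.smul_apply, smul_eq_mul, Finset.mul_sum]
  exact Finset.sum_congr rfl fun i _ => by ring

lemma auxB0_conj_symm (v w : V) : (starRingEnd ℂ) (auxB0 V w v) = auxB0 V v w := by
  simp only [auxB0, map_sum, map_mul, Complex.conj_conj]
  exact Finset.sum_congr rfl fun i _ => by ring

lemma auxB0_self (v : V) :
    auxB0 V v v = ∑ i, (Complex.normSq ((Module.finBasis ℂ V).repr v i) : ℂ) := by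
  refine Finset.sum_congr rfl fun i _ => ?_
  rw [mul_comm, Complex.mul_conj]

lemma auxB0_self_re_nonneg (v : V) : 0 ≤ (auxB0 V v v).re := by
  rw [auxB0_self, Complex.re_sum]
  exact Finset.sum_nonneg fun i _ => by simpa using Complex.normSq_nonneg _

lemma auxB0_self_eq_zero {v : V} (h : (auxB0 V v v).re = 0) : v = 0 := by
  rw [auxB0_self, Complex.re_sum] at h
  have h2 : ∀ i, Complex.normSq ((Module.finBasis ℂ V).repr v i) = 0 := by
    intro i
    have := (Finset.sum_eq_zero_iff_of_nonneg
      (fun i _ => by simpa using Complex.normSq_nonneg ((Module.finBasis ℂ V).repr v i))).mp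
      h i (Finset.mem_univ i)
    simpa using this
  have h3 : (Module.finBasis ℂ V).repr v = 0 := by
    ext i
    exact Complex.normSq_eq_zero.mp (h2 i)
  have := congrArg (Module.finBasis ℂ V).repr.symm h3
  simpa using this

lemma auxB0_unit_smul {μ : ℂ} (hμ : ‖μ‖ = 1) (u w : V) :
    auxB0 V (μ • u) (μ • w) = auxB0 V u w := by
  rw [auxB0_smul_left, auxB0_smul_right, ← mul_assoc, ← Complex.normSq_eq_conj_mul_self]
  have : (Complex.normSq μ : ℝ) = 1 := by
    rw [← Complex.sq_norm, hμ]; norm_num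
  rw [this]
  norm_num

lemma exists_core (ι : Type) [Fintype ι] (i₀ : ι) (T : ι → V ≃ₗ[ℂ] V) :
    ∃ c : InnerProductSpace.Core ℂ V,
      ∀ v w : V, c.inner v w = ∑ i, auxB0 V (T i v) (T i w) := by
  refine ⟨{ inner := fun v w => ∑ i, auxB0 V (T i v) (T i w)
            conj_inner_symm := fun v w => ?_
            re_inner_nonneg := fun v => ?_
            add_left := fun u v w => ?_
            smul_left := fun u v r => ?_
            definite := fun v hv => ?_ }, fun v w => rfl⟩
  · show (starRingEnd ℂ) (∑ i, auxB0 V (T i w) (T i v)) = ∑ i, auxB0 V (T i v) (T i w)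
    rw [map_sum]
    exact Finset.sum_congr rfl fun i _ => auxB0_conj_symm _ _
  · show (0 : ℝ) ≤ (∑ i, auxB0 V (T i v) (T i v)).re
    rw [Complex.re_sum]
    exact Finset.sum_nonneg fun i _ => auxB0_self_re_nonneg _
  · show ∑ i, auxB0 V (T i (u + v)) (T i w)
        = ∑ i, auxB0 V (T i u) (T i w) + ∑ i, auxB0 V (T i v) (T i w)
    rw [← Finset.sum_add_distrib]
    exact Finset.sum_congr rfl fun i _ => by rw [map_add, auxB0_add_left]
  · show ∑ i, auxB0 V (T i (r • u)) (T i v)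
        = (starRingEnd ℂ) r * ∑ i, auxB0 V (T i u) (T i v)
    rw [Finset.mul_sum]
    exact Finset.sum_congr rfl fun i _ => by rw [map_smul, auxB0_smul_left]
  · replace hv : ∑ i, auxB0 V (T i v) (T i v) = 0 := hv
    have hre : ∑ i, (auxB0 V (T i v) (T i v)).re = 0 := by
      rw [← Complex.re_sum]
      exact congrArg Complex.re hv
    have h0 : (auxB0 V (T i₀ v) (T i₀ v)).re = 0 :=
      (Finset.sum_eq_zero_iff_of_nonneg (fun i _ => auxB0_self_re_nonneg _)).mp hre i₀
        (Finset.mem_univ i₀)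
    have := auxB0_self_eq_zero h0
    have := congrArg (T i₀).symm this
    simpa using this

end AuxB0

section Quandles

variable {Q : Type} [Quandle Q] [Finite Q] {V : Type} [AddCommGroup V] [Module ℂ V]
  [FiniteDimensional ℂ V]

lemma schur_aux (ρ : Q → V ≃ₗ[ℂ] V)
    (hirr : ∀ W : Submodule ℂ V, (∀ x : Q, ∀ v ∈ W, ρ x v ∈ W) → W = ⊥ ∨ W = ⊤)
    [Nontrivial V] (f : V →ₗ[ℂ] V)
    (hf : ∀ (x : Q) (v : V), f (ρ x v) = ρ x (f v)) :
    ∃ μ : ℂ, ∀ v : V, f v = μ • v := by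
  obtain ⟨μ, hμ⟩ := Module.End.exists_eigenvalue f
  obtain ⟨v₀, hv₀⟩ := hμ.exists_hasEigenvector
  refine ⟨μ, ?_⟩
  have hW : ∀ x : Q, ∀ v ∈ Module.End.eigenspace f μ, ρ x v ∈ Module.End.eigenspace f μ := by
    intro x v hv
    rw [Module.End.mem_eigenspace_iff] at hv ⊢
    rw [hf, hv, map_smul]
  rcases hirr _ hW with h | h
  · have := hv₀.1
    rw [show (Module.End.genEigenspace f μ) 1 = Module.End.eigenspace f μ from rfl, h] at this
    exact absurd this (by simpa using hv₀.2)
  · intro v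
    have : v ∈ Module.End.eigenspace f μ := h ▸ Submodule.mem_top
    rwa [Module.End.mem_eigenspace_iff] at this

lemma aux_conj_mem (ρ : Q → V ≃ₗ[ℂ] V)
    (hrep : ∀ x y : Q, ρ (x ◃ y) = ρ x * ρ y * (ρ x)⁻¹) :
    ∀ g ∈ Subgroup.closure (Set.range ρ), ∀ A ∈ Set.range ρ,
      g * A * g⁻¹ ∈ Set.range ρ ∧ g⁻¹ * A * g ∈ Set.range ρ := by
  refine aux_closure_pred _ _ ?_ ?_ ?_ ?_
  · rintro x ⟨q, rfl⟩ A ⟨y, rfl⟩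
    constructor
    · exact ⟨q ◃ y, hrep q y⟩
    · refine ⟨q ◃⁻¹ y, ?_⟩
      have h1 : ρ y = ρ q * ρ (q ◃⁻¹ y) * (ρ q)⁻¹ := by
        rw [← hrep q (q ◃⁻¹ y), Rack.right_inv]
      rw [h1]; group
  · intro A hA
    simp only [one_mul, inv_one, mul_one]
    exact ⟨hA, hA⟩
  · intro x y ihx ihy A hA
    constructor
    · have := (ihx _ ((ihy A hA).1)).1
      rwa [show x * (y * A * y⁻¹) * x⁻¹ = x * y * A * (x * y)⁻¹ by group] at this
    · have := (ihy _ ((ihx A hA).2)).2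
      rwa [show y⁻¹ * (x⁻¹ * A * x) * y = (x * y)⁻¹ * A * (x * y) by group] at this
  · intro x ihx A hA
    constructor
    · have := (ihx A hA).2
      rwa [show x⁻¹ * A * x = x⁻¹ * A * x⁻¹⁻¹ by group] at this
    · have := (ihx A hA).1
      rwa [show x * A * x⁻¹ = x⁻¹⁻¹ * A * x⁻¹ by group] at this

lemma aux_det_one (ρ : Q → V ≃ₗ[ℂ] V)
    (hdet : ∀ x : Q, ‖LinearMap.det (ρ x : V →ₗ[ℂ] V)‖ = 1) :
    ∀ g ∈ Subgroup.closure (Set.range ρ),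
      ‖LinearMap.det (g : V →ₗ[ℂ] V)‖ = 1 := by
  have hcoe_mul : ∀ x y : V ≃ₗ[ℂ] V,
      LinearEquiv.toLinearMap (x * y) = (x : V →ₗ[ℂ] V) ∘ₗ (y : V →ₗ[ℂ] V) :=
    fun x y => rfl
  have hone : ((1 : V ≃ₗ[ℂ] V) : V →ₗ[ℂ] V) = LinearMap.id := rfl
  refine aux_closure_pred (fun g : V ≃ₗ[ℂ] V => ‖LinearMap.det (g : V →ₗ[ℂ] V)‖ = 1) _
    ?_ ?_ ?_ ?_
  · rintro x ⟨q, rfl⟩; exact hdet q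
  · show ‖LinearMap.det ((1 : V ≃ₗ[ℂ] V) : V →ₗ[ℂ] V)‖ = 1
    rw [hone]; simp
  · intro x y ihx ihy
    show ‖LinearMap.det ((x * y : V ≃ₗ[ℂ] V) : V →ₗ[ℂ] V)‖ = 1
    rw [hcoe_mul, LinearMap.det_comp, norm_mul, ihx, ihy, mul_one]
  · intro x ihx
    show ‖LinearMap.det ((x⁻¹ : V ≃ₗ[ℂ] V) : V →ₗ[ℂ] V)‖ = 1
    have h1 : LinearMap.det (LinearEquiv.toLinearMap x⁻¹)
        * LinearMap.det (x : V →ₗ[ℂ] V) = 1 := by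
      rw [← LinearMap.det_comp, ← hcoe_mul, inv_mul_cancel, hone]
      simp
    have := congrArg (‖·‖) h1
    rwa [norm_mul, ihx, mul_one, norm_one] at this

end Quandles

section Backward

variable {Q : Type} [Quandle Q] [Finite Q] {V : Type} [AddCommGroup V] [Module ℂ V]
  [FiniteDimensional ℂ V]

lemma backward_aux (ρ : Q → V ≃ₗ[ℂ] V)
    (hrep : ∀ x y : Q, ρ (x ◃ y) = ρ x * ρ y * (ρ x)⁻¹)
    (hirr : ∀ W : Submodule ℂ V, (∀ x : Q, ∀ v ∈ W, ρ x v ∈ W) → W = ⊥ ∨ W = ⊤)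
    (hdet : ∀ x : Q, ‖LinearMap.det (ρ x : V →ₗ[ℂ] V)‖ = 1) :
    ∃ c : InnerProductSpace.Core ℂ V,
      ∀ (x : Q) (v w : V), c.inner (ρ x v) (ρ x w) = c.inner v w := by
  classical
  rcases subsingleton_or_nontrivial V with hV | hV
  · exact ⟨{ inner := fun _ _ => 0
             conj_inner_symm := by simp
             re_inner_nonneg := by simp
             add_left := by simp
             smul_left := by simp
             definite := fun x _ => Subsingleton.elim x 0 }, by intros; rfl⟩
  have hconj := aux_conj_mem ρ hrep
  have hdetG := aux_det_one ρ hdet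
  haveI : Finite ↥(Set.range ρ) := (Set.finite_range ρ).to_subtype
  -- the conjugation permutation representation of the closure group
  have hbij : ∀ g : ↥(Subgroup.closure (Set.range ρ)), Function.Bijective
      (fun A : ↥(Set.range ρ) => (⟨(g : V ≃ₗ[ℂ] V) * A * (g : V ≃ₗ[ℂ] V)⁻¹,
        (hconj g g.2 A A.2).1⟩ : ↥(Set.range ρ))) := by
    intro g
    rw [← Finite.injective_iff_bijective]
    intro A B hAB
    have h2 : (g : V ≃ₗ[ℂ] V) * A * (g : V ≃ₗ[ℂ] V)⁻¹
        = (g : V ≃ₗ[ℂ] V) * B * (g : V ≃ₗ[ℂ] V)⁻¹ := Subtype.ext_iff.mp hAB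
    exact Subtype.ext (mul_right_cancel (mul_left_cancel h2))
  let cperm : ↥(Subgroup.closure (Set.range ρ)) →* Equiv.Perm ↥(Set.range ρ) :=
    { toFun := fun g => Equiv.ofBijective _ (hbij g)
      map_one' := by
        ext A
        simp [Equiv.ofBijective]
      map_mul' := by
        intro g h
        refine Equiv.ext fun A => Subtype.ext ?_
        simp only [Equiv.ofBijective, Equiv.coe_fn_mk, Equiv.Perm.coe_mul, Function.comp_apply,
          Subgroup.coe_mul]
        group }
  haveI : Finite (↥(Subgroup.closure (Set.range ρ)) ⧸ cperm.ker) :=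
    Finite.of_equiv _ (QuotientGroup.quotientKerEquivRange cperm).toEquiv.symm
  haveI : Fintype (↥(Subgroup.closure (Set.range ρ)) ⧸ cperm.ker) := Fintype.ofFinite _
  -- elements of the kernel are unimodular scalars
  have hker : ∀ k : ↥(Subgroup.closure (Set.range ρ)), k ∈ cperm.ker →
      ∃ μ : ℂ, ‖μ‖ = 1 ∧ ∀ v : V, (k : V ≃ₗ[ℂ] V) v = μ • v := by
    intro k hk
    have hk1 : cperm k = 1 := by rwa [MonoidHom.mem_ker] at hk
    have hcomm : ∀ x : Q, (k : V ≃ₗ[ℂ] V) * ρ x = ρ x * (k : V ≃ₗ[ℂ] V) := by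
      intro x
      have hmem : ρ x ∈ Set.range ρ := ⟨x, rfl⟩
      have h1 := congrArg (fun e : Equiv.Perm ↥(Set.range ρ) => e ⟨ρ x, hmem⟩) hk1
      simp only [Equiv.Perm.coe_one, id_eq] at h1
      have h2 : (k : V ≃ₗ[ℂ] V) * ρ x * (k : V ≃ₗ[ℂ] V)⁻¹ = ρ x := by
        have := Subtype.ext_iff.mp h1
        simpa [cperm, Equiv.ofBijective] using this
      calc (k : V ≃ₗ[ℂ] V) * ρ x
          = ((k : V ≃ₗ[ℂ] V) * ρ x * (k : V ≃ₗ[ℂ] V)⁻¹) * (k : V ≃ₗ[ℂ] V) := by group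
        _ = ρ x * (k : V ≃ₗ[ℂ] V) := by rw [h2]
    obtain ⟨μ, hμ⟩ := schur_aux ρ hirr ((k : V ≃ₗ[ℂ] V) : V →ₗ[ℂ] V)
      (fun x v => by
        have := congrArg (fun e : V ≃ₗ[ℂ] V => e v) (hcomm x)
        simpa using this)
    refine ⟨μ, ?_, fun v => hμ v⟩
    have hdk : ‖LinearMap.det ((k : V ≃ₗ[ℂ] V) : V →ₗ[ℂ] V)‖ = 1 := hdetG _ k.2
    have heq : ((k : V ≃ₗ[ℂ] V) : V →ₗ[ℂ] V) = μ • LinearMap.id := by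
      ext v; simpa using hμ v
    rw [heq, LinearMap.det_smul, LinearMap.det_id, mul_one, norm_pow] at hdk
    exact (pow_eq_one_iff_of_nonneg (norm_nonneg μ) Module.finrank_pos.ne').mp hdk
  -- average the reference form over coset representatives
  obtain ⟨c, hc⟩ := exists_core (↥(Subgroup.closure (Set.range ρ)) ⧸ cperm.ker) 1
    (fun q => ((q.out : ↥(Subgroup.closure (Set.range ρ))) : V ≃ₗ[ℂ] V))
  refine ⟨c, ?_⟩
  intro x v w
  rw [hc, hc]
  have hxG : ρ x ∈ Subgroup.closure (Set.range ρ) := Subgroup.subset_closure ⟨x, rfl⟩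
  set g : ↥(Subgroup.closure (Set.range ρ)) := ⟨ρ x, hxG⟩ with hgdef
  have key : ∀ (q : ↥(Subgroup.closure (Set.range ρ)) ⧸ cperm.ker) (u u' : V),
      auxB0 V ((q.out : V ≃ₗ[ℂ] V) (ρ x u)) ((q.out : V ≃ₗ[ℂ] V) (ρ x u'))
      = auxB0 V (((q * QuotientGroup.mk g).out : V ≃ₗ[ℂ] V) u)
          (((q * QuotientGroup.mk g).out : V ≃ₗ[ℂ] V) u') := by
    intro q u u'
    have hmk : (QuotientGroup.mk ((q * QuotientGroup.mk g).out)
        : ↥(Subgroup.closure (Set.range ρ)) ⧸ cperm.ker) = QuotientGroup.mk (q.out * g) := by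
      rw [QuotientGroup.out_eq']
      conv_lhs => rw [← QuotientGroup.out_eq' q]
      rfl
    have hK : ((q * QuotientGroup.mk g).out)⁻¹ * (q.out * g) ∈ cperm.ker :=
      QuotientGroup.eq.mp hmk
    obtain ⟨μ, hμ1, hμ⟩ := hker _ hK
    have happ : ∀ u : V, (q.out : V ≃ₗ[ℂ] V) (ρ x u)
        = μ • ((q * QuotientGroup.mk g).out : V ≃ₗ[ℂ] V) u := by
      intro u
      have h5 : (q.out * g : ↥(Subgroup.closure (Set.range ρ)))
          = (q * QuotientGroup.mk g).out * (((q * QuotientGroup.mk g).out)⁻¹ * (q.out * g)) := by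
        group
      have h6 := congrArg (fun z : ↥(Subgroup.closure (Set.range ρ)) => (z : V ≃ₗ[ℂ] V) u) h5
      simp only [Subgroup.coe_mul] at h6
      have h7 : ((q.out : V ≃ₗ[ℂ] V) * (g : V ≃ₗ[ℂ] V)) u
          = ((q * QuotientGroup.mk g).out : V ≃ₗ[ℂ] V)
            (((((q * QuotientGroup.mk g).out)⁻¹ * (q.out * g)
              : ↥(Subgroup.closure (Set.range ρ))) : V ≃ₗ[ℂ] V) u) := h6
      rw [hμ u] at h7
      rw [map_smul] at h7
      exact h7
    rw [happ u, happ u', auxB0_unit_smul hμ1]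
  have h1 : (∑ q : ↥(Subgroup.closure (Set.range ρ)) ⧸ cperm.ker,
        auxB0 V ((q.out : V ≃ₗ[ℂ] V) (ρ x v)) ((q.out : V ≃ₗ[ℂ] V) (ρ x w)))
      = ∑ q : ↥(Subgroup.closure (Set.range ρ)) ⧸ cperm.ker,
        auxB0 V (((q * QuotientGroup.mk g).out : V ≃ₗ[ℂ] V) v)
          (((q * QuotientGroup.mk g).out : V ≃ₗ[ℂ] V) w) :=
    Finset.sum_congr rfl fun q _ => key q v w
  have h2 := Equiv.sum_comp (Equiv.mulRight
      (QuotientGroup.mk g : ↥(Subgroup.closure (Set.range ρ)) ⧸ cperm.ker))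
    (fun q => auxB0 V ((q.out : V ≃ₗ[ℂ] V) v) ((q.out : V ≃ₗ[ℂ] V) w))
  simp only [Equiv.coe_mulRight] at h2
  rw [h1]
  exact h2

end Backward


lemma abs_det_eq_one_of_invariant {V : Type} [AddCommGroup V] [Module ℂ V]
    [FiniteDimensional ℂ V] (c : InnerProductSpace.Core ℂ V) (f : V ≃ₗ[ℂ] V)
    (hf : ∀ v w, c.inner (f v) (f w) = c.inner v w) :
    ‖LinearMap.det (f : V →ₗ[ℂ] V)‖ = 1 := by
  letI : NormedAddCommGroup V := @InnerProductSpace.Core.toNormedAddCommGroup ℂ V _ _ _ c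
  letI : InnerProductSpace ℂ V := InnerProductSpace.ofCore c.toCore
  rcases subsingleton_or_nontrivial V with h | h
  · rw [LinearMap.det_eq_one_of_subsingleton]
    simp
  have hinner : ∀ v w : V, inner ℂ (f v) (f w) = inner ℂ v w := hf
  let fi : V ≃ₗᵢ[ℂ] V := f.isometryOfInner hinner
  let b := stdOrthonormalBasis ℂ V
  let b' := b.map fi
  have h1 : ‖b.toBasis.det b'.toBasis‖ = 1 := b.det_to_matrix_orthonormalBasis b'
  have h2 : b.toBasis.det b'.toBasis = LinearMap.det (f : V →ₗ[ℂ] V) := by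
    rw [Module.Basis.det_apply, ← LinearMap.det_toMatrix b.toBasis]
    congr 1
    ext i j
    rw [Module.Basis.toMatrix_apply, LinearMap.toMatrix_apply]
    simp [b', fi]
  rw [← h2, h1]

/-- An irreducible finite-dimensional complex representation `ρ` of a finite quandle `Q`
is unitary for some inner product on `V` if and only if `|det ρ(x)| = 1` for all `x ∈ Q`. -/
theorem irreducible_quandle_rep_unitary_iff_abs_det_eq_one
    {Q : Type} [Quandle Q] [Finite Q] {V : Type} [AddCommGroup V] [Module ℂ V]
    [FiniteDimensional ℂ V] (ρ : Q → V ≃ₗ[ℂ] V) (hrep : IsQuandleRep ρ)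
    (hirr : ∀ W : Submodule ℂ V, IsSubrep ρ W → W = ⊥ ∨ W = ⊤) :
    (∃ c : InnerProductSpace.Core ℂ V,
        ∀ (x : Q) (v w : V), c.inner (ρ x v) (ρ x w) = c.inner v w) ↔
      ∀ x : Q, ‖LinearMap.det (ρ x : V →ₗ[ℂ] V)‖ = 1 := by
  constructor
  · rintro ⟨c, hcinv⟩ x
    exact abs_det_eq_one_of_invariant c (ρ x) (hcinv x)
  · intro hdet
    exact backward_aux ρ hrep hirr hdet
end

section
/- Let Q be a finite quandle and ρ : Q → GL(V) an irreducible quandle representation on a nonzero finite-dimensional complex vector space V. Then there exists a quandle character χ : Q → ℂ^× such that the map x ↦ χ(x)·ρ(x) is an irreducible quandle representation of Q on V and there exists an inner product on V for which every χ(x)ρ(x), x ∈ Q, is an isometry. -/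
open Quandles

/-- The quandle representation `ρ` is irreducible. -/
def IsIrreducibleQuandleRep {Q : Type} [Quandle Q] {V : Type} [AddCommGroup V] [Module ℂ V]
    (ρ : Q → V ≃ₗ[ℂ] V) : Prop :=
  ∀ W : Submodule ℂ V, IsSubrep ρ W → W = ⊥ ∨ W = ⊤

namespace QRTaux

variable {V : Type} [AddCommGroup V] [Module ℂ V]

/-- Scale a linear automorphism by a unit scalar. -/
noncomputable def smulE (u : ℂˣ) (f : V ≃ₗ[ℂ] V) : V ≃ₗ[ℂ] V :=
  LinearEquiv.mk ((u : ℂ) • (f : V →ₗ[ℂ] V))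
    (fun v => (↑u⁻¹ : ℂ) • f.symm v)
    (fun v => by simp [smul_smul])
    (fun v => by simp [smul_smul])

@[simp] lemma smulE_apply (u : ℂˣ) (f : V ≃ₗ[ℂ] V) (v : V) :
    smulE u f v = (u : ℂ) • f v := rfl

lemma smulE_coe (u : ℂˣ) (f : V ≃ₗ[ℂ] V) :
    (smulE u f : V →ₗ[ℂ] V) = (u : ℂ) • (f : V →ₗ[ℂ] V) := rfl

lemma smulE_inv_apply (u : ℂˣ) (f : V ≃ₗ[ℂ] V) (v : V) :
    (smulE u f)⁻¹ v = (↑u⁻¹ : ℂ) • f⁻¹ v := rfl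

/-- Scalar automorphism. -/
noncomputable def scalE (lam : ℂ) : V ≃ₗ[ℂ] V :=
  if hl : lam = 0 then 1 else smulE (Units.mk0 lam hl) 1

lemma scalE_apply {lam : ℂ} (hl : lam ≠ 0) (v : V) : scalE lam v = lam • v := by
  rw [scalE, dif_neg hl]; rfl

/-- A basic inner product core on a finite-dimensional complex vector space. -/
noncomputable def baseCore (V : Type) [AddCommGroup V] [Module ℂ V]
    [FiniteDimensional ℂ V] : InnerProductSpace.Core ℂ V :=
  letI b := Module.finBasis ℂ V
  { inner := fun v w => ∑ i, (starRingEnd ℂ) (b.repr v i) * (b.repr w i)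
    conj_inner_symm := fun v w => by
      simp only [map_sum, map_mul, RingHomCompTriple.comp_apply, Complex.conj_conj,
        starRingEnd_self_apply]
      exact Finset.sum_congr rfl fun i _ => by simp [mul_comm]
    re_inner_nonneg := fun v => by
      have : ∀ i : Fin (Module.finrank ℂ V),
          ((starRingEnd ℂ) (b.repr v i) * (b.repr v i)).re = Complex.normSq (b.repr v i) := by
        intro i; rw [← Complex.normSq_eq_conj_mul_self]; simp
      simp only [RCLike.re_to_complex, Complex.re_sum, this]
      exact Finset.sum_nonneg fun i _ => Complex.normSq_nonneg _
    add_left := fun x y z => by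
      simp only [map_add, Finsupp.add_apply, add_mul, Finset.sum_add_distrib]
    smul_left := fun x y r => by
      simp only [map_smul, Finsupp.smul_apply, smul_eq_mul, map_mul, Finset.mul_sum, mul_assoc]
    definite := fun v hv => by
      have h1 : ∀ i : Fin (Module.finrank ℂ V),
          (starRingEnd ℂ) (b.repr v i) * (b.repr v i) = (Complex.normSq (b.repr v i) : ℂ) := by
        intro i; rw [Complex.normSq_eq_conj_mul_self]
      have h2 : ((∑ i, Complex.normSq (b.repr v i) : ℝ) : ℂ) = 0 := by
        rw [Complex.ofReal_sum]
        simpa only [h1] using hv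
      have h3 : (∑ i, Complex.normSq (b.repr v i) : ℝ) = 0 := by exact_mod_cast h2
      have h4 : ∀ i ∈ Finset.univ, Complex.normSq (b.repr v i) = 0 :=
        (Finset.sum_eq_zero_iff_of_nonneg fun i _ => Complex.normSq_nonneg _).mp h3
      have h5 : b.repr v = 0 := by
        ext i
        exact Complex.normSq_eq_zero.mp (h4 i (Finset.mem_univ i))
      have := congrArg b.repr.symm h5
      simpa using this }

end QRTaux

open QRTaux

/-- Every irreducible finite-dimensional complex representation `ρ` of a finite quandle
`Q` on a nonzero space can be twisted by a quandle character `χ` so that `x ↦ χ(x)·ρ(x)`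
is an irreducible quandle representation that is unitary for some inner product. -/
theorem irreducible_quandle_rep_twist_unitary
    {Q : Type} [Quandle Q] [Finite Q] {V : Type} [AddCommGroup V] [Module ℂ V]
    [FiniteDimensional ℂ V] [Nontrivial V]
    (ρ : Q → V ≃ₗ[ℂ] V) (hrep : IsQuandleRep ρ) (hirr : IsIrreducibleQuandleRep ρ) :
    ∃ χ : Q → ℂˣ, (∀ x y : Q, χ (x ◃ y) = χ y) ∧
      ∃ σ : Q → V ≃ₗ[ℂ] V,
        (∀ (x : Q) (v : V), σ x v = (χ x : ℂ) • ρ x v) ∧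
        IsQuandleRep σ ∧ IsIrreducibleQuandleRep σ ∧
        ∃ c : InnerProductSpace.Core ℂ V,
          ∀ (x : Q) (v w : V), c.inner (σ x v) (σ x w) = c.inner v w := by
  classical
  set n := Module.finrank ℂ V with hn
  have hn0 : 0 < n := Module.finrank_pos
  -- choose n-th roots of inverse determinants
  have hroot : ∀ u : ℂˣ, ∃ z : ℂˣ, (z : ℂ) ^ n = (↑u⁻¹ : ℂ) := by
    intro u
    obtain ⟨z, hz⟩ := IsAlgClosed.exists_pow_nat_eq (↑u⁻¹ : ℂ) hn0
    have hz0 : z ≠ 0 := by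
      intro h
      rw [h, zero_pow hn0.ne'] at hz
      exact (Units.ne_zero u⁻¹) hz.symm
    exact ⟨Units.mk0 z hz0, hz⟩
  choose r hr using hroot
  set χ : Q → ℂˣ := fun x => r (LinearEquiv.det (ρ x)) with hχdef
  have hdetconj : ∀ x y : Q, LinearEquiv.det (ρ (x ◃ y)) = LinearEquiv.det (ρ y) := by
    intro x y
    rw [hrep x y, map_mul, map_mul, map_inv, mul_right_comm]
    simp
  have hχ : ∀ x y : Q, χ (x ◃ y) = χ y := by
    intro x y
    simp only [hχdef, hdetconj x y]
  -- the twisted representation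
  set σ : Q → V ≃ₗ[ℂ] V := fun x => smulE (χ x) (ρ x) with hσdef
  have hσapp : ∀ (x : Q) (v : V), σ x v = (χ x : ℂ) • ρ x v := fun x v => rfl
  have hσinv : ∀ (x : Q) (v : V), (σ x)⁻¹ v = (↑(χ x)⁻¹ : ℂ) • (ρ x)⁻¹ v := fun x v => rfl
  have hσrep : IsQuandleRep σ := by
    intro x y
    apply LinearEquiv.ext
    intro v
    show σ (x ◃ y) v = σ x (σ y ((σ x)⁻¹ v))
    have h2 : ρ (x ◃ y) v = ρ x (ρ y ((ρ x)⁻¹ v)) := by rw [hrep x y]; rfl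
    simp only [hσapp, hσinv, map_smul, smul_smul, hχ x y, h2]
    congr 1
    have hx0 : (χ x : ℂ) ≠ 0 := Units.ne_zero _
    rw [Units.val_inv_eq_inv_val]
    field_simp
  have hσirr : IsIrreducibleQuandleRep σ := by
    intro W hW
    apply hirr W
    intro x v hv
    have h1 : σ x v ∈ W := hW x v hv
    have h2 : ρ x v = (↑(χ x)⁻¹ : ℂ) • σ x v := by
      rw [hσapp, smul_smul]
      simp
    rw [h2]
    exact W.smul_mem _ h1
  -- determinant of σ x is 1
  have hdetσ : ∀ x : Q, LinearEquiv.det (σ x) = 1 := by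
    intro x
    apply Units.ext
    rw [LinearEquiv.coe_det, hσdef]
    show LinearMap.det ((smulE (χ x) (ρ x) : V →ₗ[ℂ] V)) = _
    rw [smulE_coe, LinearMap.det_smul, hr, ← LinearEquiv.coe_det, ← Units.val_mul]
    simp
  -- the group generated by the image of σ
  set S : Set (V ≃ₗ[ℂ] V) := Set.range σ with hSdef
  have hSfin : S.Finite := Set.finite_range σ
  set H : Subgroup (V ≃ₗ[ℂ] V) := Subgroup.closure S with hHdef
  have hSH : S ⊆ (H : Set (V ≃ₗ[ℂ] V)) := Subgroup.subset_closure
  have hdetH : ∀ h ∈ H, LinearEquiv.det h = 1 := by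
    intro h hh
    have hle : H ≤ (LinearEquiv.det : (V ≃ₗ[ℂ] V) →* ℂˣ).ker := by
      rw [hHdef, Subgroup.closure_le]
      rintro s ⟨x, rfl⟩
      exact hdetσ x
    exact hle hh
  -- the subgroup of elements normalizing S
  set N : Subgroup (V ≃ₗ[ℂ] V) :=
    { carrier := {g | (fun s => g * s * g⁻¹) '' S = S}
      one_mem' := by simp
      mul_mem' := by
        intro a b ha hb
        show (fun s => a * b * s * (a * b)⁻¹) '' S = S
        have key : ∀ s, (fun s => a * b * s * (a * b)⁻¹) s
            = ((fun t => a * t * a⁻¹) ∘ (fun s => b * s * b⁻¹)) s := by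
          intro s; simp only [Function.comp_apply, mul_inv_rev]; group
        rw [Set.image_congr' key, Set.image_comp, hb, ha]
      inv_mem' := by
        intro g hg
        show (fun s => g⁻¹ * s * g⁻¹⁻¹) '' S = S
        have := congrArg (Set.image (fun s => g⁻¹ * s * g⁻¹⁻¹)) hg
        rw [← Set.image_comp] at this
        have h2 : ∀ s, ((fun s => g⁻¹ * s * g⁻¹⁻¹) ∘ (fun s => g * s * g⁻¹)) s = id s := by
          intro s; simp only [Function.comp_apply, id]; group
        rw [Set.image_congr' h2, Set.image_id] at this
        exact this.symm } with hNdef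
  have hSN : S ⊆ (N : Set (V ≃ₗ[ℂ] V)) := by
    rintro s ⟨x, rfl⟩
    show (fun t => σ x * t * (σ x)⁻¹) '' S = S
    apply Set.Subset.antisymm
    · rintro t ⟨u, ⟨y, rfl⟩, rfl⟩
      show σ x * σ y * (σ x)⁻¹ ∈ S
      rw [← hσrep]
      exact ⟨x ◃ y, rfl⟩
    · rintro t ⟨y, rfl⟩
      refine ⟨σ (x ◃⁻¹ y), ⟨x ◃⁻¹ y, rfl⟩, ?_⟩
      show σ x * σ (x ◃⁻¹ y) * (σ x)⁻¹ = σ y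
      rw [← hσrep, Rack.act_invAct_eq]
  have hHN : ∀ h ∈ H, ∀ s ∈ S, h * s * h⁻¹ ∈ S := by
    intro h hh s hs
    have h1 : H ≤ N := by rw [hHdef, Subgroup.closure_le]; exact hSN
    have h2 : (fun s => h * s * h⁻¹) '' S = S := h1 hh
    exact h2 ▸ Set.mem_image_of_mem _ hs
  -- any element of H commuting with all of S is a scalar root of unity
  have hscalar : ∀ k : V ≃ₗ[ℂ] V, k ∈ H → (∀ s ∈ S, k * s = s * k) →
      ∃ lam : ℂ, lam ^ n = 1 ∧ ∀ v : V, k v = lam • v := by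
    intro k hk hcomm
    obtain ⟨μ, hμ⟩ := Module.End.exists_eigenvalue (k : V →ₗ[ℂ] V)
    set E := Module.End.eigenspace (k : V →ₗ[ℂ] V) μ with hE
    have hEsub : IsSubrep σ E := by
      intro x v hv
      rw [hE, Module.End.mem_eigenspace_iff] at hv ⊢
      have hc : k (σ x v) = σ x (k v) := by
        have hcs := hcomm (σ x) ⟨x, rfl⟩
        calc k (σ x v) = (k * σ x) v := rfl
          _ = (σ x * k) v := by rw [hcs]
          _ = σ x (k v) := rfl
      show k (σ x v) = μ • σ x v
      rw [hc]
      have hkv : k v = μ • v := hv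
      rw [hkv, map_smul]
    rcases hσirr E hEsub with h | h
    · exact absurd h hμ
    · have hall : ∀ v : V, k v = μ • v := by
        intro v
        have hv : v ∈ E := h ▸ Submodule.mem_top
        rw [hE, Module.End.mem_eigenspace_iff] at hv
        exact hv
      refine ⟨μ, ?_, hall⟩
      have hdk : LinearEquiv.det k = 1 := hdetH k hk
      have hco : (k : V →ₗ[ℂ] V) = μ • LinearMap.id := by
        apply LinearMap.ext; intro v
        simpa using hall v
      have hval := congrArg Units.val hdk
      rw [LinearEquiv.coe_det, hco, LinearMap.det_smul, LinearMap.det_id, mul_one] at hval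
      simpa using hval
  -- H is finite
  have hHfin : (H : Set (V ≃ₗ[ℂ] V)).Finite := by
    haveI : Finite ↥S := hSfin.to_subtype
    set F : (V ≃ₗ[ℂ] V) → (↥S → V ≃ₗ[ℂ] V) := fun g s => g * (s : V ≃ₗ[ℂ] V) * g⁻¹ with hFdef
    set T : Set (↥S → V ≃ₗ[ℂ] V) := {φ | ∀ s : ↥S, φ s ∈ S} with hTdef
    have hT : T.Finite := by
      have : T = Set.pi Set.univ (fun _ : ↥S => S) := by
        ext φ; simp [hTdef, Set.mem_pi]
      rw [this]
      exact Set.Finite.pi fun _ => hSfin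
    have hfiber : ∀ φ : ↥S → V ≃ₗ[ℂ] V, {h | h ∈ H ∧ F h = φ}.Finite := by
      intro φ
      by_cases hA : {h | h ∈ H ∧ F h = φ}.Nonempty
      · obtain ⟨h₀, hh₀, hF₀⟩ := hA
        set R : Set ℂ := {lam : ℂ | lam ^ n = 1} with hRdef
        have hR : R.Finite :=
          Set.Finite.subset (Polynomial.nthRoots n (1 : ℂ)).toFinset.finite_toSet
            (fun lam hlam => Multiset.mem_toFinset.mpr
              ((Polynomial.mem_nthRoots hn0).mpr hlam))
        apply Set.Finite.subset (hR.image (fun lam => h₀ * scalE lam))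
        rintro h ⟨hh, hF⟩
        set k := h₀⁻¹ * h with hkdef
        have hkH : k ∈ H := H.mul_mem (H.inv_mem hh₀) hh
        have hkc : ∀ s ∈ S, k * s = s * k := by
          intro s hs
          have e1 : h * s * h⁻¹ = h₀ * s * h₀⁻¹ := by
            have e2 := congrFun hF (⟨s, hs⟩ : ↥S)
            have e3 := congrFun hF₀ (⟨s, hs⟩ : ↥S)
            rw [hFdef] at e2 e3
            exact e2.trans e3.symm
          have e2 : h * s = h₀ * s * h₀⁻¹ * h := by rw [← e1]; group
          calc k * s = h₀⁻¹ * (h * s) := by rw [hkdef]; group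
            _ = h₀⁻¹ * (h₀ * s * h₀⁻¹ * h) := by rw [e2]
            _ = s * k := by rw [hkdef]; group
        obtain ⟨lam, hlam, hkv⟩ := hscalar k hkH hkc
        have hlam0 : lam ≠ 0 := by
          intro h0
          rw [h0, zero_pow hn0.ne'] at hlam
          exact zero_ne_one hlam
        refine ⟨lam, hlam, ?_⟩
        have hhk : h₀ * k = h := by rw [hkdef]; group
        have hsk : scalE lam = k := by
          apply LinearEquiv.ext
          intro v
          rw [scalE_apply hlam0, hkv]
        show h₀ * scalE lam = h
        rw [hsk, hhk]
      · rw [Set.not_nonempty_iff_eq_empty] at hA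
        rw [hA]
        exact Set.finite_empty
    have hsub : (H : Set (V ≃ₗ[ℂ] V)) ⊆ ⋃ φ ∈ T, {h | h ∈ H ∧ F h = φ} := by
      intro h hh
      have hFT : F h ∈ T := by
        intro s
        exact hHN h hh (s : V ≃ₗ[ℂ] V) s.2
      exact Set.mem_biUnion hFT ⟨hh, rfl⟩
    exact Set.Finite.subset (Set.Finite.biUnion hT fun φ _ => hfiber φ) hsub
  -- average a base inner product over the finite group H
  haveI : Finite ↥H := hHfin.to_subtype
  letI : Fintype ↥H := Fintype.ofFinite _
  set c₀ := baseCore V with hc₀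
  set ip : V → V → ℂ :=
    fun v w => ∑ h : ↥H, c₀.inner ((h : V ≃ₗ[ℂ] V) v) ((h : V ≃ₗ[ℂ] V) w) with hip
  refine ⟨χ, hχ, σ, hσapp, hσrep, hσirr,
    { inner := ip
      conj_inner_symm := ?_
      re_inner_nonneg := ?_
      add_left := ?_
      smul_left := ?_
      definite := ?_ }, ?_⟩
  · intro v w
    show (starRingEnd ℂ) (ip w v) = ip v w
    rw [hip]
    simp only [map_sum]
    exact Finset.sum_congr rfl fun h _ => c₀.conj_inner_symm _ _
  · intro v
    show 0 ≤ RCLike.re (ip v v)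
    rw [hip]
    simp only [RCLike.re_to_complex, Complex.re_sum]
    exact Finset.sum_nonneg fun h _ => c₀.re_inner_nonneg _
  · intro u v w
    show ip (u + v) w = ip u w + ip v w
    rw [hip]
    simp only [← Finset.sum_add_distrib]
    exact Finset.sum_congr rfl fun h _ => by rw [map_add, c₀.add_left]
  · intro u w t
    show ip (t • u) w = (starRingEnd ℂ) t * ip u w
    rw [hip]
    simp only [Finset.mul_sum]
    exact Finset.sum_congr rfl fun h _ => by rw [map_smul, c₀.smul_left]
  · intro v hv
    have hv' : ip v v = 0 := hv
    have hre := congrArg Complex.re hv'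
    rw [hip] at hre
    simp only [Complex.re_sum, Complex.zero_re] at hre
    have hnn : ∀ h ∈ (Finset.univ : Finset ↥H),
        0 ≤ (c₀.inner ((h : V ≃ₗ[ℂ] V) v) ((h : V ≃ₗ[ℂ] V) v)).re := by
      intro h _
      exact c₀.re_inner_nonneg _
    have hz := (Finset.sum_eq_zero_iff_of_nonneg hnn).mp hre
    have h1 := hz ⟨1, H.one_mem⟩ (Finset.mem_univ _)
    have him : (c₀.inner v v).im = 0 := Complex.conj_eq_iff_im.mp (c₀.conj_inner_symm v v)
    have hzero : c₀.inner v v = 0 := Complex.ext (by simpa using h1) him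
    exact c₀.definite v hzero
  · intro x v w
    have hx : σ x ∈ H := hSH ⟨x, rfl⟩
    show ip (σ x v) (σ x w) = ip v w
    rw [hip]
    exact Fintype.sum_equiv (Equiv.mulRight (⟨σ x, hx⟩ : ↥H))
      (fun h => c₀.inner ((h : V ≃ₗ[ℂ] V) (σ x v)) ((h : V ≃ₗ[ℂ] V) (σ x w)))
      (fun h => c₀.inner ((h : V ≃ₗ[ℂ] V) v) ((h : V ≃ₗ[ℂ] V) w))
      (fun h => rfl)
end

section
/- Let Q be a finite quandle such that the canonical quandle morphism φ_Q : Q → G(Q) is injective. Then there exist a positive integer n and an injective map ρ : Q → GL_n(ℂ) such that ρ(x ▷ y) = ρ(x) ρ(y) ρ(x)⁻¹ for all x, y ∈ Q and ρ(x) is a unitary matrix for every x ∈ Q (i.e. Q admits a faithful finite-dimensional unitary quandle representation over ℂ). -/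
open Quandles

namespace QFUR

open Subgroup

variable {Q : Type} [Quandle Q]

/-- extensionality for shelf homs -/
theorem shelfHom_ext {S₁ S₂ : Type*} [Shelf S₁] [Shelf S₂] {f g : S₁ →◃ S₂}
    (h : ∀ x, f x = g x) : f = g := by
  cases f; cases g; congr; funext x; exact h x

noncomputable section

def φ (x : Q) : Rack.EnvelGroup Q := Rack.toEnvelGroup Q x

def π : Rack.EnvelGroup Q →* Equiv.Perm Q := Rack.envelAction

theorem π_φ_apply (x y : Q) : π (φ x) y = x ◃ y := Rack.envelAction_prop x y

theorem φ_act (x y : Q) : φ (x ◃ y) = φ x * φ y * (φ x)⁻¹ :=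
  (Rack.toEnvelGroup Q).map_act

theorem closure_range_φ : closure (Set.range (φ (Q := Q))) = ⊤ := by
  set H := closure (Set.range (φ (Q := Q))) with hH
  let f : Q →◃ Quandle.Conj H :=
    { toFun := fun x => ⟨φ x, subset_closure ⟨x, rfl⟩⟩
      map_act' := by
        intro x y
        apply Subtype.ext
        show φ (x ◃ y) = φ x * φ y * (φ x)⁻¹
        exact φ_act x y }
  set Ψ := Rack.toEnvelGroup.map f with hΨ
  have key : H.subtype.comp Ψ = MonoidHom.id (Rack.EnvelGroup Q) := by
    have h1 := Rack.toEnvelGroup.univ_uniq Q (Rack.EnvelGroup Q) (Rack.toEnvelGroup Q)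
      (H.subtype.comp Ψ) ?_
    · have h2 := Rack.toEnvelGroup.univ_uniq Q (Rack.EnvelGroup Q) (Rack.toEnvelGroup Q)
        (MonoidHom.id (Rack.EnvelGroup Q)) ?_
      · rw [h1, h2]
      · exact shelfHom_ext fun x => rfl
    · exact shelfHom_ext fun x => rfl
  rw [eq_top_iff]
  intro g _
  have := DFunLike.congr_fun key g
  simp only [MonoidHom.comp_apply, MonoidHom.id_apply] at this
  rw [← this]
  exact SetLike.coe_mem (Ψ g)

theorem conj_φ (g : Rack.EnvelGroup Q) (q : Q) : g * φ q * g⁻¹ = φ (π g q) := by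
  let S : Subgroup (Rack.EnvelGroup Q) :=
    { carrier := {g | ∀ q : Q, g * φ q * g⁻¹ = φ (π g q)}
      one_mem' := by intro q; simp
      mul_mem' := by
        intro a b ha hb q
        have : a * b * φ q * (a * b)⁻¹ = a * (b * φ q * b⁻¹) * a⁻¹ := by group
        rw [this, hb q, ha (π b q), map_mul]
        rfl
      inv_mem' := by
        intro a ha q
        have h := ha (π a⁻¹ q)
        have h2 : π a (π a⁻¹ q) = q := by
          rw [map_inv]; exact Equiv.apply_symm_apply _ _
        rw [h2] at h
        rw [← h]; group }
  have hS : S = ⊤ := by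
    rw [eq_top_iff, ← closure_range_φ, closure_le]
    rintro _ ⟨x, rfl⟩ q
    rw [← φ_act, π_φ_apply]
  exact (hS ▸ Subgroup.mem_top g : g ∈ S) q

theorem ker_le_center : (π (Q := Q)).ker ≤ Subgroup.center (Rack.EnvelGroup Q) := by
  intro g hg
  rw [Subgroup.mem_center_iff]
  intro h
  have hh : h ∈ closure (Set.range (φ (Q := Q))) := by rw [closure_range_φ]; trivial
  induction hh using Subgroup.closure_induction with
  | mem x hx =>
    obtain ⟨q, rfl⟩ := hx
    have := conj_φ g q
    rw [MonoidHom.mem_ker.mp hg] at this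
    rw [Equiv.Perm.coe_one, id_eq] at this
    calc φ q * g = g * φ q * g⁻¹ * g := by rw [this]
      _ = g * φ q := by group
  | one => simp
  | mul a b _ _ ha hb => rw [mul_assoc, hb, ← mul_assoc, ha, mul_assoc]
  | inv a _ ha =>
    calc a⁻¹ * g = a⁻¹ * g * (a * a⁻¹) := by group
      _ = a⁻¹ * (g * a) * a⁻¹ := by group
      _ = a⁻¹ * (a * g) * a⁻¹ := by rw [ha]
      _ = g * a⁻¹ := by group

/-! ### Orbits -/

def orbRel (a b : Q) : Prop := ∃ x : Q, x ◃ a = b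

def Orb (Q : Type) [Quandle Q] : Type := Quot (orbRel (Q := Q))

def cO (x : Q) : Orb Q := Quot.mk _ x

theorem cO_act (x y : Q) : cO (x ◃ y) = cO y := (Quot.sound ⟨x, rfl⟩).symm

instance [Finite Q] : Finite (Orb Q) := Quot.finite _

theorem abφ_eq_of_eqvGen {x y : Q} (h : Relation.EqvGen orbRel x y) :
    Abelianization.of (φ x) = Abelianization.of (φ y) := by
  induction h with
  | rel a b hab =>
    obtain ⟨g, rfl⟩ := hab
    rw [φ_act, map_mul, map_mul, map_inv, mul_inv_cancel_comm]
  | refl a => rfl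
  | symm a b _ ih => exact ih.symm
  | trans a b c _ _ ih1 ih2 => exact ih1.trans ih2

theorem abφ_eq_of_cO_eq {x y : Q} (h : cO x = cO y) :
    Abelianization.of (φ x) = Abelianization.of (φ y) :=
  abφ_eq_of_eqvGen (Quot.eqvGen_exact h)

open Classical in
noncomputable def ind (c₀ : Orb Q) : Orb Q → Multiplicative ℤ :=
  fun c => Multiplicative.ofAdd (if c = c₀ then 1 else 0)

noncomputable def dQ : Q →◃ Quandle.Conj (Orb Q → Multiplicative ℤ) where
  toFun x := ind (cO x)
  map_act' := by
    intro x y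
    show ind (cO (x ◃ y)) = ind (cO x) * ind (cO y) * (ind (cO x))⁻¹
    rw [cO_act, mul_inv_cancel_comm]

noncomputable def D : Rack.EnvelGroup Q →* (Orb Q → Multiplicative ℤ) :=
  Rack.toEnvelGroup.map dQ

theorem D_φ (x : Q) : D (φ x) = ind (cO x) := rfl

open Classical in
noncomputable def tA [Finite Q] : (Orb Q → Multiplicative ℤ) →* Abelianization (Rack.EnvelGroup Q) :=
  letI : Fintype (Orb Q) := Fintype.ofFinite _
  MonoidHom.mk'
    (fun f => ∏ c : Orb Q, Abelianization.of (φ (Quot.out c)) ^ (f c).toAdd)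
    (by
      intro a b
      rw [← Finset.prod_mul_distrib]
      refine Finset.prod_congr rfl fun c _ => ?_
      rw [Pi.mul_apply, toAdd_mul, zpow_add])

theorem tA_D [Finite Q] (g : Rack.EnvelGroup Q) : tA (D g) = Abelianization.of g := by
  have hg : g ∈ closure (Set.range (φ (Q := Q))) := by rw [closure_range_φ]; trivial
  induction hg using Subgroup.closure_induction with
  | mem x hx =>
    obtain ⟨q, rfl⟩ := hx
    classical
    letI : Fintype (Orb Q) := Fintype.ofFinite _
    show (∏ c : Orb Q, Abelianization.of (φ (Quot.out c)) ^ ((D (φ q)) c).toAdd) = _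
    rw [D_φ]
    have : ∀ c : Orb Q,
        Abelianization.of (φ (Quot.out c)) ^ (ind (cO q) c).toAdd
          = if c = cO q then Abelianization.of (φ (Quot.out c)) else 1 := by
      intro c
      simp only [ind, toAdd_ofAdd]
      split_ifs <;> simp
    rw [Finset.prod_congr rfl fun c _ => this c, Finset.prod_ite_eq' Finset.univ]
    simp only [Finset.mem_univ, if_true]
    exact abφ_eq_of_cO_eq (by rw [show cO (Quot.out (cO q)) = cO q from Quot.out_eq _])
  | one => simp
  | mul a b _ _ ha hb => rw [map_mul, map_mul, ha, hb, map_mul]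
  | inv a _ ha => rw [map_inv, map_inv, ha, map_inv]

theorem mem_commutator_of_D_eq_one [Finite Q] {g : Rack.EnvelGroup Q} (h : D g = 1) :
    g ∈ commutator (Rack.EnvelGroup Q) := by
  have h1 : Abelianization.of g = 1 := by rw [← tA_D g, h, map_one]
  exact (QuotientGroup.eq_one_iff g).mp h1

theorem mem_commutator_of_pow_eq_one [Finite Q] {g : Rack.EnvelGroup Q} {m : ℕ} (hm : m ≠ 0)
    (h : g ^ m = 1) : g ∈ commutator (Rack.EnvelGroup Q) := by
  apply mem_commutator_of_D_eq_one
  have hD : (D g) ^ m = 1 := by rw [← map_pow, h, map_one]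
  funext c
  have : (D g c) ^ m = 1 := by
    have := congrFun hD c
    simpa using this
  have h2 : (m : ℤ) * (D g c).toAdd = 0 := by
    have := congrArg Multiplicative.toAdd this
    rwa [toAdd_pow, toAdd_one, nsmul_eq_mul] at this
  have h3 : (D g c).toAdd = 0 := by
    rcases mul_eq_zero.mp h2 with h4 | h4
    · exact absurd (by exact_mod_cast h4) hm
    · exact h4
  show D g c = 1
  rw [← ofAdd_toAdd (D g c), h3, ofAdd_zero]

/-! ### Schur machinery -/

open scoped commutatorElement

theorem com_central {G' : Type*} [Group G'] {z w : G'} (hz : z ∈ Subgroup.center G')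
    (hw : w ∈ Subgroup.center G') (a b : G') : ⁅a * z, b * w⁆ = ⁅a, b⁆ := by
  have hzu : ∀ u : G', z * u * z⁻¹ = u := fun u => by
    rw [← Subgroup.mem_center_iff.mp hz u, mul_inv_cancel_right]
  have hwu : ∀ u : G', w * u * w⁻¹ = u := fun u => by
    rw [← Subgroup.mem_center_iff.mp hw u, mul_inv_cancel_right]
  calc ⁅a * z, b * w⁆
      = a * (z * (b * w) * z⁻¹) * a⁻¹ * (w⁻¹ * b⁻¹) := by group
    _ = a * (b * w) * a⁻¹ * (w⁻¹ * b⁻¹) := by rw [hzu]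
    _ = a * b * (w * a⁻¹ * w⁻¹) * b⁻¹ := by group
    _ = a * b * a⁻¹ * b⁻¹ := by rw [hwu]
    _ = ⁅a, b⁆ := (commutatorElement_def a b).symm

theorem finite_commutatorSet_aux {G' : Type*} [Group G'] [Finite (G' ⧸ Subgroup.center G')] :
    Finite (commutatorSet G') := by
  classical
  let f : (G' ⧸ Subgroup.center G') × (G' ⧸ Subgroup.center G') → G' :=
    fun p => ⁅p.1.out, p.2.out⁆
  have hsub : commutatorSet G' ⊆ Set.range f := by
    rintro _ ⟨a, b, rfl⟩
    refine ⟨(QuotientGroup.mk a, QuotientGroup.mk b), ?_⟩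
    obtain ⟨z, hz⟩ := QuotientGroup.mk_out_eq_mul (Subgroup.center G') a
    obtain ⟨w, hw⟩ := QuotientGroup.mk_out_eq_mul (Subgroup.center G') b
    show ⁅(QuotientGroup.mk a : G' ⧸ Subgroup.center G').out,
        (QuotientGroup.mk b : G' ⧸ Subgroup.center G').out⁆ = ⁅a, b⁆
    rw [hz, hw, com_central z.2 w.2]
  exact ((Set.finite_range f).subset hsub).to_subtype

section FiniteQ

variable (Q) [Finite Q]

theorem finite_quotient_ker : Finite (Rack.EnvelGroup Q ⧸ (π (Q := Q)).ker) :=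
  Finite.of_injective _ (QuotientGroup.kerLift_injective (π (Q := Q)))

theorem ker_finiteIndex : (π (Q := Q)).ker.FiniteIndex := by
  haveI := finite_quotient_ker Q
  exact Subgroup.finiteIndex_of_finite_quotient

theorem fgG : Group.FG (Rack.EnvelGroup Q) :=
  Group.fg_iff.mpr ⟨Set.range φ, closure_range_φ, Set.finite_range _⟩

theorem center_finiteIndex : (Subgroup.center (Rack.EnvelGroup Q)).FiniteIndex := by
  haveI := ker_finiteIndex Q
  refine ⟨fun h0 => ?_⟩
  have hdvd := Subgroup.index_dvd_of_le (ker_le_center (Q := Q))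
  rw [h0] at hdvd
  exact Subgroup.FiniteIndex.index_ne_zero (zero_dvd_iff.mp hdvd)

theorem finite_commutator : Finite (commutator (Rack.EnvelGroup Q)) := by
  haveI := center_finiteIndex Q
  haveI : Finite (Rack.EnvelGroup Q ⧸ Subgroup.center (Rack.EnvelGroup Q)) :=
    Subgroup.finite_quotient_of_finiteIndex
  haveI := finite_commutatorSet_aux (G' := Rack.EnvelGroup Q)
  infer_instance

noncomputable def eC : ℕ := Nat.card (commutator (Rack.EnvelGroup Q))

theorem eC_ne_zero : eC Q ≠ 0 := by
  haveI := finite_commutator Q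
  exact Nat.card_pos.ne'

theorem pow_eC_eq_one {g : Rack.EnvelGroup Q} (hg : g ∈ commutator (Rack.EnvelGroup Q)) :
    g ^ eC Q = 1 := by
  haveI := finite_commutator Q
  have h : (⟨g, hg⟩ : commutator (Rack.EnvelGroup Q)) ^ eC Q = 1 := pow_card_eq_one'
  have := congrArg Subtype.val h
  simpa using this

noncomputable def NN : Subgroup (Rack.EnvelGroup Q) where
  carrier := {g | ∃ k ∈ (π (Q := Q)).ker, k ^ eC Q = g}
  one_mem' := ⟨1, one_mem _, one_pow _⟩
  mul_mem' := by
    rintro a b ⟨k, hk, rfl⟩ ⟨l, hl, rfl⟩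
    refine ⟨k * l, mul_mem hk hl, ?_⟩
    have hcomm : Commute k l :=
      (Subgroup.mem_center_iff.mp (ker_le_center hk) l).symm
    rw [hcomm.mul_pow]
  inv_mem' := by
    rintro a ⟨k, hk, rfl⟩
    exact ⟨k⁻¹, inv_mem hk, by rw [inv_pow]⟩

theorem NN_le_ker : NN Q ≤ (π (Q := Q)).ker := by
  rintro _ ⟨k, hk, rfl⟩
  exact pow_mem hk _

instance NN_normal : (NN Q).Normal := by
  constructor
  rintro _ ⟨k, hk, rfl⟩ g
  have hc : k ^ eC Q ∈ Subgroup.center (Rack.EnvelGroup Q) := pow_mem (ker_le_center hk) _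
  show g * k ^ eC Q * g⁻¹ ∈ NN Q
  have heq : g * k ^ eC Q * g⁻¹ = k ^ eC Q := by
    rw [Subgroup.mem_center_iff.mp hc g, mul_inv_cancel_right]
  rw [heq]
  exact ⟨k, hk, rfl⟩

theorem not_mem_NN {z : Rack.EnvelGroup Q} (hz1 : z ≠ 1) (hzD : D z = 1) : z ∉ NN Q := by
  rintro ⟨k, hk, rfl⟩
  have hzc : k ^ eC Q ∈ commutator (Rack.EnvelGroup Q) := mem_commutator_of_D_eq_one hzD
  have h1 : (k ^ eC Q) ^ eC Q = 1 := pow_eC_eq_one Q hzc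
  rw [← pow_mul] at h1
  have hkc : k ∈ commutator (Rack.EnvelGroup Q) :=
    mem_commutator_of_pow_eq_one (Nat.mul_ne_zero (eC_ne_zero Q) (eC_ne_zero Q)) h1
  exact hz1 (pow_eC_eq_one Q hkc)

open scoped IsMulCommutative in
theorem NN_finiteIndex : (NN Q).FiniteIndex := by
  haveI := ker_finiteIndex Q
  haveI := fgG Q
  haveI : Group.FG (π (Q := Q)).ker := Subgroup.fg_of_index_ne_zero _
  haveI : IsMulCommutative ((π (Q := Q)).ker) := by
    constructor
    constructor
    intro a b
    exact Subtype.ext (Subgroup.mem_center_iff.mp (ker_le_center b.2) a.1)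
  haveI hfin : Finite ((π (Q := Q)).ker ⧸ (NN Q).subgroupOf (π (Q := Q)).ker) := by
    apply CommGroup.finite_of_fg_torsion
    intro x
    refine isOfFinOrder_iff_pow_eq_one.mpr ⟨eC Q, Nat.pos_of_ne_zero (eC_ne_zero Q), ?_⟩
    induction x using QuotientGroup.induction_on with
    | _ k =>
      have hmem : (k ^ eC Q : ↥(π (Q := Q)).ker) ∈ (NN Q).subgroupOf (π (Q := Q)).ker := by
        rw [Subgroup.mem_subgroupOf]
        refine ⟨(k : Rack.EnvelGroup Q), k.2, ?_⟩
        push_cast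
        rfl
      calc (QuotientGroup.mk k : _) ^ eC Q = QuotientGroup.mk (k ^ eC Q) :=
            (QuotientGroup.mk_pow _ k (eC Q)).symm
        _ = 1 := (QuotientGroup.eq_one_iff _).mpr hmem
  have h1 : (NN Q).relIndex (π (Q := Q)).ker ≠ 0 := Subgroup.index_ne_zero_of_finite
  have h2 := Subgroup.relIndex_mul_index (NN_le_ker Q)
  exact ⟨by rw [← h2]; exact Nat.mul_ne_zero h1 Subgroup.FiniteIndex.index_ne_zero⟩

end FiniteQ

/-! ### Unitary representations of finite groups -/

theorem exists_unitary_rep (F : Type) [Group F] [Finite F] :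
    ∃ n : ℕ, 0 < n ∧ ∃ u : F →* Matrix.GeneralLinearGroup (Fin n) ℂ,
      Function.Injective u ∧
      ∀ g : F, ((u g : (Matrix (Fin n) (Fin n) ℂ)ˣ) : Matrix (Fin n) (Fin n) ℂ)
        ∈ Matrix.unitaryGroup (Fin n) ℂ := by
  classical
  letI : Fintype F := Fintype.ofFinite F
  refine ⟨Fintype.card F, Fintype.card_pos, ?_⟩
  set n := Fintype.card F with hn
  let M : Equiv.Perm (Fin n) →* Matrix (Fin n) (Fin n) ℂ :=
    { toFun := fun σ => (σ⁻¹).toPEquiv.toMatrix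
      map_one' := by
        show ((1 : Equiv.Perm (Fin n))⁻¹).toPEquiv.toMatrix = 1
        rw [inv_one]
        show (Equiv.refl (Fin n)).toPEquiv.toMatrix = 1
        rw [Equiv.toPEquiv_refl, PEquiv.toMatrix_refl]
      map_mul' := fun σ τ => by
        show ((σ * τ)⁻¹).toPEquiv.toMatrix = _
        rw [mul_inv_rev]
        show ((σ⁻¹).trans (τ⁻¹)).toPEquiv.toMatrix = _
        rw [Equiv.toPEquiv_trans, PEquiv.toMatrix_trans] }
  have hM : ∀ σ : Equiv.Perm (Fin n), M σ = (σ⁻¹).toPEquiv.toMatrix := fun _ => rfl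
  have hMinj : Function.Injective M := by
    intro σ τ h
    rw [hM, hM] at h
    have h2 : (σ⁻¹).toPEquiv = (τ⁻¹).toPEquiv := PEquiv.toMatrix_injective h
    have h3 : σ⁻¹ = τ⁻¹ := Equiv.ext fun x => by
      simpa [Equiv.toPEquiv_apply] using congrArg (fun (p : Fin n ≃. Fin n) => p x) h2
    exact inv_injective h3
  have hMstar : ∀ σ : Equiv.Perm (Fin n), star (M σ) = M σ⁻¹ := by
    intro σ
    rw [hM, hM, inv_inv]
    ext i j
    rw [Matrix.star_apply]
    rw [PEquiv.toMatrix_apply, PEquiv.toMatrix_apply]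
    simp only [Equiv.toPEquiv_apply, Option.mem_def, Option.some.injEq]
    have : (σ⁻¹ j = i) ↔ (σ i = j) := by
      constructor
      · rintro rfl; exact Equiv.apply_symm_apply σ j
      · rintro rfl; exact Equiv.symm_apply_apply σ i
    by_cases hij : σ i = j
    · rw [if_pos (this.mpr hij), if_pos hij, star_one]
    · rw [if_neg (fun h => hij (this.mp h)), if_neg hij, star_zero]
  have hMU : ∀ σ : Equiv.Perm (Fin n), M σ ∈ Matrix.unitaryGroup (Fin n) ℂ := by
    intro σ
    rw [Matrix.mem_unitaryGroup_iff, hMstar, ← map_mul, mul_inv_cancel, map_one]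
  let ι : F ↪ Fin n := (Fintype.equivFin F).toEmbedding
  let u0 : F →* Matrix (Fin n) (Fin n) ℂ :=
    M.comp ((Equiv.Perm.viaEmbeddingHom ι).comp (MulAction.toPermHom F F))
  have hP : Function.Injective (MulAction.toPermHom F F) := by
    intro a b h
    have := congrArg (fun e : Equiv.Perm F => e 1) h
    simpa using this
  have hu0 : Function.Injective u0 :=
    hMinj.comp ((Equiv.Perm.viaEmbeddingHom_injective ι).comp hP)
  refine ⟨u0.toHomUnits, ?_, ?_⟩
  · intro a b hab
    apply hu0
    have := congrArg Units.val hab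
    simpa [MonoidHom.coe_toHomUnits] using this
  · intro g
    show ((u0.toHomUnits g : (Matrix (Fin n) (Fin n) ℂ)ˣ) : Matrix (Fin n) (Fin n) ℂ) ∈ _
    rw [MonoidHom.coe_toHomUnits]
    exact hMU _

noncomputable def red : (Orb Q → Multiplicative ℤ) →* (Orb Q → Multiplicative (ZMod 2)) :=
  MonoidHom.mk' (fun f c => Multiplicative.ofAdd ((f c).toAdd : ZMod 2)) (by
    intro a b
    funext c
    show Multiplicative.ofAdd (((a * b) c).toAdd : ZMod 2) = _
    rw [Pi.mul_apply, toAdd_mul]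
    push_cast
    rw [ofAdd_add]
    rfl)

end

end QFUR


open QFUR

/-- A finite quandle `Q` whose canonical map `φ_Q : Q → G(Q)` to the enveloping group is
injective admits a faithful finite-dimensional unitary quandle representation over `ℂ`:
an injective map `ρ : Q → GL_n(ℂ)` with `ρ(x ◃ y) = ρ(x) ρ(y) ρ(x)⁻¹` whose values are
unitary matrices. -/
theorem quandle_faithful_unitary_rep (Q : Type) [Quandle Q] [Finite Q]
    (hφ : Function.Injective fun x : Q => (Rack.toEnvelGroup Q x : Rack.EnvelGroup Q)) :
    ∃ n : ℕ, 0 < n ∧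
      ∃ ρ : Q → Matrix.GeneralLinearGroup (Fin n) ℂ,
        Function.Injective ρ ∧
        (∀ x y : Q, ρ (x ◃ y) = ρ x * ρ y * (ρ x)⁻¹) ∧
        ∀ x : Q, (ρ x : Matrix (Fin n) (Fin n) ℂ) ∈ Matrix.unitaryGroup (Fin n) ℂ := by
  classical
  haveI := QFUR.NN_finiteIndex Q
  haveI : Finite (Rack.EnvelGroup Q ⧸ QFUR.NN Q) := Subgroup.finite_quotient_of_finiteIndex
  let F₀ := (Rack.EnvelGroup Q ⧸ QFUR.NN Q) × (Orb Q → Multiplicative (ZMod 2))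
  let Ψ : Rack.EnvelGroup Q →* F₀ :=
    (QuotientGroup.mk' (QFUR.NN Q)).prod ((red (Q := Q)).comp D)
  obtain ⟨n, hn, u, huinj, huU⟩ := exists_unitary_rep F₀
  refine ⟨n, hn, fun x => u (Ψ (φ x)), ?_, ?_, fun x => huU _⟩
  · -- injectivity
    intro x y h
    have hΨ : Ψ (φ x) = Ψ (φ y) := huinj h
    have h2 : QuotientGroup.mk' (QFUR.NN Q) (φ x) = QuotientGroup.mk' (QFUR.NN Q) (φ y) :=
      congrArg Prod.fst hΨ
    have h3 : (red (Q := Q)).comp D (φ x) = (red (Q := Q)).comp D (φ y) :=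
      congrArg Prod.snd hΨ
    -- orbit equality
    have hc : cO x = cO y := by
      by_contra hc
      have := congrFun h3 (cO x)
      simp only [MonoidHom.comp_apply, D_φ] at this
      have h4 : ((Multiplicative.toAdd (ind (cO x) (cO x)) : ℤ) : ZMod 2)
          = ((Multiplicative.toAdd (ind (cO y) (cO x)) : ℤ) : ZMod 2) :=
        congrArg Multiplicative.toAdd this
      rw [show ind (cO x) (cO x) = Multiplicative.ofAdd 1 from by
            simp [QFUR.ind],
          show ind (cO y) (cO x) = Multiplicative.ofAdd 0 from by
            simp [QFUR.ind, hc]] at h4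
      simp at h4
    by_contra hxy
    have hφne : φ x ≠ φ y := fun h0 => hxy (hφ h0)
    set z := (φ x)⁻¹ * φ y with hz
    have hz1 : z ≠ 1 := by
      intro h0
      exact hφne (by rwa [hz, inv_mul_eq_one] at h0)
    have hzD : D z = 1 := by
      rw [hz, map_mul, map_inv, D_φ, D_φ, hc, inv_mul_cancel]
    have hzN : z ∈ QFUR.NN Q := by
      have := (QuotientGroup.mk'_eq_mk' (N := QFUR.NN Q)).mp h2
      obtain ⟨w, hw, hxw⟩ := this
      have : z = w := by rw [hz, ← hxw]; group
      rwa [this]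
    exact not_mem_NN Q hz1 hzD hzN
  · -- equivariance
    intro x y
    show u (Ψ (φ (x ◃ y))) = u (Ψ (φ x)) * u (Ψ (φ y)) * (u (Ψ (φ x)))⁻¹
    rw [QFUR.φ_act x y, map_mul, map_mul, map_inv, map_mul, map_mul, map_inv]
end
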